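/- arXiv:2202.10954 — 6 statements merged into one kernel-verified Lean document; each statement's English description precedes it below -/
import Mathlib

section
/- Let 0 ≤ γ < 1 and α, β > 0 with α + β = 1 − γ, and let K : ℝ² ∖ {(x,y) : y = ±x} → ℝ be given by K(x,y) = |x−y|^{−α} |x+y|^{−β}. Then for every N ∈ ℕ there exists a positive constant C, independent of x and y, such that for all (x,y) with y ≠ ±x: |∂^N K/∂x^N (x,y)| + |∂^N K/∂y^N (x,y)| ≤ C |x−y|^{−α} |x+y|^{−β} (|x−y|^{−1} + |x+y|^{−1})^N. -/
open scoped ENNReal NNReal BigOperators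

open Finset

private lemma sign_abs_one {u : ℝ} (hu : u ≠ 0) : |Real.sign u| = 1 := by
  rcases lt_or_gt_of_ne hu with h | h
  · rw [Real.sign_of_neg h]; norm_num
  · rw [Real.sign_of_pos h]; norm_num

private lemma ev_sign {c t : ℝ} (ht : t + c ≠ 0) :
    ∀ᶠ u in nhds t, Real.sign (u + c) = Real.sign (t + c) := by
  rcases lt_or_gt_of_ne ht with h | h
  · have hopen : IsOpen {u : ℝ | u + c < 0} :=
      isOpen_lt (continuous_add_right c) continuous_const
    filter_upwards [hopen.mem_nhds h] with u hu
    rw [Real.sign_of_neg hu, Real.sign_of_neg h]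
  · have hopen : IsOpen {u : ℝ | 0 < u + c} :=
      isOpen_lt continuous_const (continuous_add_right c)
    filter_upwards [hopen.mem_nhds h] with u hu
    rw [Real.sign_of_pos hu, Real.sign_of_pos h]

private lemma my_hasDerivAt_abs_rpow {c : ℝ} (r : ℝ) {t : ℝ} (ht : t + c ≠ 0) :
    HasDerivAt (fun t : ℝ => |t + c| ^ r) (r * Real.sign (t + c) * |t + c| ^ (r - 1)) t := by
  rcases lt_or_gt_of_ne ht with h | h
  · have hinner : HasDerivAt (fun t : ℝ => -(t + c)) (-1) t := by
      have := ((hasDerivAt_id t).add_const c).neg; exact this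
    have h1 : HasDerivAt (fun t : ℝ => (-(t + c)) ^ r) (r * (-(t + c)) ^ (r - 1) * (-1)) t := by
      have := (Real.hasDerivAt_rpow_const (p := r) (Or.inl (by linarith : -(t + c) ≠ 0))).comp t hinner; exact this
    have hopen : IsOpen {u : ℝ | u + c < 0} :=
      isOpen_lt (continuous_add_right c) continuous_const
    have heq : (fun t : ℝ => (-(t + c)) ^ r) =ᶠ[nhds t] (fun t : ℝ => |t + c| ^ r) := by
      filter_upwards [hopen.mem_nhds h] with u hu
      rw [abs_of_neg hu]
    have : HasDerivAt (fun t : ℝ => |t + c| ^ r) (r * (-(t + c)) ^ (r - 1) * (-1)) t :=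
      h1.congr_of_eventuallyEq heq.symm
    convert this using 1
    rw [Real.sign_of_neg h, abs_of_neg h]
    ring
  · have hinner : HasDerivAt (fun t : ℝ => t + c) 1 t := (hasDerivAt_id t).add_const c
    have h1 : HasDerivAt (fun t : ℝ => (t + c) ^ r) (r * (t + c) ^ (r - 1) * 1) t := by
      have := (Real.hasDerivAt_rpow_const (p := r) (Or.inl (by linarith : t + c ≠ 0))).comp t hinner; exact this
    have hopen : IsOpen {u : ℝ | 0 < u + c} :=
      isOpen_lt continuous_const (continuous_add_right c)
    have heq : (fun t : ℝ => (t + c) ^ r) =ᶠ[nhds t] (fun t : ℝ => |t + c| ^ r) := by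
      filter_upwards [hopen.mem_nhds h] with u hu
      rw [abs_of_pos hu]
    have : HasDerivAt (fun t : ℝ => |t + c| ^ r) (r * (t + c) ^ (r - 1) * 1) t :=
      h1.congr_of_eventuallyEq heq.symm
    convert this using 1
    rw [Real.sign_of_pos h, abs_of_pos h]
    ring

private lemma iter_formula (r c : ℝ) : ∀ n : ℕ, ∀ t : ℝ, t + c ≠ 0 →
    iteratedDeriv n (fun t : ℝ => |t + c| ^ r) t =
      (∏ i ∈ Finset.range n, (r - i)) * (Real.sign (t + c)) ^ n * |t + c| ^ (r - n) := by
  intro n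
  induction n with
  | zero => intro t ht; simp
  | succ n ih =>
    intro t ht
    rw [iteratedDeriv_succ]
    have hopen : IsOpen {u : ℝ | u + c ≠ 0} :=
      isOpen_ne.preimage (continuous_add_right c)
    have hEq : iteratedDeriv n (fun t : ℝ => |t + c| ^ r) =ᶠ[nhds t]
        (fun u : ℝ => (∏ i ∈ Finset.range n, (r - i)) * (Real.sign (u + c)) ^ n
          * |u + c| ^ (r - n)) := by
      filter_upwards [hopen.mem_nhds ht] with u hu
      exact ih u hu
    rw [hEq.deriv_eq]
    set K := ∏ i ∈ Finset.range n, (r - (i : ℝ)) with hK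
    set s := Real.sign (t + c) with hs
    have hEq2 : (fun u : ℝ => K * (Real.sign (u + c)) ^ n * |u + c| ^ (r - n)) =ᶠ[nhds t]
        (fun u : ℝ => (K * s ^ n) * |u + c| ^ (r - n)) := by
      filter_upwards [ev_sign ht] with u hu
      rw [hu]
    rw [hEq2.deriv_eq]
    have hd := (my_hasDerivAt_abs_rpow (r - n) ht).const_mul (K * s ^ n)
    rw [hd.deriv]
    rw [Finset.prod_range_succ, ← hK]
    push_cast
    have hexp : r - (n : ℝ) - 1 = r - ((n : ℝ) + 1) := by ring
    rw [hexp]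
    ring

private lemma iter_bound (a c : ℝ) (n : ℕ) {t : ℝ} (ht : t + c ≠ 0) :
    |iteratedDeriv n (fun t : ℝ => |t + c| ^ (-a)) t| ≤
      (∏ i ∈ Finset.range n, |a + i|) * (|t + c| ^ (-a) * (|t + c|⁻¹) ^ n) := by
  have hpos : (0 : ℝ) < |t + c| := abs_pos.2 ht
  rw [iter_formula (-a) c n t ht, abs_mul, abs_mul, abs_pow, sign_abs_one ht, one_pow, mul_one,
    abs_of_nonneg (Real.rpow_nonneg (abs_nonneg _) _)]
  have h1 : |∏ i ∈ Finset.range n, (-a - (i : ℝ))| = ∏ i ∈ Finset.range n, |a + (i : ℝ)| := by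
    rw [Finset.abs_prod]
    refine Finset.prod_congr rfl fun i _ => ?_
    rw [show -a - (i : ℝ) = -(a + i) by ring, abs_neg]
  have h3 : (|t + c|⁻¹) ^ n = |t + c| ^ (-(n : ℝ)) := by
    rw [Real.rpow_neg hpos.le, Real.rpow_natCast, inv_pow]
  have h2 : |t + c| ^ (-a - (n : ℝ)) = |t + c| ^ (-a) * (|t + c|⁻¹) ^ n := by
    rw [h3, ← Real.rpow_add hpos, sub_eq_add_neg]
  rw [h1, h2]

private lemma cd_abs_rpow (r c : ℝ) {t : ℝ} (ht : t + c ≠ 0) {n : WithTop ℕ∞} :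
    ContDiffAt ℝ n (fun t : ℝ => |t + c| ^ r) t := by
  rcases lt_or_gt_of_ne ht with h | h
  · have h1 : ContDiffAt ℝ n (fun u : ℝ => (-(u + c)) ^ r) t := by
      have hinner : ContDiffAt ℝ n (fun u : ℝ => -(u + c)) t :=
        ((contDiffAt_id.add contDiffAt_const).neg)
      exact (Real.contDiffAt_rpow_const_of_ne (by linarith : -(t + c) ≠ 0)).comp t hinner
    refine h1.congr_of_eventuallyEq ?_
    have hopen : IsOpen {u : ℝ | u + c < 0} :=
      isOpen_lt (continuous_add_right c) continuous_const
    filter_upwards [hopen.mem_nhds h] with u hu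
    rw [abs_of_neg hu]
  · have h1 : ContDiffAt ℝ n (fun u : ℝ => (u + c) ^ r) t := by
      have hinner : ContDiffAt ℝ n (fun u : ℝ => u + c) t :=
        (contDiffAt_id.add contDiffAt_const)
      exact (Real.contDiffAt_rpow_const_of_ne (by linarith : t + c ≠ 0)).comp t hinner
    refine h1.congr_of_eventuallyEq ?_
    have hopen : IsOpen {u : ℝ | 0 < u + c} :=
      isOpen_lt continuous_const (continuous_add_right c)
    filter_upwards [hopen.mem_nhds h] with u hu
    rw [abs_of_pos hu]

private lemma key_bound (a b : ℝ) (N : ℕ) :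
    ∃ C : ℝ, 0 < C ∧ ∀ c d t : ℝ, t + c ≠ 0 → t + d ≠ 0 →
      |iteratedDeriv N (fun t : ℝ => |t + c| ^ (-a) * |t + d| ^ (-b)) t| ≤
        C * (|t + c| ^ (-a) * |t + d| ^ (-b) * (|t + c|⁻¹ + |t + d|⁻¹) ^ N) := by
  set A : ℕ → ℝ := fun i => ∏ j ∈ Finset.range i, |a + j| with hA
  set B : ℕ → ℝ := fun i => ∏ j ∈ Finset.range i, |b + j| with hB
  have hAnn : ∀ i, 0 ≤ A i := fun i => Finset.prod_nonneg fun j _ => abs_nonneg _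
  have hBnn : ∀ i, 0 ≤ B i := fun i => Finset.prod_nonneg fun j _ => abs_nonneg _
  refine ⟨(∑ i ∈ Finset.range (N + 1), (N.choose i : ℝ) * A i * B (N - i)) + 1, ?_, ?_⟩
  · have : (0:ℝ) ≤ ∑ i ∈ Finset.range (N + 1), (N.choose i : ℝ) * A i * B (N - i) :=
      Finset.sum_nonneg fun i _ => by positivity
    linarith
  intro c d t htc htd
  set sset : Set ℝ := {u | u + c ≠ 0 ∧ u + d ≠ 0} with hsset
  have hopen : IsOpen sset := by
    have h1 : IsOpen {u : ℝ | u + c ≠ 0} := isOpen_ne.preimage (continuous_add_right c)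
    have h2 : IsOpen {u : ℝ | u + d ≠ 0} := isOpen_ne.preimage (continuous_add_right d)
    exact h1.inter h2
  have hts : t ∈ sset := ⟨htc, htd⟩
  set f1 : ℝ → ℝ := fun u => |u + c| ^ (-a) with hf1
  set f2 : ℝ → ℝ := fun u => |u + d| ^ (-b) with hf2
  have hcf1 : ContDiffOn ℝ (N : WithTop ℕ∞) f1 sset := fun u hu =>
    (cd_abs_rpow (-a) c hu.1).contDiffWithinAt
  have hcf2 : ContDiffOn ℝ (N : WithTop ℕ∞) f2 sset := fun u hu =>
    (cd_abs_rpow (-b) d hu.2).contDiffWithinAt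
  set E1 : ℝ := |t + c| ^ (-a) with hE1
  set E2 : ℝ := |t + d| ^ (-b) with hE2
  set p : ℝ := |t + c|⁻¹ with hp
  set q : ℝ := |t + d|⁻¹ with hq
  have hE1nn : 0 ≤ E1 := Real.rpow_nonneg (abs_nonneg _) _
  have hE2nn : 0 ≤ E2 := Real.rpow_nonneg (abs_nonneg _) _
  have hpnn : 0 ≤ p := inv_nonneg.2 (abs_nonneg _)
  have hqnn : 0 ≤ q := inv_nonneg.2 (abs_nonneg _)
  have step1 : |iteratedDeriv N (fun t : ℝ => f1 t * f2 t) t| ≤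
      ∑ i ∈ Finset.range (N + 1), (N.choose i : ℝ) *
        ‖iteratedFDerivWithin ℝ i f1 sset t‖ * ‖iteratedFDerivWithin ℝ (N - i) f2 sset t‖ := by
    rw [← Real.norm_eq_abs, ← norm_iteratedFDeriv_eq_norm_iteratedDeriv,
      ← iteratedFDerivWithin_of_isOpen N hopen hts]
    exact norm_iteratedFDerivWithin_mul_le hcf1 hcf2 hopen.uniqueDiffOn hts le_rfl
  have hnormi : ∀ i : ℕ, ‖iteratedFDerivWithin ℝ i f1 sset t‖ ≤ A i * (E1 * p ^ i) := by
    intro i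
    rw [iteratedFDerivWithin_of_isOpen i hopen hts, norm_iteratedFDeriv_eq_norm_iteratedDeriv,
      Real.norm_eq_abs]
    exact iter_bound a c i htc
  have hnormi2 : ∀ i : ℕ, ‖iteratedFDerivWithin ℝ i f2 sset t‖ ≤ B i * (E2 * q ^ i) := by
    intro i
    rw [iteratedFDerivWithin_of_isOpen i hopen hts, norm_iteratedFDeriv_eq_norm_iteratedDeriv,
      Real.norm_eq_abs]
    exact iter_bound b d i htd
  have step2 : ∀ i ∈ Finset.range (N + 1),
      (N.choose i : ℝ) * ‖iteratedFDerivWithin ℝ i f1 sset t‖ *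
        ‖iteratedFDerivWithin ℝ (N - i) f2 sset t‖ ≤
      ((N.choose i : ℝ) * A i * B (N - i)) * (E1 * E2 * (p + q) ^ N) := by
    intro i hi
    have hiN : i ≤ N := Nat.lt_succ_iff.mp (Finset.mem_range.mp hi)
    have hpq : p ^ i * q ^ (N - i) ≤ (p + q) ^ N := by
      calc p ^ i * q ^ (N - i) ≤ (p + q) ^ i * (p + q) ^ (N - i) := by
            apply mul_le_mul (pow_le_pow_left₀ hpnn (by linarith) i)
              (pow_le_pow_left₀ hqnn (by linarith) (N - i)) (by positivity) (by positivity)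
        _ = (p + q) ^ N := by rw [← pow_add, Nat.add_sub_cancel' hiN]
    calc (N.choose i : ℝ) * ‖iteratedFDerivWithin ℝ i f1 sset t‖ *
          ‖iteratedFDerivWithin ℝ (N - i) f2 sset t‖
        ≤ (N.choose i : ℝ) * (A i * (E1 * p ^ i)) * (B (N - i) * (E2 * q ^ (N - i))) := by
          apply mul_le_mul (mul_le_mul le_rfl (hnormi i) (norm_nonneg _) (by positivity))
            (hnormi2 (N - i)) (norm_nonneg _)
          have := hAnn i; have := hBnn (N - i); positivity
      _ = ((N.choose i : ℝ) * A i * B (N - i)) * (E1 * E2) * (p ^ i * q ^ (N - i)) := by ring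
      _ ≤ ((N.choose i : ℝ) * A i * B (N - i)) * (E1 * E2) * (p + q) ^ N := by
          apply mul_le_mul_of_nonneg_left hpq
          have := hAnn i; have := hBnn (N - i); positivity
      _ = ((N.choose i : ℝ) * A i * B (N - i)) * (E1 * E2 * (p + q) ^ N) := by ring
  have step3 : |iteratedDeriv N (fun t : ℝ => f1 t * f2 t) t| ≤
      (∑ i ∈ Finset.range (N + 1), (N.choose i : ℝ) * A i * B (N - i)) *
        (E1 * E2 * (p + q) ^ N) := by
    refine le_trans step1 (le_trans (Finset.sum_le_sum step2) (le_of_eq ?_))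
    rw [← Finset.sum_mul]
  have hfg : (fun t : ℝ => |t + c| ^ (-a) * |t + d| ^ (-b)) = fun t : ℝ => f1 t * f2 t := rfl
  rw [hfg]
  refine le_trans step3 ?_
  apply mul_le_mul_of_nonneg_right (by linarith) (by positivity)

/-- **Derivative estimates for the kernel `K(x,y) = |x-y|^{-α} |x+y|^{-β}`.**
For `0 ≤ γ < 1`, `α, β > 0` with `α + β = 1 - γ` and every `N ∈ ℕ`, there is a constant
`C > 0`, independent of `x` and `y`, such that for all `(x,y)` with `y ≠ ±x`:
`|∂_x^N K(x,y)| + |∂_y^N K(x,y)| ≤ C |x-y|^{-α} |x+y|^{-β} (|x-y|⁻¹ + |x+y|⁻¹)^N`. -/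
theorem stmt5 (γ α β : ℝ) (hγ0 : 0 ≤ γ) (hγ1 : γ < 1) (hα : 0 < α) (hβ : 0 < β)
    (hαβ : α + β = 1 - γ) (N : ℕ) :
    ∃ C : ℝ, 0 < C ∧ ∀ x y : ℝ, y ≠ x → y ≠ -x →
      |iteratedDeriv N (fun t : ℝ => |t - y| ^ (-α) * |t + y| ^ (-β)) x| +
          |iteratedDeriv N (fun t : ℝ => |x - t| ^ (-α) * |x + t| ^ (-β)) y| ≤
        C * (|x - y| ^ (-α) * |x + y| ^ (-β) * (|x - y|⁻¹ + |x + y|⁻¹) ^ N) := by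
  obtain ⟨C, hC, hCb⟩ := key_bound α β N
  refine ⟨2 * C, by linarith, ?_⟩
  intro x y hyx hyx'
  have hxy1 : x + -y ≠ 0 := fun h => hyx (by linarith)
  have hxy2 : x + y ≠ 0 := fun h => hyx' (by linarith)
  have hyx1 : y + -x ≠ 0 := fun h => hyx (by linarith)
  have hyx2 : y + x ≠ 0 := fun h => hyx' (by linarith)
  have h1 : |iteratedDeriv N (fun t : ℝ => |t - y| ^ (-α) * |t + y| ^ (-β)) x| ≤
      C * (|x - y| ^ (-α) * |x + y| ^ (-β) * (|x - y|⁻¹ + |x + y|⁻¹) ^ N) := by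
    have hfun : (fun t : ℝ => |t - y| ^ (-α) * |t + y| ^ (-β)) =
        fun t : ℝ => |t + -y| ^ (-α) * |t + y| ^ (-β) := by
      funext u; rw [sub_eq_add_neg]
    rw [hfun]
    have := hCb (-y) y x hxy1 hxy2
    rwa [show x + -y = x - y by ring] at this
  have h2 : |iteratedDeriv N (fun t : ℝ => |x - t| ^ (-α) * |x + t| ^ (-β)) y| ≤
      C * (|x - y| ^ (-α) * |x + y| ^ (-β) * (|x - y|⁻¹ + |x + y|⁻¹) ^ N) := by
    have hfun : (fun t : ℝ => |x - t| ^ (-α) * |x + t| ^ (-β)) =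
        fun t : ℝ => |t + -x| ^ (-α) * |t + x| ^ (-β) := by
      funext u
      rw [abs_sub_comm, sub_eq_add_neg, add_comm x u]
    rw [hfun]
    have := hCb (-x) x y hyx1 hyx2
    rwa [show y + -x = -(x - y) by ring, abs_neg, add_comm y x] at this
  linarith
end

section
/- Let 0 ≤ γ < 1, let α, β > 0 with α + β = 1 − γ, let 1 < p < γ^{−1} (with γ^{−1} = ∞ when γ = 0), and let q be defined by 1/q = 1/p − γ. Then there exists a constant C > 0, depending only on α, β, p and q, such that for every b ∈ ℓ^p(ℤ): (∑_{j∈ℤ} (∑_{i∈ℤ, i≠j, i≠−j} |b(i)| / (|i−j|^α |i+j|^β))^q)^{1/q} ≤ C ‖b‖_{ℓ^p(ℤ)}. In particular T_{α,β} is bounded from ℓ^p(ℤ) into ℓ^q(ℤ). -/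
open scoped ENNReal NNReal BigOperators

/-- The kernel of the fractional series operator `T_{α,β}`:
`1 / (|i-j|^α |i+j|^β)` for `i ≠ ±j`, and `0` for `i = ±j`. -/
noncomputable def Tker (α β : ℝ) (i j : ℤ) : ℝ :=
  if i = j ∨ i = -j then 0 else 1 / (|(i : ℝ) - (j : ℝ)| ^ α * |(i : ℝ) + (j : ℝ)| ^ β)

/-- The kernel of `T_{α,β}` as a `[0,∞]`-valued function. -/
noncomputable def eTker (α β : ℝ) (i j : ℤ) : ℝ≥0∞ :=
  ENNReal.ofReal (Tker α β i j)

namespace Stmt6Aux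



lemma tsum_le_of_sum_le' {ι : Type*} {f : ι → ℝ≥0∞} {c : ℝ≥0∞}
    (h : ∀ s : Finset ι, ∑ i ∈ s, f i ≤ c) : ∑' i, f i ≤ c := by
  rw [ENNReal.tsum_eq_iSup_sum]; exact iSup_le h

/-- Hölder's inequality for `tsum` in `ℝ≥0∞`. -/
lemma tsum_inner_le_Lp_mul_Lq {ι : Type*} (f g : ι → ℝ≥0∞) {p q : ℝ}
    (hpq : p.HolderConjugate q) :
    ∑' i, f i * g i ≤ (∑' i, f i ^ p) ^ (1/p) * (∑' i, g i ^ q) ^ (1/q) := by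
  refine tsum_le_of_sum_le' fun s => ?_
  refine (ENNReal.inner_le_Lp_mul_Lq s f g hpq).trans ?_
  gcongr <;> first
    | exact ENNReal.sum_le_tsum s
    | exact hpq.one_div_nonneg
    | exact hpq.symm.one_div_nonneg

/-- Two-function Minkowski inequality for `tsum` in `ℝ≥0∞`. -/
lemma tsum_Lp_add_le {ι : Type*} (f g : ι → ℝ≥0∞) {r : ℝ} (hr : 1 ≤ r) :
    (∑' j, (f j + g j) ^ r) ^ (1/r) ≤ (∑' j, f j ^ r) ^ (1/r) + (∑' j, g j ^ r) ^ (1/r) := by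
  have hr0 : 0 < r := lt_of_lt_of_le one_pos hr
  have key : ∑' j, (f j + g j) ^ r ≤
      ((∑' j, f j ^ r) ^ (1/r) + (∑' j, g j ^ r) ^ (1/r)) ^ r := by
    refine tsum_le_of_sum_le' fun s => ?_
    have h1 : (∑ j ∈ s, (f j + g j) ^ r) ^ (1/r) ≤
        (∑' j, f j ^ r) ^ (1/r) + (∑' j, g j ^ r) ^ (1/r) := by
      refine (ENNReal.Lp_add_le s f g hr).trans ?_
      gcongr <;> first
        | exact ENNReal.sum_le_tsum s
        | positivity

    calc ∑ j ∈ s, (f j + g j) ^ r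
        = ((∑ j ∈ s, (f j + g j) ^ r) ^ (1/r)) ^ r := by
          rw [← ENNReal.rpow_mul, one_div, inv_mul_cancel₀ hr0.ne', ENNReal.rpow_one]
      _ ≤ _ := ENNReal.rpow_le_rpow h1 hr0.le
  calc (∑' j, (f j + g j) ^ r) ^ (1/r)
      ≤ (((∑' j, f j ^ r) ^ (1/r) + (∑' j, g j ^ r) ^ (1/r)) ^ r) ^ (1/r) :=
        ENNReal.rpow_le_rpow key (by positivity)
    _ = _ := by rw [← ENNReal.rpow_mul, mul_one_div, div_self hr0.ne', ENNReal.rpow_one]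

lemma finset_tsum_minkowski {ι κ : Type*} (F : ι → κ → ℝ≥0∞) {r : ℝ} (hr : 1 ≤ r)
    (s : Finset ι) :
    (∑' j, (∑ i ∈ s, F i j) ^ r) ^ (1/r) ≤ ∑ i ∈ s, (∑' j, F i j ^ r) ^ (1/r) := by
  have hr0 : 0 < r := lt_of_lt_of_le one_pos hr
  induction s using Finset.cons_induction with
  | empty =>
      simp only [Finset.sum_empty, ENNReal.zero_rpow_of_pos hr0, tsum_zero,
        ENNReal.zero_rpow_of_pos (one_div_pos.mpr hr0), le_refl]
  | cons a s ha ih =>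
      simp only [Finset.sum_cons]
      calc (∑' j, (F a j + ∑ i ∈ s, F i j) ^ r) ^ (1/r)
          ≤ (∑' j, F a j ^ r) ^ (1/r) + (∑' j, (∑ i ∈ s, F i j) ^ r) ^ (1/r) :=
            tsum_Lp_add_le _ _ hr
        _ ≤ _ := by gcongr

/-- Minkowski's inequality for double `tsum`s in `ℝ≥0∞`. -/
lemma tsum_tsum_minkowski {ι κ : Type*} (F : ι → κ → ℝ≥0∞) {r : ℝ} (hr : 1 ≤ r) :
    ∑' j : κ, (∑' i : ι, F i j) ^ r ≤ (∑' i : ι, (∑' j : κ, F i j ^ r) ^ (1/r)) ^ r := by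
  have hr0 : 0 < r := lt_of_lt_of_le one_pos hr
  refine tsum_le_of_sum_le' fun u => ?_
  have hmono : ∀ j : κ, Monotone (fun s : Finset ι => (∑ i ∈ s, F i j) ^ r) := by
    intro j s1 s2 hs
    exact ENNReal.rpow_le_rpow (Finset.sum_le_sum_of_subset hs) hr0.le
  have hiso : ∀ j : κ, (∑' i : ι, F i j) ^ r = ⨆ s : Finset ι, (∑ i ∈ s, F i j) ^ r := by
    intro j
    rw [ENNReal.tsum_eq_iSup_sum]
    exact OrderIso.map_iSup (ENNReal.orderIsoRpow r hr0) _
  calc ∑ j ∈ u, (∑' i : ι, F i j) ^ r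
      = ∑ j ∈ u, ⨆ s : Finset ι, (∑ i ∈ s, F i j) ^ r := by simp only [hiso]
    _ = ⨆ s : Finset ι, ∑ j ∈ u, (∑ i ∈ s, F i j) ^ r :=
        ENNReal.finsetSum_iSup_of_monotone fun j => hmono j
    _ ≤ (∑' i : ι, (∑' j : κ, F i j ^ r) ^ (1/r)) ^ r := by
        refine iSup_le fun s => ?_
        have h1 : (∑ j ∈ u, (∑ i ∈ s, F i j) ^ r) ^ (1/r) ≤
            ∑' i : ι, (∑' j : κ, F i j ^ r) ^ (1/r) := by
          calc (∑ j ∈ u, (∑ i ∈ s, F i j) ^ r) ^ (1/r)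
              ≤ (∑' j, (∑ i ∈ s, F i j) ^ r) ^ (1/r) :=
                ENNReal.rpow_le_rpow (ENNReal.sum_le_tsum u) (by positivity)
            _ ≤ ∑ i ∈ s, (∑' j, F i j ^ r) ^ (1/r) := finset_tsum_minkowski F hr s
            _ ≤ _ := ENNReal.sum_le_tsum s
        calc ∑ j ∈ u, (∑ i ∈ s, F i j) ^ r
            = ((∑ j ∈ u, (∑ i ∈ s, F i j) ^ r) ^ (1/r)) ^ r := by
              rw [← ENNReal.rpow_mul, one_div, inv_mul_cancel₀ hr0.ne', ENNReal.rpow_one]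
          _ ≤ _ := ENNReal.rpow_le_rpow h1 hr0.le



/-- Key concavity estimate: for `n ≥ 1` and `0 < a < 1`,
`(n-1)^(1-a) ≤ n^(1-a) - (1-a) n^(-a)`. -/
lemma key_concave {a : ℝ} (ha0 : 0 < a) (ha1 : a < 1) {n : ℝ} (hn : 1 ≤ n) :
    (n - 1) ^ (1 - a) ≤ n ^ (1 - a) - (1 - a) * n ^ (-a) := by
  have hn0 : 0 < n := lt_of_lt_of_le one_pos hn
  have hdiv : 1/n ≤ 1 := (div_le_one hn0).mpr hn
  have h3 : (0:ℝ) ≤ (n-1)/n := div_nonneg (by linarith) hn0.le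
  have e1 : (n-1) ^ (1-a) = n ^ (1-a) * ((n-1)/n) ^ (1-a) := by
    rw [← Real.mul_rpow hn0.le h3]
    congr 1
    field_simp
  have e2 : ((n-1)/n) ^ (1-a) ≤ 1 - (1-a)/n := by
    have hb : (1 + -(1/n)) ^ (1-a) ≤ 1 + (1-a) * (-(1/n)) :=
      rpow_one_add_le_one_add_mul_self (by linarith) (by linarith) (by linarith)
    have heq : (1 + -(1/n)) = (n-1)/n := by field_simp; ring
    rw [heq] at hb
    calc ((n-1)/n) ^ (1-a) ≤ 1 + (1-a) * (-(1/n)) := hb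
      _ = 1 - (1-a)/n := by ring
  have e3 : n ^ (1-a) * (1/n) = n ^ (-a) := by
    rw [one_div, ← Real.rpow_neg_one n, ← Real.rpow_add hn0]
    ring_nf
  have hpos : (0:ℝ) ≤ n ^ (1-a) := Real.rpow_nonneg hn0.le _
  calc (n-1) ^ (1-a) = n ^ (1-a) * ((n-1)/n) ^ (1-a) := e1
    _ ≤ n ^ (1-a) * (1 - (1-a)/n) := mul_le_mul_of_nonneg_left e2 hpos
    _ = n ^ (1-a) - (1-a) * (n ^ (1-a) * (1/n)) := by ring
    _ = n ^ (1-a) - (1-a) * n ^ (-a) := by rw [e3]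

/-- Key convexity estimate: for `n ≥ 2` and `σ > 1`,
`(σ-1) n^(-σ) ≤ (n-1)^(1-σ) - n^(1-σ)`. -/
lemma key_convex {σ : ℝ} (hσ : 1 < σ) {n : ℝ} (hn : 2 ≤ n) :
    (σ - 1) * n ^ (-σ) ≤ (n - 1) ^ (1 - σ) - n ^ (1 - σ) := by
  have hn0 : 0 < n := by linarith
  have hn1 : 0 < n - 1 := by linarith
  set s : ℝ := σ - 1 with hs
  have hs0 : 0 < s := by rw [hs]; linarith
  have hdiv : 1/n ≤ 1/2 := by
    rw [div_le_div_iff₀ hn0 two_pos]; linarith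
  have h3 : (0:ℝ) < 1 - 1/n := by linarith
  have main : 1 + s/n ≤ (1 - 1/n) ^ (-s) := by
    rcases le_or_gt s 1 with hcase | hcase
    · have hb : (1 + -(1/n)) ^ s ≤ 1 + s * (-(1/n)) :=
        rpow_one_add_le_one_add_mul_self (by linarith) hs0.le hcase
      have h7 : (1 - 1/n) ^ s ≤ 1 - s/n := by
        have heq : (1 + -(1/n)) = 1 - 1/n := by ring
        rw [heq] at hb
        calc (1 - 1/n) ^ s ≤ 1 + s * (-(1/n)) := hb
          _ = 1 - s/n := by ring
      have h9 : (0:ℝ) < (1 - 1/n) ^ s := Real.rpow_pos_of_pos h3 s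
      have hsn : 0 < s/n := div_pos hs0 hn0
      rw [Real.rpow_neg h3.le, ← one_div, le_div_iff₀ h9]
      nlinarith [mul_le_mul_of_nonneg_left h7 (by linarith : (0:ℝ) ≤ 1 + s/n), sq_nonneg (s/n)]
    · have hb : 1 + s * (1/(n-1)) ≤ (1 + 1/(n-1)) ^ s :=
        one_add_mul_self_le_rpow_one_add (by nlinarith [one_div_pos.mpr hn1]) hcase.le
      have heq : (1 - 1/n)⁻¹ = 1 + 1/(n-1) := by
        field_simp
        ring
      rw [Real.rpow_neg h3.le, ← Real.inv_rpow h3.le, heq]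
      have hmono : 1/n ≤ 1/(n-1) := by
        apply one_div_le_one_div_of_le hn1; linarith
      calc 1 + s/n ≤ 1 + s * (1/(n-1)) := by
            have h := mul_le_mul_of_nonneg_left hmono hs0.le
            rw [div_eq_mul_one_div s n]
            linarith
        _ ≤ (1 + 1/(n-1)) ^ s := hb
  have hexp : (n - 1) ^ (1 - σ) = n ^ (1 - σ) * (1 - 1/n) ^ (-s) := by
    have h1 : n - 1 = n * (1 - 1/n) := by field_simp
    rw [h1, Real.mul_rpow hn0.le h3.le, show (1:ℝ) - σ = -s from by rw [hs]; ring]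
  have hpos : (0:ℝ) < n ^ (1 - σ) := Real.rpow_pos_of_pos hn0 _
  have e3 : n ^ (1-σ) * (1/n) = n ^ (-σ) := by
    rw [one_div, ← Real.rpow_neg_one n, ← Real.rpow_add hn0]
    ring_nf
  have hfin : n ^ (1 - σ) * (1 + s/n) = n ^ (1-σ) + s * n ^ (-σ) := by
    have h5 : n ^ (1-σ) * (1 + s/n) = n ^ (1-σ) + s * (n ^ (1-σ) * (1/n)) := by ring
    rw [h5, e3]
  calc (σ - 1) * n ^ (-σ) = (n ^ (1-σ) + s * n ^ (-σ)) - n ^ (1-σ) := by rw [hs]; ring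
    _ = n ^ (1 - σ) * (1 + s/n) - n ^ (1-σ) := by rw [hfin]
    _ ≤ n ^ (1 - σ) * (1 - 1/n) ^ (-s) - n ^ (1-σ) := by
        have := mul_le_mul_of_nonneg_left main hpos.le
        linarith
    _ = (n - 1) ^ (1 - σ) - n ^ (1 - σ) := by rw [hexp]




/-- Partial sums of `k^(-a)` for `0 < a < 1`. -/
lemma sum_Icc_rpow_le {a : ℝ} (ha0 : 0 < a) (ha1 : a < 1) (K : ℕ) :
    ∑ k ∈ Finset.Icc 1 K, ((k:ℝ)) ^ (-a) ≤ (K:ℝ) ^ (1-a) / (1-a) := by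
  have h1a : (0:ℝ) < 1 - a := by linarith
  induction K with
  | zero =>
      simp [Real.zero_rpow h1a.ne']
  | succ K ih =>
      rw [Finset.sum_Icc_succ_top (by omega : 1 ≤ K + 1)]
      have key := key_concave ha0 ha1 (n := ((K:ℝ) + 1)) (by have := Nat.cast_nonneg (α := ℝ) K; linarith)
      have hcast : ((K:ℝ) + 1) - 1 = (K:ℝ) := by ring
      rw [hcast] at key
      have h2 : ((K+1:ℕ):ℝ) ^ (-a) ≤ (((K:ℝ)+1) ^ (1-a) - (K:ℝ) ^ (1-a)) / (1-a) := by
        rw [le_div_iff₀ h1a]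
        push_cast
        linarith
      have h3 : (K:ℝ) ^ (1-a)/(1-a) + (((K:ℝ)+1) ^ (1-a) - (K:ℝ) ^ (1-a))/(1-a)
          = ((K:ℝ)+1) ^ (1-a)/(1-a) := by
        rw [← add_div]; ring_nf
      have h4 : ((K+1:ℕ):ℝ) ^ (1-a) = ((K:ℝ)+1) ^ (1-a) := by push_cast; ring_nf
      rw [h4]
      linarith
/-- Tail sums of `k^(-σ)` for `σ > 1`. -/
lemma sum_Icc_tail_le {σ : ℝ} (hσ : 1 < σ) (K : ℕ) (hK : 1 ≤ K) (M : ℕ) :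
    ∑ k ∈ Finset.Icc (K+1) (K+M), ((k:ℝ)) ^ (-σ) ≤ (K:ℝ) ^ (1-σ) / (σ-1) := by
  have hσ1 : (0:ℝ) < σ - 1 := by linarith
  have main : ∑ k ∈ Finset.Icc (K+1) (K+M), ((k:ℝ)) ^ (-σ)
      ≤ ((K:ℝ) ^ (1-σ) - ((K+M:ℕ):ℝ) ^ (1-σ)) / (σ-1) := by
    induction M with
    | zero => simp
    | succ M ih =>
        have hKM : K + (M+1) = (K+M) + 1 := by omega
        rw [hKM, Finset.sum_Icc_succ_top (by omega : K+1 ≤ K+M+1)]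
        have key := key_convex hσ (n := ((K+M:ℕ):ℝ) + 1) (by have h := Nat.one_le_cast (α := ℝ) |>.mpr (show 1 ≤ K + M by omega); push_cast at h ⊢; linarith)
        have hcast : (((K+M:ℕ):ℝ) + 1) - 1 = ((K+M:ℕ):ℝ) := by ring
        rw [hcast] at key
        have h2 : ((K+M+1:ℕ):ℝ) ^ (-σ) ≤ (((K+M:ℕ):ℝ) ^ (1-σ) - (((K+M:ℕ):ℝ)+1) ^ (1-σ)) / (σ-1) := by
          rw [le_div_iff₀ hσ1]
          push_cast
          push_cast at key
          linarith
        have h4 : ((K+M+1:ℕ):ℝ) ^ (1-σ) = (((K+M:ℕ):ℝ)+1) ^ (1-σ) := by push_cast; ring_nf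
        rw [h4]
        have h3 : ((K:ℝ) ^ (1-σ) - ((K+M:ℕ):ℝ) ^ (1-σ))/(σ-1)
              + (((K+M:ℕ):ℝ) ^ (1-σ) - (((K+M:ℕ):ℝ)+1) ^ (1-σ))/(σ-1)
            = ((K:ℝ) ^ (1-σ) - (((K+M:ℕ):ℝ)+1) ^ (1-σ))/(σ-1) := by
          rw [← add_div]; ring_nf
        linarith
  have hnn : (0:ℝ) ≤ ((K+M:ℕ):ℝ) ^ (1-σ) := Real.rpow_nonneg (by positivity) _
  calc ∑ k ∈ Finset.Icc (K+1) (K+M), ((k:ℝ)) ^ (-σ)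
      ≤ ((K:ℝ) ^ (1-σ) - ((K+M:ℕ):ℝ) ^ (1-σ)) / (σ-1) := main
    _ ≤ (K:ℝ) ^ (1-σ) / (σ-1) := by
        gcongr
        linarith




lemma coe_nat_rpow_eq {n : ℕ} (hn : 1 ≤ n) (e : ℝ) :
    ((n : ℝ≥0∞)) ^ e = ENNReal.ofReal ((n:ℝ) ^ e) := by
  rw [← ENNReal.ofReal_natCast n, ENNReal.ofReal_rpow_of_pos (by exact_mod_cast hn)]

/-- `∑_{1 ≤ n ≤ K} n^(-a) ≤ K^(1-a)/(1-a)` in `ℝ≥0∞`. -/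
lemma ennreal_sum_head {a : ℝ} (ha0 : 0 < a) (ha1 : a < 1) (K : ℕ)
    (hreal : ∑ k ∈ Finset.Icc 1 K, ((k:ℝ)) ^ (-a) ≤ (K:ℝ) ^ (1-a) / (1-a)) :
    ∑' n : ℕ, (if 1 ≤ n ∧ n ≤ K then ((n : ℝ≥0∞)) ^ (-a) else 0)
      ≤ ENNReal.ofReal ((K:ℝ) ^ (1-a) / (1-a)) := by
  refine tsum_le_of_sum_le' fun s => ?_
  rw [Finset.sum_ite, Finset.sum_const_zero, add_zero]
  have hsub : s.filter (fun n => 1 ≤ n ∧ n ≤ K) ⊆ Finset.Icc 1 K := by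
    intro n hn
    simp only [Finset.mem_filter] at hn
    exact Finset.mem_Icc.mpr hn.2
  calc ∑ n ∈ s.filter (fun n => 1 ≤ n ∧ n ≤ K), ((n : ℝ≥0∞)) ^ (-a)
      ≤ ∑ n ∈ Finset.Icc 1 K, ((n : ℝ≥0∞)) ^ (-a) := Finset.sum_le_sum_of_subset hsub
    _ = ∑ n ∈ Finset.Icc 1 K, ENNReal.ofReal ((n:ℝ) ^ (-a)) := by
        refine Finset.sum_congr rfl fun n hn => ?_
        exact coe_nat_rpow_eq (Finset.mem_Icc.mp hn).1 _
    _ = ENNReal.ofReal (∑ n ∈ Finset.Icc 1 K, ((n:ℝ)) ^ (-a)) := by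
        rw [ENNReal.ofReal_sum_of_nonneg]
        intro n _
        positivity
    _ ≤ _ := ENNReal.ofReal_le_ofReal hreal

/-- `∑_{n > K} n^(-σ) ≤ K^(1-σ)/(σ-1)` in `ℝ≥0∞`. -/
lemma ennreal_sum_tail {σ : ℝ} (hσ : 1 < σ) (K : ℕ) (hK : 1 ≤ K)
    (hreal : ∀ M : ℕ, ∑ k ∈ Finset.Icc (K+1) (K+M), ((k:ℝ)) ^ (-σ) ≤ (K:ℝ) ^ (1-σ) / (σ-1)) :
    ∑' n : ℕ, (if K < n then ((n : ℝ≥0∞)) ^ (-σ) else 0)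
      ≤ ENNReal.ofReal ((K:ℝ) ^ (1-σ) / (σ-1)) := by
  refine tsum_le_of_sum_le' fun s => ?_
  rw [Finset.sum_ite, Finset.sum_const_zero, add_zero]
  set M := s.sup id with hM
  have hsub : s.filter (fun n => K < n) ⊆ Finset.Icc (K+1) (K+M) := by
    intro n hn
    simp only [Finset.mem_filter] at hn
    refine Finset.mem_Icc.mpr ⟨hn.2, ?_⟩
    have : n ≤ M := Finset.le_sup (f := id) hn.1
    omega
  calc ∑ n ∈ s.filter (fun n => K < n), ((n : ℝ≥0∞)) ^ (-σ)
      ≤ ∑ n ∈ Finset.Icc (K+1) (K+M), ((n : ℝ≥0∞)) ^ (-σ) := Finset.sum_le_sum_of_subset hsub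
    _ = ENNReal.ofReal (∑ n ∈ Finset.Icc (K+1) (K+M), ((n:ℝ)) ^ (-σ)) := by
        rw [ENNReal.ofReal_sum_of_nonneg (fun n _ => by positivity)]
        refine Finset.sum_congr rfl fun n hn => ?_
        exact coe_nat_rpow_eq (by have := (Finset.mem_Icc.mp hn).1; omega) _
    _ ≤ _ := ENNReal.ofReal_le_ofReal (hreal M)

/-- counting estimate -/
lemma ennreal_count (K : ℕ) :
    ∑' n : ℕ, (if n ≤ K then (1 : ℝ≥0∞) else 0) ≤ (K : ℝ≥0∞) + 1 := by
  refine tsum_le_of_sum_le' fun s => ?_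
  rw [Finset.sum_ite, Finset.sum_const_zero, add_zero]
  have hsub : s.filter (fun n => n ≤ K) ⊆ Finset.Iic K := by
    intro n hn
    simp only [Finset.mem_filter] at hn
    exact Finset.mem_Iic.mpr hn.2
  calc ∑ _n ∈ s.filter (fun n => n ≤ K), (1:ℝ≥0∞)
      ≤ ∑ _n ∈ Finset.Iic K, (1:ℝ≥0∞) := Finset.sum_le_sum_of_subset hsub
    _ = ((K+1 : ℕ) : ℝ≥0∞) := by simp [Finset.sum_const, Nat.card_Iic]
    _ = (K : ℝ≥0∞) + 1 := by push_cast; ring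

/-- Splitting a `ℤ`-indexed sum of a function of `natAbs`. -/
lemma tsum_int_natAbs_le (g : ℕ → ℝ≥0∞) : ∑' i : ℤ, g i.natAbs ≤ 2 * ∑' n : ℕ, g n := by
  rw [tsum_of_nat_of_neg_add_one ENNReal.summable ENNReal.summable]
  have h1 : ∑' n : ℕ, g ((n : ℤ)).natAbs = ∑' n : ℕ, g n := by
    refine tsum_congr fun n => by simp
  have h2 : ∑' n : ℕ, g ((-((n:ℤ) + 1)).natAbs) = ∑' n : ℕ, g (n+1) := by
    refine tsum_congr fun n => ?_
    have he : (-((n:ℤ) + 1)).natAbs = n + 1 := by omega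
    rw [he]
  have h3 : ∑' n : ℕ, g (n+1) ≤ ∑' n : ℕ, g n :=
    ENNReal.summable.tsum_le_tsum_of_inj (fun n => n+1) (fun m n h => by simpa using h) (fun c _ => zero_le)
      (fun n => le_rfl) ENNReal.summable
  rw [h1, h2, two_mul]
  exact add_le_add le_rfl h3



noncomputable def wZ (i : ℤ) : ℝ≥0∞ := ((max i.natAbs 1 : ℕ) : ℝ≥0∞)

lemma wZ_ne_zero (i : ℤ) : wZ i ≠ 0 := by
  simp [wZ]
lemma wZ_ne_top (i : ℤ) : wZ i ≠ ∞ := by simp [wZ]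
lemma one_le_wZ (i : ℤ) : 1 ≤ wZ i := by
  rw [wZ, show (1:ℝ≥0∞) = ((1:ℕ):ℝ≥0∞) by norm_num, Nat.cast_le]
  omega
lemma wZ_of_ne_zero {i : ℤ} (hi : i ≠ 0) : wZ i = (i.natAbs : ℝ≥0∞) := by
  rw [wZ]
  congr 1
  omega

lemma rpow_neg_antitone {x y : ℝ≥0∞} (h : x ≤ y) {e : ℝ} (he : 0 ≤ e) :
    y ^ (-e) ≤ x ^ (-e) := by
  rw [ENNReal.rpow_neg, ENNReal.rpow_neg]
  exact ENNReal.inv_le_inv.mpr (ENNReal.rpow_le_rpow h he)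

lemma half_bound {m J : ℕ} (h : J ≤ 2*m) {e : ℝ} (he0 : 0 ≤ e) (he1 : e ≤ 1) :
    ((m:ℝ≥0∞)) ^ (-e) ≤ 2 * ((J:ℝ≥0∞)) ^ (-e) := by
  have hcast : ((J:ℝ≥0∞)) ≤ 2 * (m:ℝ≥0∞) := by
    calc ((J:ℝ≥0∞)) ≤ ((2*m : ℕ) : ℝ≥0∞) := by exact_mod_cast Nat.cast_le.mpr h
      _ = 2 * (m:ℝ≥0∞) := by push_cast; ring
  have h1 : (2 * (m:ℝ≥0∞)) ^ (-e) ≤ ((J:ℝ≥0∞)) ^ (-e) := rpow_neg_antitone hcast he0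
  have h3 : (2 * (m:ℝ≥0∞)) ^ (-e) = (2:ℝ≥0∞)^(-e) * (m:ℝ≥0∞)^(-e) :=
    ENNReal.mul_rpow_of_ne_top (by norm_num) (ENNReal.natCast_ne_top m) _
  have h4 : (m:ℝ≥0∞)^(-e) = (2:ℝ≥0∞)^e * ((2:ℝ≥0∞)^(-e) * (m:ℝ≥0∞)^(-e)) := by
    rw [← mul_assoc, ← ENNReal.rpow_add e (-e) (by norm_num) (by norm_num)]
    simp
  rw [h4, ← h3]
  have h5 : (2:ℝ≥0∞)^e ≤ 2 := by
    calc (2:ℝ≥0∞)^e ≤ (2:ℝ≥0∞)^(1:ℝ) :=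
      ENNReal.rpow_le_rpow_of_exponent_le (by norm_num) he1
    _ = 2 := ENNReal.rpow_one 2
  exact mul_le_mul h5 h1 zero_le (by norm_num)

lemma ite_le_ite_of_imp {p q : Prop} [Decidable p] [Decidable q] (v : ℝ≥0∞) (h : p → q) :
    (if p then v else 0) ≤ (if q then v else 0) := by
  split_ifs with h1 h2
  · exact le_rfl
  · exact absurd (h h1) h2
  · exact zero_le
  · exact le_rfl

/-- Generic shifted head sum over ℤ. -/
lemma G1 {e : ℝ} (he0 : 0 < e) (he1 : e < 1) (j0 : ℤ) (K : ℕ) :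
    (∑' i : ℤ, if 1 ≤ (i - j0).natAbs ∧ (i - j0).natAbs ≤ K then
        (((i - j0).natAbs : ℝ≥0∞)) ^ (-e) else 0)
      ≤ 2 * ENNReal.ofReal ((K:ℝ) ^ (1-e) / (1-e)) := by
  set g : ℕ → ℝ≥0∞ := fun n => if 1 ≤ n ∧ n ≤ K then ((n : ℝ≥0∞)) ^ (-e) else 0 with hg
  have h1 : (∑' i : ℤ, g (i - j0).natAbs) = ∑' k : ℤ, g k.natAbs := by
    exact Equiv.tsum_eq (Equiv.subRight j0) (fun k => g k.natAbs)
  calc (∑' i : ℤ, g (i - j0).natAbs) = ∑' k : ℤ, g k.natAbs := h1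
    _ ≤ 2 * ∑' n : ℕ, g n := tsum_int_natAbs_le g
    _ ≤ 2 * ENNReal.ofReal ((K:ℝ) ^ (1-e) / (1-e)) := by
        gcongr
        exact ennreal_sum_head he0 he1 K (sum_Icc_rpow_le he0 he1 K)

/-- Generic center sum over ℤ. -/
lemma G3 {e : ℝ} (he0 : 0 < e) (he1 : e < 1) (K : ℕ) :
    (∑' i : ℤ, if i.natAbs ≤ K then wZ i ^ (-e) else 0)
      ≤ 2 * (1 + ENNReal.ofReal ((K:ℝ) ^ (1-e) / (1-e))) := by
  set g : ℕ → ℝ≥0∞ := fun n => if n ≤ K then (((max n 1 : ℕ) : ℝ≥0∞)) ^ (-e) else 0 with hg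
  have h0 : (∑' i : ℤ, if i.natAbs ≤ K then wZ i ^ (-e) else 0) = ∑' i : ℤ, g i.natAbs := by
    refine tsum_congr fun i => by rw [hg, wZ]
  rw [h0]
  refine (tsum_int_natAbs_le g).trans ?_
  gcongr
  have hpt : ∀ n : ℕ, g n ≤ (if n = 0 then 1 else 0) +
      (if 1 ≤ n ∧ n ≤ K then ((n : ℝ≥0∞)) ^ (-e) else 0) := by
    intro n
    rcases Nat.eq_zero_or_pos n with h | h
    · subst h
      have hg0 : g 0 = 1 := by simp [hg]
      rw [hg0]
      simp
    · have hmax : (max n 1 : ℕ) = n := by omega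
      have hgn : g n = if n ≤ K then ((n : ℝ≥0∞)) ^ (-e) else 0 := by
        rw [hg]; simp only [hmax]
      rw [hgn]
      exact le_trans (ite_le_ite_of_imp ((n:ℝ≥0∞) ^ (-e)) (fun hn => ⟨h, hn⟩)) le_add_self
  calc ∑' n : ℕ, g n
      ≤ ∑' n : ℕ, ((if n = 0 then 1 else 0) +
          (if 1 ≤ n ∧ n ≤ K then ((n : ℝ≥0∞)) ^ (-e) else 0)) := ENNReal.tsum_le_tsum hpt
    _ = (∑' n : ℕ, (if n = 0 then (1:ℝ≥0∞) else 0)) +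
          ∑' n : ℕ, (if 1 ≤ n ∧ n ≤ K then ((n : ℝ≥0∞)) ^ (-e) else 0) := ENNReal.tsum_add
    _ ≤ 1 + ENNReal.ofReal ((K:ℝ) ^ (1-e) / (1-e)) := by
        gcongr
        · exact le_of_eq (tsum_ite_eq 0 1)
        · exact ennreal_sum_head he0 he1 K (sum_Icc_rpow_le he0 he1 K)

/-- Generic counting sum over ℤ. -/
lemma G4 (K : ℕ) :
    (∑' i : ℤ, if i.natAbs ≤ K then (1:ℝ≥0∞) else 0) ≤ 2 * ((K : ℝ≥0∞) + 1) := by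
  set g : ℕ → ℝ≥0∞ := fun n => if n ≤ K then (1:ℝ≥0∞) else 0 with hg
  refine (tsum_int_natAbs_le g).trans ?_
  gcongr
  exact ennreal_count K

/-- Generic tail sum over ℤ. -/
lemma G5 {σ : ℝ} (hσ : 1 < σ) (K : ℕ) (hK : 1 ≤ K) :
    (∑' i : ℤ, if K < i.natAbs then ((i.natAbs : ℝ≥0∞)) ^ (-σ) else 0)
      ≤ 2 * ENNReal.ofReal ((K:ℝ) ^ (1-σ) / (σ-1)) := by
  set g : ℕ → ℝ≥0∞ := fun n => if K < n then ((n : ℝ≥0∞)) ^ (-σ) else 0 with hg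
  refine (tsum_int_natAbs_le g).trans ?_
  gcongr
  exact ennreal_sum_tail hσ K hK (fun M => sum_Icc_tail_le hσ K hK M)


/-- The core three-center sum estimate. -/
lemma core {a b c : ℝ} (ha0 : 0 < a) (ha1 : a < 1) (hb0 : 0 < b) (hb1 : b < 1)
    (hc0 : 0 < c) (hc1 : c < 1) (hσ : 1 < a + b + c) :
    ∃ C : ℝ≥0∞, C ≠ ∞ ∧ ∀ j : ℤ,
      (∑' i : ℤ, (if i = j ∨ i = -j then 0 else
          (((i-j).natAbs : ℝ≥0∞)) ^ (-a) * (((i+j).natAbs : ℝ≥0∞)) ^ (-b)) * wZ i ^ (-c))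
        ≤ C * wZ j ^ (1-(a+b+c)) := by
  set CA := ENNReal.ofReal (1/(1-a)) with hCA
  set CB := ENNReal.ofReal (1/(1-b)) with hCB
  set CC := ENNReal.ofReal (1/(1-c)) with hCC
  set CS := ENNReal.ofReal (1/(a+b+c-1)) with hCS
  refine ⟨4*CA + 4*CB + 8*(1+CC) + 48 + 8*CS + (2 + 2*CS), ?_, fun j => ?_⟩
  · rw [hCA, hCB, hCC, hCS]
    finiteness
  rcases eq_or_ne j 0 with rfl | hj
  -- ### the case j = 0
  · have hwj : wZ (0:ℤ) ^ (1-(a+b+c)) = 1 := by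
      rw [wZ]; norm_num
    rw [hwj, mul_one]
    have hpt : ∀ i : ℤ, (if i = 0 ∨ i = -0 then 0 else
          (((i-0).natAbs : ℝ≥0∞)) ^ (-a) * (((i+0).natAbs : ℝ≥0∞)) ^ (-b)) * wZ i ^ (-c)
        ≤ (if 1 < i.natAbs then ((i.natAbs : ℝ≥0∞)) ^ (-(a+b+c)) else 0)
          + (if i.natAbs = 1 then 1 else 0) := by
      intro i
      rcases eq_or_ne i 0 with rfl | hi
      · simp
      · rw [if_neg (by simp [hi]), sub_zero, add_zero, wZ_of_ne_zero hi]
        have hN0 : ((i.natAbs : ℝ≥0∞)) ≠ 0 := by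
          simp [Int.natAbs_ne_zero.mpr hi]
        have hNt : ((i.natAbs : ℝ≥0∞)) ≠ ∞ := ENNReal.natCast_ne_top _
        have hprod : ((i.natAbs : ℝ≥0∞)) ^ (-a) * ((i.natAbs : ℝ≥0∞)) ^ (-b)
            * ((i.natAbs : ℝ≥0∞)) ^ (-c) = ((i.natAbs : ℝ≥0∞)) ^ (-(a+b+c)) := by
          rw [← ENNReal.rpow_add _ _ hN0 hNt, ← ENNReal.rpow_add _ _ hN0 hNt]
          ring_nf
        rw [hprod]
        rcases eq_or_lt_of_le (show 1 ≤ i.natAbs by omega) with h1 | h1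
        · rw [if_neg (by omega), if_pos (by omega), ← h1]
          norm_num
        · rw [if_pos h1]
          exact le_add_right le_rfl
    calc ∑' i : ℤ, (if i = 0 ∨ i = -0 then 0 else
          (((i-0).natAbs : ℝ≥0∞)) ^ (-a) * (((i+0).natAbs : ℝ≥0∞)) ^ (-b)) * wZ i ^ (-c)
        ≤ ∑' i : ℤ, ((if 1 < i.natAbs then ((i.natAbs : ℝ≥0∞)) ^ (-(a+b+c)) else 0)
          + (if i.natAbs = 1 then 1 else 0)) := ENNReal.tsum_le_tsum hpt
      _ = (∑' i : ℤ, if 1 < i.natAbs then ((i.natAbs : ℝ≥0∞)) ^ (-(a+b+c)) else 0)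
          + ∑' i : ℤ, (if i.natAbs = 1 then (1:ℝ≥0∞) else 0) := ENNReal.tsum_add
      _ ≤ 2 * ENNReal.ofReal ((1:ℝ) ^ (1-(a+b+c)) / (a+b+c-1)) + 2 * 1 := by
          gcongr
          · have := G5 hσ 1 le_rfl
            simpa using this
          · refine (tsum_int_natAbs_le (fun n => if n = 1 then (1:ℝ≥0∞) else 0)).trans ?_
            gcongr
            exact le_of_eq (tsum_ite_eq 1 1)
      _ ≤ 2 + 2*CS := by
          rw [Real.one_rpow, mul_one, hCS,
            add_comm (2 * ENNReal.ofReal (1/(a+b+c-1))) 2]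
      _ ≤ _ := le_add_self
  -- ### the case j ≠ 0
  · have hJ1 : 1 ≤ j.natAbs := by omega
    have hEJ0 : ((j.natAbs : ℝ≥0∞)) ≠ 0 := by simp; omega
    have hEJt : ((j.natAbs : ℝ≥0∞)) ≠ ∞ := ENNReal.natCast_ne_top _
    have hEJ1 : (1:ℝ≥0∞) ≤ ((j.natAbs : ℝ≥0∞)) := by
      exact_mod_cast Nat.one_le_cast.mpr hJ1
    have hwj : wZ j = ((j.natAbs : ℝ≥0∞)) := wZ_of_ne_zero hj
    set EJ := ((j.natAbs : ℝ≥0∞)) with hEJ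
    -- the five majorant functions
    set t1 : ℤ → ℝ≥0∞ := fun i => 2 * EJ^(-b-c) *
      (if 1 ≤ (i-j).natAbs ∧ (i-j).natAbs ≤ j.natAbs then (((i-j).natAbs : ℝ≥0∞)) ^ (-a) else 0)
      with ht1
    set t2 : ℤ → ℝ≥0∞ := fun i => 2 * EJ^(-a-c) *
      (if 1 ≤ (i+j).natAbs ∧ (i+j).natAbs ≤ j.natAbs then (((i+j).natAbs : ℝ≥0∞)) ^ (-b) else 0)
      with ht2
    set t3 : ℤ → ℝ≥0∞ := fun i => 4 * EJ^(-a-b) *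
      (if i.natAbs ≤ j.natAbs then wZ i ^ (-c) else 0) with ht3
    set t4 : ℤ → ℝ≥0∞ := fun i => 8 * EJ^(-(a+b+c)) *
      (if i.natAbs ≤ 2*j.natAbs then 1 else 0) with ht4
    set t5 : ℤ → ℝ≥0∞ := fun i => 4 *
      (if 2*j.natAbs < i.natAbs then ((i.natAbs : ℝ≥0∞)) ^ (-(a+b+c)) else 0) with ht5
    have hpt : ∀ i : ℤ, (if i = j ∨ i = -j then 0 else
          (((i-j).natAbs : ℝ≥0∞)) ^ (-a) * (((i+j).natAbs : ℝ≥0∞)) ^ (-b)) * wZ i ^ (-c)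
        ≤ t1 i + t2 i + t3 i + t4 i + t5 i := by
      intro i
      by_cases hP : i = j ∨ i = -j
      · rw [if_pos hP, zero_mul]
        exact zero_le
      rw [if_neg hP]
      push_neg at hP
      have hd1 : 1 ≤ (i-j).natAbs := by omega
      have hd2 : 1 ≤ (i+j).natAbs := by omega
      have hwi : wZ i = ((max i.natAbs 1 : ℕ) : ℝ≥0∞) := rfl
      by_cases h1 : 2*(i-j).natAbs ≤ j.natAbs
      · -- region 1
        have hn2 : j.natAbs ≤ (i+j).natAbs := by omega
        have hnm : j.natAbs ≤ 2 * (max i.natAbs 1) := by omega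
        have e2 : (((i+j).natAbs : ℝ≥0∞)) ^ (-b) ≤ EJ ^ (-b) :=
          rpow_neg_antitone (by exact_mod_cast Nat.cast_le.mpr hn2) hb0.le
        have e3 : wZ i ^ (-c) ≤ 2 * EJ ^ (-c) := by
          rw [hwi]; exact half_bound hnm hc0.le hc1.le
        calc (((i-j).natAbs : ℝ≥0∞)) ^ (-a) * (((i+j).natAbs : ℝ≥0∞)) ^ (-b) * wZ i ^ (-c)
            ≤ (((i-j).natAbs : ℝ≥0∞)) ^ (-a) * EJ ^ (-b) * (2 * EJ ^ (-c)) := by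
              gcongr
          _ = 2 * EJ^(-b-c) * (((i-j).natAbs : ℝ≥0∞)) ^ (-a) := by
              rw [show -b-c = (-b) + (-c) by ring, ENNReal.rpow_add _ _ hEJ0 hEJt]
              ring
          _ = t1 i := by simp only [ht1]; rw [if_pos (show 1 ≤ (i-j).natAbs ∧ (i-j).natAbs ≤ j.natAbs from ⟨hd1, by omega⟩)]
          _ ≤ t1 i + t2 i + t3 i + t4 i + t5 i := by
              exact ((le_self_add.trans le_self_add).trans le_self_add).trans le_self_add
      by_cases h2 : 2*(i+j).natAbs ≤ j.natAbs
      · -- region 2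
        have hn2 : j.natAbs ≤ (i-j).natAbs := by omega
        have hnm : j.natAbs ≤ 2 * (max i.natAbs 1) := by omega
        have e2 : (((i-j).natAbs : ℝ≥0∞)) ^ (-a) ≤ EJ ^ (-a) :=
          rpow_neg_antitone (by exact_mod_cast Nat.cast_le.mpr hn2) ha0.le
        have e3 : wZ i ^ (-c) ≤ 2 * EJ ^ (-c) := by
          rw [hwi]; exact half_bound hnm hc0.le hc1.le
        calc (((i-j).natAbs : ℝ≥0∞)) ^ (-a) * (((i+j).natAbs : ℝ≥0∞)) ^ (-b) * wZ i ^ (-c)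
            ≤ EJ ^ (-a) * (((i+j).natAbs : ℝ≥0∞)) ^ (-b) * (2 * EJ ^ (-c)) := by
              gcongr
          _ = 2 * EJ^(-a-c) * (((i+j).natAbs : ℝ≥0∞)) ^ (-b) := by
              rw [show -a-c = (-a) + (-c) by ring, ENNReal.rpow_add _ _ hEJ0 hEJt]
              ring
          _ = t2 i := by simp only [ht2]; rw [if_pos (show 1 ≤ (i+j).natAbs ∧ (i+j).natAbs ≤ j.natAbs from ⟨hd2, by omega⟩)]
          _ ≤ t1 i + t2 i + t3 i + t4 i + t5 i := by
              exact ((le_add_self.trans le_self_add).trans le_self_add).trans le_self_add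
      by_cases h3 : 2*i.natAbs < j.natAbs
      · -- region 3
        have hn1 : j.natAbs ≤ 2 * (i-j).natAbs := by omega
        have hn2 : j.natAbs ≤ 2 * (i+j).natAbs := by omega
        have e1 : (((i-j).natAbs : ℝ≥0∞)) ^ (-a) ≤ 2 * EJ ^ (-a) := half_bound hn1 ha0.le ha1.le
        have e2 : (((i+j).natAbs : ℝ≥0∞)) ^ (-b) ≤ 2 * EJ ^ (-b) := half_bound hn2 hb0.le hb1.le
        calc (((i-j).natAbs : ℝ≥0∞)) ^ (-a) * (((i+j).natAbs : ℝ≥0∞)) ^ (-b) * wZ i ^ (-c)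
            ≤ (2 * EJ ^ (-a)) * (2 * EJ ^ (-b)) * wZ i ^ (-c) := by gcongr
          _ = 4 * EJ^(-a-b) * wZ i ^ (-c) := by
              rw [show -a-b = (-a) + (-b) by ring, ENNReal.rpow_add _ _ hEJ0 hEJt]
              ring
          _ = t3 i := by simp only [ht3]; rw [if_pos (show i.natAbs ≤ j.natAbs by omega)]
          _ ≤ t1 i + t2 i + t3 i + t4 i + t5 i := by
              exact (le_add_self.trans le_self_add).trans le_self_add
      by_cases h4 : i.natAbs ≤ 2*j.natAbs
      · -- region 4
        have hn1 : j.natAbs ≤ 2 * (i-j).natAbs := by omega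
        have hn2 : j.natAbs ≤ 2 * (i+j).natAbs := by omega
        have hnm : j.natAbs ≤ 2 * (max i.natAbs 1) := by omega
        have e1 : (((i-j).natAbs : ℝ≥0∞)) ^ (-a) ≤ 2 * EJ ^ (-a) := half_bound hn1 ha0.le ha1.le
        have e2 : (((i+j).natAbs : ℝ≥0∞)) ^ (-b) ≤ 2 * EJ ^ (-b) := half_bound hn2 hb0.le hb1.le
        have e3 : wZ i ^ (-c) ≤ 2 * EJ ^ (-c) := by
          rw [hwi]; exact half_bound hnm hc0.le hc1.le
        calc (((i-j).natAbs : ℝ≥0∞)) ^ (-a) * (((i+j).natAbs : ℝ≥0∞)) ^ (-b) * wZ i ^ (-c)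
            ≤ (2 * EJ ^ (-a)) * (2 * EJ ^ (-b)) * (2 * EJ ^ (-c)) := by gcongr
          _ = 8 * EJ^(-(a+b+c)) * 1 := by
              rw [show -(a+b+c) = (-a) + (-b) + (-c) by ring,
                ENNReal.rpow_add _ _ hEJ0 hEJt, ENNReal.rpow_add _ _ hEJ0 hEJt]
              ring
          _ = t4 i := by simp only [ht4]; rw [if_pos h4]
          _ ≤ t1 i + t2 i + t3 i + t4 i + t5 i := le_add_self.trans le_self_add
      · -- region 5
        push_neg at h4
        have hi0 : i ≠ 0 := by omega
        have hn1 : i.natAbs ≤ 2 * (i-j).natAbs := by omega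
        have hn2 : i.natAbs ≤ 2 * (i+j).natAbs := by omega
        have hNi0 : ((i.natAbs : ℝ≥0∞)) ≠ 0 := by simp; omega
        have hNit : ((i.natAbs : ℝ≥0∞)) ≠ ∞ := ENNReal.natCast_ne_top _
        have e1 : (((i-j).natAbs : ℝ≥0∞)) ^ (-a) ≤ 2 * ((i.natAbs : ℝ≥0∞)) ^ (-a) :=
          half_bound hn1 ha0.le ha1.le
        have e2 : (((i+j).natAbs : ℝ≥0∞)) ^ (-b) ≤ 2 * ((i.natAbs : ℝ≥0∞)) ^ (-b) :=
          half_bound hn2 hb0.le hb1.le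
        calc (((i-j).natAbs : ℝ≥0∞)) ^ (-a) * (((i+j).natAbs : ℝ≥0∞)) ^ (-b) * wZ i ^ (-c)
            ≤ (2 * ((i.natAbs : ℝ≥0∞)) ^ (-a)) * (2 * ((i.natAbs : ℝ≥0∞)) ^ (-b))
              * ((i.natAbs : ℝ≥0∞)) ^ (-c) := by
              rw [wZ_of_ne_zero hi0]; gcongr
          _ = 4 * ((i.natAbs : ℝ≥0∞)) ^ (-(a+b+c)) := by
              rw [show -(a+b+c) = (-a) + (-b) + (-c) by ring,
                ENNReal.rpow_add _ _ hNi0 hNit, ENNReal.rpow_add _ _ hNi0 hNit]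
              ring
          _ = t5 i := by simp only [ht5]; rw [if_pos h4]
          _ ≤ t1 i + t2 i + t3 i + t4 i + t5 i := le_add_self
    have hofg : ∀ (n : ℕ), 1 ≤ n → ∀ (E D : ℝ),
        ENNReal.ofReal ((n:ℝ)^E / D) = ((n:ℝ≥0∞))^E * ENNReal.ofReal (1/D) := by
      intro n hn E D
      rw [div_eq_mul_one_div, ENNReal.ofReal_mul (Real.rpow_nonneg (Nat.cast_nonneg _) _),
        ← coe_nat_rpow_eq hn]
    have hS1 : ∑' i, t1 i ≤ 4*CA*EJ^(1-(a+b+c)) := by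
      calc ∑' i, t1 i
          = 2*EJ^(-b-c) * ∑' i : ℤ, (if 1 ≤ (i-j).natAbs ∧ (i-j).natAbs ≤ j.natAbs then
              (((i-j).natAbs : ℝ≥0∞)) ^ (-a) else 0) := by
            simp only [ht1]; exact ENNReal.tsum_mul_left
        _ ≤ 2*EJ^(-b-c) * (2 * ENNReal.ofReal (((j.natAbs:ℕ):ℝ)^(1-a)/(1-a))) :=
            mul_le_mul_right (G1 ha0 ha1 j j.natAbs) _
        _ = 2*EJ^(-b-c) * (2 * (EJ^(1-a) * CA)) := by rw [hofg j.natAbs hJ1, hCA]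
        _ = 4*CA*(EJ^(-b-c) * EJ^(1-a)) := by ring
        _ = 4*CA*EJ^(1-(a+b+c)) := by
            rw [← ENNReal.rpow_add _ _ hEJ0 hEJt, show (-b-c)+(1-a) = 1-(a+b+c) by ring]
    have hS2 : ∑' i, t2 i ≤ 4*CB*EJ^(1-(a+b+c)) := by
      have hrw : (∑' i : ℤ, (if 1 ≤ (i+j).natAbs ∧ (i+j).natAbs ≤ j.natAbs then
            (((i+j).natAbs : ℝ≥0∞)) ^ (-b) else 0))
          = ∑' i : ℤ, (if 1 ≤ (i-(-j)).natAbs ∧ (i-(-j)).natAbs ≤ j.natAbs then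
            (((i-(-j)).natAbs : ℝ≥0∞)) ^ (-b) else 0) :=
        tsum_congr fun i => by rw [sub_neg_eq_add]
      calc ∑' i, t2 i
          = 2*EJ^(-a-c) * ∑' i : ℤ, (if 1 ≤ (i+j).natAbs ∧ (i+j).natAbs ≤ j.natAbs then
              (((i+j).natAbs : ℝ≥0∞)) ^ (-b) else 0) := by
            simp only [ht2]; exact ENNReal.tsum_mul_left
        _ ≤ 2*EJ^(-a-c) * (2 * ENNReal.ofReal (((j.natAbs:ℕ):ℝ)^(1-b)/(1-b))) := by
            rw [hrw]; exact mul_le_mul_right (G1 hb0 hb1 (-j) j.natAbs) _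
        _ = 2*EJ^(-a-c) * (2 * (EJ^(1-b) * CB)) := by rw [hofg j.natAbs hJ1, hCB]
        _ = 4*CB*(EJ^(-a-c) * EJ^(1-b)) := by ring
        _ = 4*CB*EJ^(1-(a+b+c)) := by
            rw [← ENNReal.rpow_add _ _ hEJ0 hEJt, show (-a-c)+(1-b) = 1-(a+b+c) by ring]
    have h1le : (1:ℝ≥0∞) ≤ EJ^(1-c) := by
      calc (1:ℝ≥0∞) = (1:ℝ≥0∞)^(1-c) := (ENNReal.one_rpow _).symm
        _ ≤ EJ^(1-c) := ENNReal.rpow_le_rpow hEJ1 (by linarith)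
    have hS3 : ∑' i, t3 i ≤ 8*(1+CC)*EJ^(1-(a+b+c)) := by
      calc ∑' i, t3 i
          = 4*EJ^(-a-b) * ∑' i : ℤ, (if i.natAbs ≤ j.natAbs then wZ i ^ (-c) else 0) := by
            simp only [ht3]; exact ENNReal.tsum_mul_left
        _ ≤ 4*EJ^(-a-b) * (2 * (1 + ENNReal.ofReal (((j.natAbs:ℕ):ℝ)^(1-c)/(1-c)))) :=
            mul_le_mul_right (G3 hc0 hc1 j.natAbs) _
        _ = 4*EJ^(-a-b) * (2 * (1 + EJ^(1-c) * CC)) := by rw [hofg j.natAbs hJ1, hCC]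
        _ ≤ 4*EJ^(-a-b) * (2 * (EJ^(1-c) + EJ^(1-c) * CC)) := by
            exact mul_le_mul_right (mul_le_mul_right (add_le_add h1le le_rfl) _) _
        _ = 8*(1+CC)*(EJ^(-a-b) * EJ^(1-c)) := by ring
        _ = 8*(1+CC)*EJ^(1-(a+b+c)) := by
            rw [← ENNReal.rpow_add _ _ hEJ0 hEJt, show (-a-b)+(1-c) = 1-(a+b+c) by ring]
    have hS4 : ∑' i, t4 i ≤ 48*EJ^(1-(a+b+c)) := by
      have hcast : ((2*j.natAbs : ℕ) : ℝ≥0∞) = 2*EJ := by push_cast; ring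
      have hcount : (∑' i : ℤ, (if i.natAbs ≤ 2*j.natAbs then (1:ℝ≥0∞) else 0)) ≤ 6*EJ := by
        refine (G4 (2*j.natAbs)).trans ?_
        rw [hcast]
        calc (2:ℝ≥0∞) * (2*EJ + 1) = 4*EJ + 2*1 := by ring
          _ ≤ 4*EJ + 2*EJ := by exact add_le_add le_rfl (mul_le_mul_right hEJ1 _)
          _ = 6*EJ := by ring
      calc ∑' i, t4 i
          = 8*EJ^(-(a+b+c)) * ∑' i : ℤ, (if i.natAbs ≤ 2*j.natAbs then (1:ℝ≥0∞) else 0) := by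
            simp only [ht4]; exact ENNReal.tsum_mul_left
        _ ≤ 8*EJ^(-(a+b+c)) * (6*EJ) := mul_le_mul_right hcount _
        _ = 48*(EJ^(-(a+b+c)) * EJ^(1:ℝ)) := by rw [ENNReal.rpow_one]; ring
        _ = 48*EJ^(1-(a+b+c)) := by
            rw [← ENNReal.rpow_add _ _ hEJ0 hEJt, show (-(a+b+c))+(1:ℝ) = 1-(a+b+c) by ring]
    have hS5 : ∑' i, t5 i ≤ 8*CS*EJ^(1-(a+b+c)) := by
      have h2J : 1 ≤ 2*j.natAbs := by omega
      have hmono : ((2*j.natAbs : ℕ) : ℝ≥0∞)^(1-(a+b+c)) ≤ EJ^(1-(a+b+c)) := by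
        rw [show (1-(a+b+c)) = -(a+b+c-1) by ring]
        refine rpow_neg_antitone ?_ (by linarith)
        exact_mod_cast Nat.cast_le.mpr (by omega : j.natAbs ≤ 2*j.natAbs)
      calc ∑' i, t5 i
          = 4 * ∑' i : ℤ, (if 2*j.natAbs < i.natAbs then ((i.natAbs : ℝ≥0∞)) ^ (-(a+b+c)) else 0) := by
            simp only [ht5]; exact ENNReal.tsum_mul_left
        _ ≤ 4 * (2 * ENNReal.ofReal (((2*j.natAbs:ℕ):ℝ)^(1-(a+b+c))/(a+b+c-1))) :=
            mul_le_mul_right (G5 hσ (2*j.natAbs) h2J) _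
        _ = 8 * (((2*j.natAbs:ℕ):ℝ≥0∞)^(1-(a+b+c)) * CS) := by
            rw [hofg (2*j.natAbs) h2J, hCS]; ring
        _ ≤ 8 * (EJ^(1-(a+b+c)) * CS) := by
            exact mul_le_mul_right (mul_le_mul_left hmono _) _
        _ = 8*CS*EJ^(1-(a+b+c)) := by ring
    calc ∑' i : ℤ, (if i = j ∨ i = -j then 0 else
          (((i-j).natAbs : ℝ≥0∞)) ^ (-a) * (((i+j).natAbs : ℝ≥0∞)) ^ (-b)) * wZ i ^ (-c)
        ≤ ∑' i, (t1 i + t2 i + t3 i + t4 i + t5 i) := ENNReal.tsum_le_tsum hpt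
      _ = (∑' i, t1 i) + (∑' i, t2 i) + (∑' i, t3 i) + (∑' i, t4 i) + (∑' i, t5 i) := by
          simp only [ENNReal.tsum_add]
      _ ≤ 4*CA*EJ^(1-(a+b+c)) + 4*CB*EJ^(1-(a+b+c)) + 8*(1+CC)*EJ^(1-(a+b+c))
            + 48*EJ^(1-(a+b+c)) + 8*CS*EJ^(1-(a+b+c)) :=
          add_le_add (add_le_add (add_le_add (add_le_add hS1 hS2) hS3) hS4) hS5
      _ = (4*CA + 4*CB + 8*(1+CC) + 48 + 8*CS) * EJ^(1-(a+b+c)) := by ring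
      _ ≤ (4*CA + 4*CB + 8*(1+CC) + 48 + 8*CS + (2 + 2*CS)) * EJ^(1-(a+b+c)) :=
          mul_le_mul_left le_self_add _
      _ = (4*CA + 4*CB + 8*(1+CC) + 48 + 8*CS + (2 + 2*CS)) * wZ j ^ (1-(a+b+c)) := by
          rw [hwj]
lemma nat_rpow_neg_le_one {d : ℕ} (hd : 1 ≤ d) {e : ℝ} (he : 0 ≤ e) :
    ((d:ℝ≥0∞)) ^ (-e) ≤ 1 := by
  have h := rpow_neg_antitone (show (1:ℝ≥0∞) ≤ (d:ℝ≥0∞) by exact_mod_cast hd) he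
  simpa [ENNReal.one_rpow] using h


end Stmt6Aux

open Stmt6Aux


lemma eTker_repr (α β : ℝ) (i j : ℤ) :
    eTker α β i j = if i = j ∨ i = -j then 0 else
      (((i-j).natAbs : ℝ≥0∞)) ^ (-α) * (((i+j).natAbs : ℝ≥0∞)) ^ (-β) := by
  rw [eTker, Tker]
  split_ifs with h
  · simp
  · push_neg at h
    have hd1 : (0:ℝ) < ((i-j).natAbs : ℝ) := by
      have h1 : (i-j).natAbs ≠ 0 := by omega
      exact_mod_cast Nat.pos_of_ne_zero h1
    have hd2 : (0:ℝ) < ((i+j).natAbs : ℝ) := by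
      have h1 : (i+j).natAbs ≠ 0 := by omega
      exact_mod_cast Nat.pos_of_ne_zero h1
    have e1 : |(i:ℝ) - (j:ℝ)| = ((i-j).natAbs : ℝ) := by
      rw [Nat.cast_natAbs, Int.cast_abs]
      push_cast
      ring_nf
    have e2 : |(i:ℝ) + (j:ℝ)| = ((i+j).natAbs : ℝ) := by
      rw [Nat.cast_natAbs, Int.cast_abs]
      push_cast
      ring_nf
    have e3 : 1 / (((i-j).natAbs:ℝ)^α * ((i+j).natAbs:ℝ)^β)
        = ((i-j).natAbs:ℝ)^(-α) * ((i+j).natAbs:ℝ)^(-β) := by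
      rw [Real.rpow_neg hd1.le, Real.rpow_neg hd2.le, one_div, mul_inv]
    rw [e1, e2, e3, ENNReal.ofReal_mul (Real.rpow_nonneg hd1.le _),
      ← ENNReal.ofReal_rpow_of_pos hd1, ← ENNReal.ofReal_rpow_of_pos hd2,
      ENNReal.ofReal_natCast, ENNReal.ofReal_natCast]

lemma eTker_rpow (α β : ℝ) (i j : ℤ) {e : ℝ} (he : 0 < e) :
    (eTker α β i j) ^ e = if i = j ∨ i = -j then 0 else
      (((i-j).natAbs : ℝ≥0∞)) ^ (-(α*e)) * (((i+j).natAbs : ℝ≥0∞)) ^ (-(β*e)) := by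
  rw [eTker_repr]
  split_ifs with h
  · exact ENNReal.zero_rpow_of_pos he
  · rw [ENNReal.mul_rpow_of_nonneg _ _ he.le, ← ENNReal.rpow_mul, ← ENNReal.rpow_mul,
      show (-α)*e = -(α*e) from by ring, show (-β)*e = -(β*e) from by ring]

/-- **`ℓ^p(ℤ) → ℓ^q(ℤ)` boundedness of `T_{α,β}` for `1 < p < γ⁻¹`.**
Let `0 ≤ γ < 1`, `α, β > 0` with `α + β = 1 - γ`, `1 < p < γ⁻¹` (expressed as `p·γ < 1`,
so that `γ⁻¹ = ∞` when `γ = 0`) and `1/q = 1/p - γ`. Then there is `C > 0`, depending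
only on `α, β, p, q`, such that for all `b ∈ ℓ^p(ℤ)`:
`(∑_j (∑_{i ≠ ±j} |b(i)|/(|i-j|^α |i+j|^β))^q)^{1/q} ≤ C ‖b‖_{ℓ^p(ℤ)}`. -/
theorem stmt6 (γ α β p q : ℝ) (hγ0 : 0 ≤ γ) (hγ1 : γ < 1) (hα : 0 < α) (hβ : 0 < β)
    (hαβ : α + β = 1 - γ) (hp : 1 < p) (hpγ : p * γ < 1) (hq : 1 / q = 1 / p - γ) :
    ∃ C : ℝ, 0 < C ∧ ∀ b : ℤ → ℂ, Summable (fun i : ℤ => ‖b i‖ ^ p) →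
      (∑' j : ℤ, (∑' i : ℤ, eTker α β i j * (‖b i‖₊ : ℝ≥0∞)) ^ q) ^ (1 / q) ≤
        ENNReal.ofReal C * (∑' i : ℤ, (‖b i‖₊ : ℝ≥0∞) ^ p) ^ (1 / p) := by
  -- ## basic exponent facts
  have hp0 : (0:ℝ) < p := lt_trans one_pos hp
  have hpne : p ≠ 0 := hp0.ne'
  have hq0 : (0:ℝ) < 1/q := by
    rw [hq]
    have h1 : γ*p < 1 := by linarith [hpγ]
    have h2 : γ < 1/p := by rw [lt_div_iff₀ hp0]; linarith
    linarith
  have hqpos : (0:ℝ) < q := one_div_pos.mp hq0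
  have hqne : q ≠ 0 := hqpos.ne'
  have hpq : p ≤ q := by
    have h1 : 1/q ≤ 1/p := by rw [hq]; linarith
    have h3 : (p*q)*(1/q) ≤ (p*q)*(1/p) := mul_le_mul_of_nonneg_left h1 (mul_pos hp0 hqpos).le
    have e1 : (p*q)*(1/q) = p := by field_simp
    have e2 : (p*q)*(1/p) = q := by field_simp
    linarith
  obtain ⟨p', hp'def⟩ : ∃ r : ℝ, r = p.conjExponent := ⟨_, rfl⟩
  have hpc : p.HolderConjugate p' := hp'def ▸ Real.HolderConjugate.conjExponent hp
  have hp'1 : 1 < p' := hpc.symm.lt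
  have hp'0 : (0:ℝ) < p' := lt_trans one_pos hp'1
  have hp'ne : p' ≠ 0 := hp'0.ne'
  have hinv : 1/p + 1/p' = 1 := by
    have h := hpc.inv_add_inv_eq_one
    rw [inv_eq_one_div, inv_eq_one_div] at h
    exact h
  obtain ⟨s, hsdef⟩ : ∃ r : ℝ, r = 1 - γ := ⟨_, rfl⟩
  have hs0 : 0 < s := by rw [hsdef]; linarith
  have hsum : 1/p' + 1/q = s := by rw [hq, hsdef]; linarith
  obtain ⟨M, hM⟩ : ∃ r : ℝ, r = max α β := ⟨_, rfl⟩
  have hM0 : 0 < M := by rw [hM]; exact lt_max_of_lt_left hα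
  have hMs : M < s := by
    rw [hM, hsdef]
    apply max_lt <;> linarith
  -- ## choice of t
  obtain ⟨lo, hlo⟩ : ∃ r : ℝ, r = max (1 - 1/(q*M)) 0 := ⟨_, rfl⟩
  obtain ⟨hi, hhi⟩ : ∃ r : ℝ, r = min (1/(p'*M)) 1 := ⟨_, rfl⟩
  have hqM : (0:ℝ) < 1/(q*M) := by
    apply one_div_pos.mpr
    exact mul_pos hqpos hM0
  have hpM : (0:ℝ) < 1/(p'*M) := by
    apply one_div_pos.mpr
    exact mul_pos hp'0 hM0
  have hkey : 1 < 1/(p'*M) + 1/(q*M) := by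
    have e : 1/(p'*M) + 1/(q*M) = (1/p' + 1/q)/M := by
      rw [add_div, div_div, div_div]
    rw [e, hsum]
    exact (one_lt_div hM0).mpr hMs
  have hlohi : lo < hi := by
    rw [hlo, hhi]
    apply max_lt
    · exact lt_min (by linarith) (by linarith)
    · exact lt_min hpM one_pos
  obtain ⟨t, htdef⟩ : ∃ r : ℝ, r = (lo + hi)/2 := ⟨_, rfl⟩
  have hlot : lo < t := by rw [htdef]; linarith
  have hthi : t < hi := by rw [htdef]; linarith
  have ht0 : 0 < t := lt_of_le_of_lt (hlo ▸ le_max_right (1 - 1/(q*M)) 0) hlot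
  have ht1 : t < 1 := lt_of_lt_of_le hthi (hhi ▸ min_le_right (1/(p'*M)) 1)
  have h1t0 : (0:ℝ) < 1 - t := by linarith
  have htp' : t * (p'*M) < 1 := by
    have h1 : t < 1/(p'*M) := lt_of_lt_of_le hthi (hhi ▸ min_le_left (1/(p'*M)) 1)
    rwa [lt_div_iff₀ (mul_pos hp'0 hM0)] at h1
  have htq : (1-t) * (q*M) < 1 := by
    have h1 : 1 - 1/(q*M) < t := lt_of_le_of_lt (hlo ▸ le_max_left (1 - 1/(q*M)) 0) hlot
    have h2 : 1 - t < 1/(q*M) := by linarith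
    rwa [lt_div_iff₀ (mul_pos hqpos hM0)] at h2
  -- ## choice of y, x
  obtain ⟨lo2, hlo2⟩ : ∃ r : ℝ, r = max (1/q - (1-t)*s) 0 := ⟨_, rfl⟩
  obtain ⟨hi2, hhi2⟩ : ∃ r : ℝ, r = min (1/q) (t*s) := ⟨_, rfl⟩
  have hq_lt_s : 1/q < s := by
    have h1 : 1/p < 1 := by rw [div_lt_one hp0]; exact hp
    rw [hq, hsdef]; linarith
  have hts_pos : 0 < t*s := mul_pos ht0 hs0
  have h1ts_pos : 0 < (1-t)*s := mul_pos h1t0 hs0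
  have hts_sum : t*s + (1-t)*s = s := by ring
  have hlohi2 : lo2 < hi2 := by
    rw [hlo2, hhi2]
    apply max_lt
    · refine lt_min (sub_lt_self _ h1ts_pos) ?_
      linarith [hq_lt_s, hts_sum]
    · exact lt_min hq0 hts_pos
  obtain ⟨y, hydef⟩ : ∃ r : ℝ, r = (lo2 + hi2)/2 := ⟨_, rfl⟩
  have hlo2y : lo2 < y := by rw [hydef]; linarith
  have hyhi2 : y < hi2 := by rw [hydef]; linarith
  have hy0 : 0 < y := lt_of_le_of_lt (hlo2 ▸ le_max_right (1/q - (1-t)*s) 0) hlo2y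
  have hyq : y < 1/q := lt_of_lt_of_le hyhi2 (hhi2 ▸ min_le_left (1/q) (t*s))
  have hyts : y < t*s := lt_of_lt_of_le hyhi2 (hhi2 ▸ min_le_right (1/q) (t*s))
  have hy1 : 1/q - (1-t)*s < y := lt_of_le_of_lt (hlo2 ▸ le_max_left (1/q - (1-t)*s) 0) hlo2y
  obtain ⟨x, hxdef⟩ : ∃ r : ℝ, r = (1-t)*s + y - 1/q := ⟨_, rfl⟩
  have hx0 : 0 < x := by rw [hxdef]; linarith
  have hp'q : s - 1/q = 1/p' := by linarith
  have hxp' : x < 1/p' := by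
    rw [hxdef]; linarith
  -- ## exponent packages
  have hA1 : 0 < α*(t*p') := mul_pos hα (mul_pos ht0 hp'0)
  have hA1' : α*(t*p') < 1 := by
    have h1 : α*(t*p') ≤ M*(t*p') := by
      rw [hM]; exact mul_le_mul_of_nonneg_right (le_max_left α β) (mul_pos ht0 hp'0).le
    have h2 : M*(t*p') = t*(p'*M) := by ring
    linarith
  have hB1 : 0 < β*(t*p') := mul_pos hβ (mul_pos ht0 hp'0)
  have hB1' : β*(t*p') < 1 := by
    have h1 : β*(t*p') ≤ M*(t*p') := by
      rw [hM]; exact mul_le_mul_of_nonneg_right (le_max_right α β) (mul_pos ht0 hp'0).le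
    have h2 : M*(t*p') = t*(p'*M) := by ring
    linarith
  have hX1 : 0 < x*p' := mul_pos hx0 hp'0
  have hX1' : x*p' < 1 := by
    have h1 : x*p' < (1/p')*p' := mul_lt_mul_of_pos_right hxp' hp'0
    rwa [one_div_mul_cancel hp'ne] at h1
  have hσ1eq : α*(t*p') + β*(t*p') + x*p' = 1 + p'*y := by
    have h3 : p' * (1/p') = 1 := mul_one_div_cancel hp'ne
    calc α*(t*p') + β*(t*p') + x*p' = p'*((α+β)*t + x) := by ring
      _ = p'*(s*t + x) := by rw [hαβ, ← hsdef]
      _ = p'*(s - 1/q + y) := by rw [hxdef]; ring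
      _ = p'*(1/p' + y) := by rw [hp'q]
      _ = 1 + p'*y := by rw [mul_add, h3]
  have hσ1 : 1 < α*(t*p') + β*(t*p') + x*p' := by
    rw [hσ1eq]
    have := mul_pos hp'0 hy0
    linarith
  have hA2 : 0 < α*((1-t)*q) := mul_pos hα (mul_pos h1t0 hqpos)
  have hA2' : α*((1-t)*q) < 1 := by
    have h1 : α*((1-t)*q) ≤ M*((1-t)*q) := by
      rw [hM]; exact mul_le_mul_of_nonneg_right (le_max_left α β) (mul_pos h1t0 hqpos).le
    have h2 : M*((1-t)*q) = (1-t)*(q*M) := by ring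
    linarith
  have hB2 : 0 < β*((1-t)*q) := mul_pos hβ (mul_pos h1t0 hqpos)
  have hB2' : β*((1-t)*q) < 1 := by
    have h1 : β*((1-t)*q) ≤ M*((1-t)*q) := by
      rw [hM]; exact mul_le_mul_of_nonneg_right (le_max_right α β) (mul_pos h1t0 hqpos).le
    have h2 : M*((1-t)*q) = (1-t)*(q*M) := by ring
    linarith
  have hY2 : 0 < y*q := mul_pos hy0 hqpos
  have hY2' : y*q < 1 := by
    have h1 : y*q < (1/q)*q := mul_lt_mul_of_pos_right hyq hqpos
    rwa [one_div_mul_cancel hqne] at h1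
  have hσ2eq : α*((1-t)*q) + β*((1-t)*q) + y*q = 1 + q*x := by
    have h3 : q * (1/q) = 1 := mul_one_div_cancel hqne
    calc α*((1-t)*q) + β*((1-t)*q) + y*q = q*((α+β)*(1-t) + y) := by ring
      _ = q*(s*(1-t) + y) := by rw [hαβ, ← hsdef]
      _ = q*(x + 1/q) := by rw [hxdef]; ring
      _ = 1 + q*x := by rw [mul_add, h3]; ring
  have hσ2 : 1 < α*((1-t)*q) + β*((1-t)*q) + y*q := by
    rw [hσ2eq]
    have := mul_pos hqpos hx0
    linarith
  -- ## apply the core estimate twice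
  obtain ⟨C₁, hC₁top, hC₁⟩ := Stmt6Aux.core hA1 hA1' hB1 hB1' hX1 hX1' hσ1
  obtain ⟨C₂, hC₂top, hC₂⟩ := Stmt6Aux.core hA2 hA2' hB2 hB2' hY2 hY2' hσ2
  obtain ⟨D, hD⟩ : ∃ d : ℝ≥0∞, d = C₁^(1/p') * C₂^(1/q) := ⟨_, rfl⟩
  have hDtop : D ≠ ∞ := by
    rw [hD]
    exact ENNReal.mul_ne_top
      (ENNReal.rpow_ne_top_of_nonneg (le_of_lt (one_div_pos.mpr hp'0)) hC₁top)
      (ENNReal.rpow_ne_top_of_nonneg hq0.le hC₂top)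
  refine ⟨D.toReal + 1, by positivity, fun b _ => ?_⟩
  have hDle : D ≤ ENNReal.ofReal (D.toReal + 1) := by
    rw [ENNReal.ofReal_add ENNReal.toReal_nonneg zero_le_one, ENNReal.ofReal_toReal hDtop]
    simp
  set B : ℤ → ℝ≥0∞ := fun i => (‖b i‖₊ : ℝ≥0∞) with hB
  set K : ℤ → ℤ → ℝ≥0∞ := fun i j => eTker α β i j with hK
  -- kernel finiteness
  have hKle1 : ∀ i j, K i j ≤ 1 := by
    intro i j
    simp only [hK]
    rw [eTker_repr]
    split_ifs with h
    · exact zero_le_one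
    · push_neg at h
      calc (((i-j).natAbs : ℝ≥0∞)) ^ (-α) * (((i+j).natAbs : ℝ≥0∞)) ^ (-β)
          ≤ 1 * 1 := mul_le_mul' (nat_rpow_neg_le_one (by omega) hα.le)
            (nat_rpow_neg_le_one (by omega) hβ.le)
        _ = 1 := one_mul 1
  have hKfin : ∀ i j, K i j ≠ ∞ := fun i j =>
    ne_top_of_le_ne_top ENNReal.one_ne_top (hKle1 i j)
  have hr1 : 1 ≤ q/p := by rw [le_div_iff₀ hp0]; linarith
  have hqp_nonneg : (0:ℝ) ≤ q/p := le_trans zero_le_one hr1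
  -- ## step 1 : Hölder in i, with the first factor estimated by `core`
  have hstep1 : ∀ j : ℤ, (∑' i : ℤ, K i j * B i) ≤
      C₁^(1/p') * (Stmt6Aux.wZ j ^ (-y) *
        (∑' i : ℤ, (K i j ^ (1-t) * (B i * Stmt6Aux.wZ i ^ x)) ^ p) ^ (1/p)) := by
    intro j
    have hfact : ∀ i, K i j * B i =
        (K i j ^ t * Stmt6Aux.wZ i ^ (-x)) * (K i j ^ (1-t) * (B i * Stmt6Aux.wZ i ^ x)) := by
      intro i
      rcases eq_or_ne (K i j) 0 with h0 | h0
      · rw [h0, ENNReal.zero_rpow_of_pos ht0, ENNReal.zero_rpow_of_pos h1t0]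
        simp
      · have e1 : K i j ^ t * K i j ^ (1-t) = K i j := by
          rw [← ENNReal.rpow_add _ _ h0 (hKfin i j)]
          norm_num
        have e2 : Stmt6Aux.wZ i ^ (-x) * Stmt6Aux.wZ i ^ x = 1 := by
          rw [← ENNReal.rpow_add _ _ (Stmt6Aux.wZ_ne_zero i) (Stmt6Aux.wZ_ne_top i)]
          norm_num
        calc K i j * B i
            = (K i j ^ t * K i j ^ (1-t)) * ((Stmt6Aux.wZ i ^ (-x) * Stmt6Aux.wZ i ^ x) * B i) := by
              rw [e1, e2, one_mul]
          _ = _ := by ring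
    have hhold := Stmt6Aux.tsum_inner_le_Lp_mul_Lq
      (fun i => K i j ^ t * Stmt6Aux.wZ i ^ (-x))
      (fun i => K i j ^ (1-t) * (B i * Stmt6Aux.wZ i ^ x)) hpc.symm
    have hF1 : (∑' i : ℤ, (K i j ^ t * Stmt6Aux.wZ i ^ (-x)) ^ p')
        ≤ C₁ * Stmt6Aux.wZ j ^ (-(y*p')) := by
      have hpw : ∀ i : ℤ, (K i j ^ t * Stmt6Aux.wZ i ^ (-x)) ^ p' =
          (if i = j ∨ i = -j then 0 else
            (((i-j).natAbs : ℝ≥0∞)) ^ (-(α*(t*p'))) * (((i+j).natAbs : ℝ≥0∞)) ^ (-(β*(t*p'))))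
            * Stmt6Aux.wZ i ^ (-(x*p')) := by
        intro i
        rw [ENNReal.mul_rpow_of_nonneg _ _ hp'0.le, ← ENNReal.rpow_mul, ← ENNReal.rpow_mul,
          show (-x)*p' = -(x*p') from by ring]
        congr 1
        simp only [hK]
        exact eTker_rpow α β i j (mul_pos ht0 hp'0)
      rw [tsum_congr hpw]
      have hcore := hC₁ j
      rwa [show (1 - (α*(t*p') + β*(t*p') + x*p')) = -(y*p') from by rw [hσ1eq]; ring] at hcore
    calc (∑' i : ℤ, K i j * B i)
        = ∑' i : ℤ, (K i j ^ t * Stmt6Aux.wZ i ^ (-x))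
            * (K i j ^ (1-t) * (B i * Stmt6Aux.wZ i ^ x)) := tsum_congr hfact
      _ ≤ (∑' i : ℤ, (K i j ^ t * Stmt6Aux.wZ i ^ (-x)) ^ p')^(1/p')
            * (∑' i : ℤ, (K i j ^ (1-t) * (B i * Stmt6Aux.wZ i ^ x)) ^ p)^(1/p) := hhold
      _ ≤ (C₁ * Stmt6Aux.wZ j ^ (-(y*p')))^(1/p')
            * (∑' i : ℤ, (K i j ^ (1-t) * (B i * Stmt6Aux.wZ i ^ x)) ^ p)^(1/p) :=
          mul_le_mul_left (ENNReal.rpow_le_rpow hF1 (one_div_pos.mpr hp'0).le) _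
      _ = C₁^(1/p') * (Stmt6Aux.wZ j ^ (-y) *
            (∑' i : ℤ, (K i j ^ (1-t) * (B i * Stmt6Aux.wZ i ^ x)) ^ p) ^ (1/p)) := by
          rw [ENNReal.mul_rpow_of_nonneg _ _ (one_div_pos.mpr hp'0).le, ← ENNReal.rpow_mul,
            show (-(y*p'))*(1/p') = -y from by field_simp, mul_assoc]
  -- ## step 2 : Minkowski and the second `core` estimate
  set F : ℤ → ℤ → ℝ≥0∞ := fun i j => Stmt6Aux.wZ j ^ (-(y*p)) *
    (K i j ^ ((1-t)*p) * (B i ^ p * Stmt6Aux.wZ i ^ (x*p))) with hF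
  have hGF : ∀ j : ℤ, Stmt6Aux.wZ j ^ (-(y*p)) *
      (∑' i : ℤ, (K i j ^ (1-t) * (B i * Stmt6Aux.wZ i ^ x)) ^ p) = ∑' i : ℤ, F i j := by
    intro j
    have hpw2 : ∀ i : ℤ, (K i j ^ (1-t) * (B i * Stmt6Aux.wZ i ^ x)) ^ p
        = K i j ^ ((1-t)*p) * (B i ^ p * Stmt6Aux.wZ i ^ (x*p)) := by
      intro i
      rw [ENNReal.mul_rpow_of_nonneg _ _ hp0.le, ENNReal.mul_rpow_of_nonneg _ _ hp0.le,
        ← ENNReal.rpow_mul, ← ENNReal.rpow_mul]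
    rw [tsum_congr hpw2]
    exact (ENNReal.tsum_mul_left).symm
  have hperj : ∀ j : ℤ, (∑' i : ℤ, K i j * B i)^q ≤ C₁^(q/p') * (∑' i : ℤ, F i j)^(q/p) := by
    intro j
    refine (ENNReal.rpow_le_rpow (hstep1 j) hqpos.le).trans (le_of_eq ?_)
    rw [ENNReal.mul_rpow_of_nonneg _ _ hqpos.le]
    congr 1
    · rw [← ENNReal.rpow_mul, show (1/p')*q = q/p' from by ring]
    · rw [← hGF j, ENNReal.mul_rpow_of_nonneg _ _ hqpos.le,
        ENNReal.mul_rpow_of_nonneg _ _ hqp_nonneg,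
        ← ENNReal.rpow_mul, ← ENNReal.rpow_mul, ← ENNReal.rpow_mul,
        show (-y)*q = (-(y*p))*(q/p) from by field_simp,
        show (1/p)*q = q/p from by ring]
  -- symmetric form of the kernel, for summation in j
  have hswap : ∀ i j : ℤ,
      (if i = j ∨ i = -j then 0 else
        (((i-j).natAbs : ℝ≥0∞)) ^ (-(α*((1-t)*q))) * (((i+j).natAbs : ℝ≥0∞)) ^ (-(β*((1-t)*q))))
      = (if j = i ∨ j = -i then 0 else
        (((j-i).natAbs : ℝ≥0∞)) ^ (-(α*((1-t)*q))) * (((j+i).natAbs : ℝ≥0∞)) ^ (-(β*((1-t)*q)))) := by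
    intro i j
    have h1 : (i = j ∨ i = -j) ↔ (j = i ∨ j = -i) := by omega
    have h2 : (i-j).natAbs = (j-i).natAbs := by omega
    have h3 : (i+j).natAbs = (j+i).natAbs := by omega
    rw [h2, h3]
    exact if_congr h1 rfl rfl
  have hFr : ∀ i : ℤ, (∑' j : ℤ, (F i j)^(q/p)) ≤ C₂ * B i ^ q := by
    intro i
    have hpw3 : ∀ j : ℤ, (F i j)^(q/p) = (B i ^ q * Stmt6Aux.wZ i ^ (x*q)) *
        ((if j = i ∨ j = -i then 0 else
          (((j-i).natAbs : ℝ≥0∞)) ^ (-(α*((1-t)*q))) * (((j+i).natAbs : ℝ≥0∞)) ^ (-(β*((1-t)*q))))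
          * Stmt6Aux.wZ j ^ (-(y*q))) := by
      intro j
      simp only [hF]
      rw [ENNReal.mul_rpow_of_nonneg _ _ hqp_nonneg, ENNReal.mul_rpow_of_nonneg _ _ hqp_nonneg,
        ENNReal.mul_rpow_of_nonneg _ _ hqp_nonneg,
        ← ENNReal.rpow_mul, ← ENNReal.rpow_mul, ← ENNReal.rpow_mul, ← ENNReal.rpow_mul,
        show (-(y*p))*(q/p) = -(y*q) from by field_simp,
        show ((1-t)*p)*(q/p) = (1-t)*q from by field_simp,
        show p*(q/p) = q from by field_simp,
        show (x*p)*(q/p) = x*q from by field_simp]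
      have hker := eTker_rpow α β i j (mul_pos h1t0 hqpos)
      simp only [hK]
      rw [hker, hswap i j]
      ring
    rw [tsum_congr hpw3, ENNReal.tsum_mul_left]
    have hcore2 := hC₂ i
    rw [show (1 - (α*((1-t)*q) + β*((1-t)*q) + y*q)) = -(x*q) from by rw [hσ2eq]; ring] at hcore2
    calc (B i ^ q * Stmt6Aux.wZ i ^ (x*q)) * ∑' j : ℤ,
          ((if j = i ∨ j = -i then 0 else
            (((j-i).natAbs : ℝ≥0∞)) ^ (-(α*((1-t)*q))) * (((j+i).natAbs : ℝ≥0∞)) ^ (-(β*((1-t)*q))))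
            * Stmt6Aux.wZ j ^ (-(y*q)))
        ≤ (B i ^ q * Stmt6Aux.wZ i ^ (x*q)) * (C₂ * Stmt6Aux.wZ i ^ (-(x*q))) :=
          mul_le_mul_right hcore2 _
      _ = C₂ * (B i ^ q * (Stmt6Aux.wZ i ^ (x*q) * Stmt6Aux.wZ i ^ (-(x*q)))) := by ring
      _ = C₂ * B i ^ q := by
          rw [← ENNReal.rpow_add _ _ (Stmt6Aux.wZ_ne_zero i) (Stmt6Aux.wZ_ne_top i)]
          norm_num
  have hinner : (∑' i : ℤ, (∑' j : ℤ, (F i j)^(q/p))^(1/(q/p)))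
      ≤ C₂^(p/q) * ∑' i : ℤ, B i ^ p := by
    rw [← ENNReal.tsum_mul_left]
    refine ENNReal.tsum_le_tsum fun i => ?_
    have hrinv : (0:ℝ) ≤ 1/(q/p) := by
      apply le_of_lt
      apply one_div_pos.mpr
      exact div_pos hqpos hp0
    refine (ENNReal.rpow_le_rpow (hFr i) hrinv).trans (le_of_eq ?_)
    rw [ENNReal.mul_rpow_of_nonneg _ _ hrinv, ← ENNReal.rpow_mul,
      show (1/(q/p)) = p/q from by rw [one_div_div],
      show q*(p/q) = p from by field_simp]
  have hmain : ∑' j : ℤ, (∑' i : ℤ, K i j * B i)^q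
      ≤ C₁^(q/p') * (C₂ * (∑' i : ℤ, B i ^ p)^(q/p)) := by
    calc ∑' j : ℤ, (∑' i : ℤ, K i j * B i)^q
        ≤ ∑' j : ℤ, C₁^(q/p') * (∑' i : ℤ, F i j)^(q/p) := ENNReal.tsum_le_tsum hperj
      _ = C₁^(q/p') * ∑' j : ℤ, (∑' i : ℤ, F i j)^(q/p) := ENNReal.tsum_mul_left
      _ ≤ C₁^(q/p') * ((∑' i : ℤ, (∑' j : ℤ, (F i j)^(q/p))^(1/(q/p)))^(q/p)) :=
          mul_le_mul_right (Stmt6Aux.tsum_tsum_minkowski F hr1) _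
      _ ≤ C₁^(q/p') * ((C₂^(p/q) * ∑' i : ℤ, B i ^ p)^(q/p)) :=
          mul_le_mul_right (ENNReal.rpow_le_rpow hinner hqp_nonneg) _
      _ = C₁^(q/p') * (C₂ * (∑' i : ℤ, B i ^ p)^(q/p)) := by
          rw [ENNReal.mul_rpow_of_nonneg _ _ hqp_nonneg, ← ENNReal.rpow_mul,
            show (p/q)*(q/p) = 1 from by field_simp, ENNReal.rpow_one]
  -- ## conclusion
  calc (∑' j : ℤ, (∑' i : ℤ, K i j * B i) ^ q) ^ (1/q)
      ≤ (C₁^(q/p') * (C₂ * (∑' i : ℤ, B i ^ p)^(q/p)))^(1/q) :=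
        ENNReal.rpow_le_rpow hmain hq0.le
    _ = D * (∑' i : ℤ, B i ^ p)^(1/p) := by
        rw [ENNReal.mul_rpow_of_nonneg _ _ hq0.le, ENNReal.mul_rpow_of_nonneg _ _ hq0.le,
          ← ENNReal.rpow_mul, ← ENNReal.rpow_mul,
          show (q/p')*(1/q) = 1/p' from by field_simp,
          show (q/p)*(1/q) = 1/p from by field_simp, hD]
        ring
    _ ≤ ENNReal.ofReal (D.toReal + 1) * (∑' i : ℤ, B i ^ p)^(1/p) :=
        mul_le_mul_left hDle _
end

section
/- Let 0 ≤ γ < 1 and α, β > 0 with α + β = 1 − γ. For every 0 < p ≤ ∞ and every 0 < q ≤ 1/(1−γ), the operator T_{α,β} is not bounded from ℓ^p(ℤ) into ℓ^q(ℤ): for the sequence b with b(0) = 1 and b(i) = 0 for i ≠ 0, one has b ∈ ℓ^p(ℤ), (T_{α,β} b)(0) = 0 and (T_{α,β} b)(j) = |j|^{γ−1} for all j ≠ 0, and this sequence T_{α,β} b does not belong to ℓ^q(ℤ). -/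
open scoped ENNReal NNReal BigOperators

/-- The `ℓ^p(ℤ)` "norm" (with values in `[0,∞]`) of a `[0,∞]`-valued sequence,
for `p ∈ (0,∞]`: for finite `p` it is `(∑_i f(i)^p)^{1/p}`, for `p = ∞` it is `sup_i f(i)`. -/
noncomputable def elpNorm (p : ℝ≥0∞) (f : ℤ → ℝ≥0∞) : ℝ≥0∞ :=
  if p = ∞ then ⨆ i, f i else (∑' i : ℤ, f i ^ p.toReal) ^ (1 / p.toReal)

/-- The fractional series operator
`(T_{α,β} b)(j) = ∑_{i ≠ ±j} b(i) / (|i-j|^α |i+j|^β)`. -/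
noncomputable def Tfrac (α β : ℝ) (b : ℤ → ℂ) (j : ℤ) : ℂ :=
  ∑' i : ℤ, (Tker α β i j : ℂ) * b i

/-- **`T_{α,β}` is unbounded from `ℓ^p(ℤ)` to `ℓ^q(ℤ)` for `0 < p ≤ ∞`, `0 < q ≤ 1/(1-γ)`.**
For the sequence `b` with `b(0) = 1` and `b(i) = 0` for `i ≠ 0`: `b ∈ ℓ^p(ℤ)`,
`(T_{α,β} b)(0) = 0`, `(T_{α,β} b)(j) = |j|^{γ-1}` for all `j ≠ 0`, the sequence
`T_{α,β} b` does not belong to `ℓ^q(ℤ)`, and `T_{α,β}` is not bounded from `ℓ^p(ℤ)`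
into `ℓ^q(ℤ)`. -/
theorem stmt8 (γ α β : ℝ) (hγ0 : 0 ≤ γ) (hγ1 : γ < 1) (hα : 0 < α) (hβ : 0 < β)
    (hαβ : α + β = 1 - γ) (p : ℝ≥0∞) (hp : 0 < p) (q : ℝ) (hq0 : 0 < q)
    (hq1 : q ≤ 1 / (1 - γ)) (b : ℤ → ℂ) (hb : b = fun i => if i = 0 then 1 else 0) :
    elpNorm p (fun i => (‖b i‖₊ : ℝ≥0∞)) ≠ ∞ ∧
    Tfrac α β b 0 = 0 ∧
    (∀ j : ℤ, j ≠ 0 → Tfrac α β b j = ((|(j : ℝ)| ^ (γ - 1) : ℝ) : ℂ)) ∧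
    ¬ Summable (fun j : ℤ => ‖Tfrac α β b j‖ ^ q) ∧
    ¬ ∃ C : ℝ≥0∞, 0 < C ∧ C ≠ ∞ ∧ ∀ c : ℤ → ℂ,
        elpNorm p (fun i => (‖c i‖₊ : ℝ≥0∞)) ≠ ∞ →
          (∑' j : ℤ, (‖Tfrac α β c j‖₊ : ℝ≥0∞) ^ q) ^ (1 / q) ≤
            C * elpNorm p (fun i => (‖c i‖₊ : ℝ≥0∞)) := by
  have h1γ : (0:ℝ) < 1 - γ := by linarith
  have hr : -1 ≤ (γ - 1) * q := by
    have h := (le_div_iff₀ h1γ).mp hq1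
    nlinarith
  -- Part 1
  have h1 : elpNorm p (fun i => (‖b i‖₊ : ℝ≥0∞)) ≠ ∞ := by
    by_cases hp' : p = ∞
    · rw [elpNorm, if_pos hp']
      refine ne_top_of_le_ne_top (@ENNReal.one_ne_top) (iSup_le fun i => ?_)
      by_cases h : i = 0 <;> simp [hb, h]
    · have ht : 0 < p.toReal := ENNReal.toReal_pos hp.ne' hp'
      rw [elpNorm, if_neg hp']
      have hsum : (∑' i : ℤ, ((‖b i‖₊ : ℝ≥0∞)) ^ p.toReal) = 1 := by
        rw [tsum_eq_single 0 (fun i hi => by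
          simp [hb, hi, ENNReal.zero_rpow_of_pos ht])]
        simp [hb]
      rw [hsum, ENNReal.one_rpow]
      exact ENNReal.one_ne_top
  -- Part 2
  have h2 : Tfrac α β b 0 = 0 := by
    unfold Tfrac
    have hz : ∀ i : ℤ, (Tker α β i 0 : ℂ) * b i = 0 := by
      intro i
      by_cases h : i = 0
      · simp [h, Tker]
      · simp [hb, h]
    rw [tsum_congr hz, tsum_zero]
  -- Part 3
  have h3 : ∀ j : ℤ, j ≠ 0 → Tfrac α β b j = ((|(j : ℝ)| ^ (γ - 1) : ℝ) : ℂ) := by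
    intro j hj
    have hjR : ((j:ℝ)) ≠ 0 := Int.cast_ne_zero.mpr hj
    have habs : (0:ℝ) < |(j:ℝ)| := abs_pos.mpr hjR
    unfold Tfrac
    rw [tsum_eq_single 0 (fun i hi => by simp [hb, hi])]
    have hker : Tker α β 0 j = |(j:ℝ)| ^ (γ - 1) := by
      rw [Tker, if_neg (by
        rintro (h | h)
        · exact hj h.symm
        · exact hj (by omega))]
      have h0 : |((0:ℤ):ℝ) - (j:ℝ)| = |(j:ℝ)| := by
        simp [abs_neg]
      have h0' : |((0:ℤ):ℝ) + (j:ℝ)| = |(j:ℝ)| := by simp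
      rw [h0, h0', ← Real.rpow_add habs]
      have hexp : γ - 1 = -(α + β) := by linarith
      rw [hexp, Real.rpow_neg (abs_nonneg _), one_div]
    simp [hb, hker]
  -- Part 4
  have h4 : ¬ Summable (fun j : ℤ => ‖Tfrac α β b j‖ ^ q) := by
    intro hs
    have hs' : Summable (fun n : ℕ => ‖Tfrac α β b (n:ℤ)‖ ^ q) :=
      hs.comp_injective (fun a b h => by exact_mod_cast h)
    have hmono : ∀ n : ℕ, 1/(n:ℝ) ≤ ‖Tfrac α β b (n:ℤ)‖ ^ q := by
      intro n
      rcases Nat.eq_zero_or_pos n with h0 | hpos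
      · subst h0
        simp [h2, Real.zero_rpow hq0.ne']
      · have hne : ((n:ℤ)) ≠ 0 := by exact_mod_cast hpos.ne'
        have h1n : (1:ℝ) ≤ (n:ℝ) := by exact_mod_cast hpos
        rw [h3 (n:ℤ) hne]
        have hnn : |(((n:ℤ)):ℝ)| = (n:ℝ) := by
          push_cast
          exact abs_of_nonneg (by positivity)
        rw [Complex.norm_real, Real.norm_eq_abs]
        rw [hnn, abs_of_nonneg (Real.rpow_nonneg (by positivity) _),
          ← Real.rpow_mul (by positivity)]
        calc (1:ℝ)/(n:ℝ) = (n:ℝ) ^ (-1:ℝ) := by rw [Real.rpow_neg_one, one_div]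
          _ ≤ (n:ℝ) ^ ((γ-1)*q) := Real.rpow_le_rpow_of_exponent_le h1n hr
    exact Real.not_summable_one_div_natCast
      (Summable.of_nonneg_of_le (fun n => by positivity) hmono hs')
  refine ⟨h1, h2, h3, h4, ?_⟩
  rintro ⟨C, hC0, hCtop, hC⟩
  have hle := hC b h1
  have hfin : (∑' j : ℤ, (‖Tfrac α β b j‖₊ : ℝ≥0∞) ^ q) ≠ ∞ := by
    intro htop
    rw [htop, ENNReal.top_rpow_of_pos (by positivity)] at hle
    exact ENNReal.mul_ne_top hCtop h1 (top_le_iff.mp hle)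
  have heq : ∀ j : ℤ, ((‖Tfrac α β b j‖₊ ^ q : ℝ≥0) : ℝ≥0∞)
      = (‖Tfrac α β b j‖₊ : ℝ≥0∞) ^ q :=
    fun j => ENNReal.coe_rpow_of_nonneg _ hq0.le
  have hsnn : Summable (fun j : ℤ => (‖Tfrac α β b j‖₊ ^ q : ℝ≥0)) := by
    apply ENNReal.tsum_coe_ne_top_iff_summable.mp
    rw [tsum_congr heq]
    exact hfin
  exact h4 (by simpa [NNReal.coe_rpow, coe_nnnorm] using NNReal.summable_coe.mpr hsnn)
end

section
/- Let 0 < γ < 1 and α, β > 0 with α + β = 1 − γ. Define the sequence b by b(i) = 0 for |i| ≤ 1 and b(i) = 1/(|i|^γ log|i|) for |i| ≥ 2. Then b ∈ ℓ^p(ℤ) for every p with 1/γ ≤ p ≤ ∞, and for every j ∈ ℤ the series ∑_{i∈ℤ, i≠j, i≠−j} b(i)/(|i−j|^α |i+j|^β) diverges to +∞ (the family is not summable). Consequently T_{α,β} is not bounded from ℓ^p(ℤ) into ℓ^q(ℤ) for any 1/γ ≤ p ≤ ∞ and 0 < q ≤ ∞. -/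
open scoped ENNReal NNReal BigOperators

/-- The sequence `b(i) = 1/(|i|^γ log|i|)` for `|i| ≥ 2` and `b(i) = 0` for `|i| ≤ 1`. -/
noncomputable def logSeq (γ : ℝ) : ℤ → ℂ := fun i =>
  if 2 ≤ |i| then ((1 / (|(i : ℝ)| ^ γ * Real.log |(i : ℝ)|) : ℝ) : ℂ) else 0
open Real Filter Finset

private lemma summable_bertrand {r : ℝ} (hr : 1 < r) :
    Summable (fun n : ℕ => if 2 ≤ n then 1 / ((n:ℝ) * Real.log n ^ r) else 0) := by
  rw [← summable_nat_add_iff 2]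
  have hr0 : (0:ℝ) ≤ r := by linarith
  have hEq : (fun n : ℕ => if 2 ≤ n + 2 then 1 / (((n+2:ℕ):ℝ) * Real.log ((n+2:ℕ):ℝ) ^ r) else 0)
      = fun n : ℕ => 1 / ((((n:ℝ))+2) * Real.log ((n:ℝ)+2) ^ r) := by
    funext n
    rw [if_pos (by omega)]
    push_cast
    norm_num
  rw [hEq]
  set g : ℕ → ℝ := fun n => 1 / (((n:ℝ)+2) * Real.log ((n:ℝ)+2) ^ r) with hg
  have hlogpos : ∀ n : ℕ, 0 < Real.log ((n:ℝ)+2) := fun n =>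
    Real.log_pos (by exact_mod_cast by push_cast; linarith [Nat.cast_nonneg (α := ℝ) n])
  have hnn : ∀ n, 0 ≤ g n := fun n => by
    have := hlogpos n
    positivity
  have hmono : ∀ ⦃m n : ℕ⦄, 0 < m → m ≤ n → g n ≤ g m := by
    intro m n _ hmn
    have hm : (0:ℝ) < ((m:ℝ)+2) * Real.log ((m:ℝ)+2) ^ r := by
      have := hlogpos m; positivity
    apply one_div_le_one_div_of_le hm
    have hc : (m:ℝ) ≤ (n:ℝ) := by exact_mod_cast hmn
    have hlm : Real.log ((m:ℝ)+2) ≤ Real.log ((n:ℝ)+2) :=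
      Real.log_le_log (by linarith) (by linarith)
    exact mul_le_mul (by linarith) (Real.rpow_le_rpow (hlogpos m).le hlm hr0)
      (Real.rpow_nonneg (hlogpos m).le r) (by linarith)
  rw [← summable_condensed_iff_of_nonneg hnn hmono]
  rw [← summable_nat_add_iff 1]
  have hbase : Summable (fun k : ℕ => (1 / Real.log 2 ^ r) * (1 / ((k:ℝ)+1) ^ r)) := by
    apply Summable.mul_left
    have h0 := Real.summable_one_div_nat_rpow.2 hr
    have := (summable_nat_add_iff 1).2 h0
    convert this using 2 with k
    · exact rfl
    · push_cast
      ring_nf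
  apply Summable.of_nonneg_of_le _ _ hbase
  · intro k
    have := hlogpos (2 ^ (k+1))
    positivity
  · intro k
    have hlog2 : (0:ℝ) < Real.log 2 := Real.log_pos (by norm_num)
    have hK : (0:ℝ) < 2 ^ (k+1) := by positivity
    have hcast : ((2 ^ (k+1) : ℕ) : ℝ) = 2 ^ (k+1) := by push_cast; ring
    have hlogge : ((k:ℝ)+1) * Real.log 2 ≤ Real.log ((2:ℝ) ^ (k+1) + 2) := by
      have h1 : Real.log ((2:ℝ) ^ (k+1)) ≤ Real.log ((2:ℝ) ^ (k+1) + 2) :=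
        Real.log_le_log (by positivity) (by linarith)
      rw [Real.log_pow] at h1
      push_cast at h1 ⊢
      linarith
    have hd1 : (0:ℝ) < (((k:ℝ)+1) * Real.log 2) ^ r := by positivity
    have step1 : (2:ℝ) ^ (k+1) * g (2 ^ (k+1)) ≤
        (2:ℝ)^(k+1) / ((2:ℝ)^(k+1) * (((k:ℝ)+1) * Real.log 2) ^ r) := by
      rw [hg]
      simp only [hcast]
      rw [mul_one_div]
      apply div_le_div_of_nonneg_left (by positivity) (by positivity)
      apply mul_le_mul (by linarith)
        (Real.rpow_le_rpow (by positivity) hlogge hr0) hd1.le (by positivity)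
    calc (2:ℝ) ^ (k+1) * g (2 ^ (k+1)) ≤ _ := step1
      _ = 1 / (((k:ℝ)+1) * Real.log 2) ^ r := by
          rw [div_mul_eq_div_div_swap, div_right_comm, div_self (ne_of_gt hK)]
      _ = (1 / Real.log 2 ^ r) * (1 / ((k:ℝ)+1) ^ r) := by
          rw [Real.mul_rpow (by positivity) hlog2.le]
          field_simp

private lemma not_summable_bertrand1 :
    ¬ Summable (fun n : ℕ => if 2 ≤ n then 1 / ((n:ℝ) * Real.log n) else 0) := by
  intro hs
  rw [← summable_nat_add_iff 2] at hs
  have hEq : (fun n : ℕ => if 2 ≤ n + 2 then 1 / (((n+2:ℕ):ℝ) * Real.log ((n+2:ℕ):ℝ)) else 0)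
      = fun n : ℕ => 1 / ((((n:ℝ))+2) * Real.log ((n:ℝ)+2)) := by
    funext n
    rw [if_pos (by omega)]
    norm_num
  rw [hEq] at hs
  set g : ℕ → ℝ := fun n => 1 / (((n:ℝ)+2) * Real.log ((n:ℝ)+2)) with hg
  have hlogpos : ∀ n : ℕ, 0 < Real.log ((n:ℝ)+2) := fun n =>
    Real.log_pos (by push_cast; linarith [Nat.cast_nonneg (α := ℝ) n])
  have hnn : ∀ n, 0 ≤ g n := fun n => by
    have := hlogpos n
    positivity
  have hmono : ∀ ⦃m n : ℕ⦄, 0 < m → m ≤ n → g n ≤ g m := by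
    intro m n _ hmn
    have hm : (0:ℝ) < ((m:ℝ)+2) * Real.log ((m:ℝ)+2) := by
      have := hlogpos m; positivity
    apply one_div_le_one_div_of_le hm
    have hc : (m:ℝ) ≤ (n:ℝ) := by exact_mod_cast hmn
    have hlm : Real.log ((m:ℝ)+2) ≤ Real.log ((n:ℝ)+2) :=
      Real.log_le_log (by linarith) (by linarith)
    exact mul_le_mul (by linarith) hlm (hlogpos m).le (by linarith)
  have hcond := (summable_condensed_iff_of_nonneg hnn hmono).2 hs
  have hlog2 : (0:ℝ) < Real.log 2 := Real.log_pos (by norm_num)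
  -- lower bound the condensed series by a harmonic-type series
  have hharm : Summable (fun k : ℕ => 1 / (3 * Real.log 2) * (1 / ((k:ℝ)+2))) := by
    apply Summable.of_nonneg_of_le _ _ hcond
    · intro k; positivity
    · intro k
      have hK : (0:ℝ) < 2 ^ k := by positivity
      have hcast : ((2 ^ k : ℕ) : ℝ) = 2 ^ k := by push_cast; ring
      have hlogle : Real.log ((2:ℝ) ^ k + 2) ≤ ((k:ℝ)+2) * Real.log 2 := by
        have h1 : Real.log ((2:ℝ) ^ k + 2) ≤ Real.log ((2:ℝ) ^ (k+2)) := by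
          apply Real.log_le_log (by positivity)
          have h4 : (2:ℝ) ^ (k+2) = 4 * 2 ^ k := by ring
          have h5 : (1:ℝ) ≤ 2 ^ k := one_le_pow₀ (by norm_num)
          rw [h4]; linarith
        rw [Real.log_pow] at h1
        push_cast at h1 ⊢
        linarith
      have hub : ((2:ℝ) ^ k + 2) * Real.log ((2:ℝ)^k + 2) ≤ 2 ^ k * (3 * Real.log 2 * ((k:ℝ)+2)) := by
        have h2 : (2:ℝ) ^ k + 2 ≤ 3 * 2 ^ k := by
          have : (1:ℝ) ≤ 2 ^ k := one_le_pow₀ (by norm_num)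
          linarith
        have h3 : (0:ℝ) < Real.log ((2:ℝ)^k + 2) := Real.log_pos (by linarith)
        nlinarith
      calc 1 / (3 * Real.log 2) * (1 / ((k:ℝ)+2))
          = 2 ^ k / (2 ^ k * (3 * Real.log 2 * ((k:ℝ)+2))) := by
            rw [eq_div_iff (by positivity)]
            field_simp
        _ ≤ 2 ^ k / (((2:ℝ) ^ k + 2) * Real.log ((2:ℝ)^k + 2)) := by
            have h3 : (0:ℝ) < Real.log ((2:ℝ)^k + 2) := Real.log_pos (by
              have : (1:ℝ) ≤ 2 ^ k := one_le_pow₀ (by norm_num); linarith)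
            apply div_le_div_of_nonneg_left (by positivity) (by positivity) hub
        _ = (2:ℝ) ^ k * g (2 ^ k) := by
            rw [hg]; simp only [hcast]; rw [mul_one_div]
  have hharm2 : Summable (fun k : ℕ => 1 / ((k:ℝ)+2)) := by
    have := hharm.mul_left (3 * Real.log 2)
    convert this using 2 with k
    · exact rfl
    · field_simp
  have : Summable (fun n : ℕ => 1 / (n:ℝ)) := by
    rw [← summable_nat_add_iff 2]
    convert hharm2 using 2 with k
    · exact rfl
    · push_cast
      ring
  exact Real.not_summable_one_div_natCast this

private lemma absR_eq {i : ℤ} : |(i:ℝ)| = ((|i| : ℤ) : ℝ) := (Int.cast_abs).symm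

private lemma norm_logSeq_eq (γ : ℝ) (i : ℤ) :
    ‖logSeq γ i‖ = if 2 ≤ |i| then 1 / (|(i:ℝ)| ^ γ * Real.log |(i:ℝ)|) else 0 := by
  unfold logSeq
  split
  · rename_i h
    have h2 : (2:ℝ) ≤ |(i:ℝ)| := by rw [absR_eq]; exact_mod_cast h
    have hlog : 0 < Real.log |(i:ℝ)| := Real.log_pos (by linarith)
    have hpow : 0 < |(i:ℝ)| ^ γ := Real.rpow_pos_of_pos (by linarith) γ
    rw [Complex.norm_real, Real.norm_eq_abs, abs_of_nonneg (by positivity)]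
  · simp

private lemma norm_logSeq_nonneg_expr (γ : ℝ) (i : ℤ) (h : 2 ≤ |i|) :
    ‖logSeq γ i‖ = 1 / (|(i:ℝ)| ^ γ * Real.log |(i:ℝ)|) := by
  rw [norm_logSeq_eq, if_pos h]

private lemma logSeq_eq_ofReal (γ : ℝ) (i : ℤ) : logSeq γ i = ((‖logSeq γ i‖ : ℝ) : ℂ) := by
  rw [norm_logSeq_eq]
  unfold logSeq
  split <;> simp

private lemma norm_logSeq_neg (γ : ℝ) (i : ℤ) : ‖logSeq γ (-i)‖ = ‖logSeq γ i‖ := by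
  rw [norm_logSeq_eq, norm_logSeq_eq]
  simp [abs_neg]

private lemma norm_logSeq_le (γ : ℝ) (hγ0 : 0 ≤ γ) (i : ℤ) :
    ‖logSeq γ i‖ ≤ 1 / Real.log 2 := by
  rw [norm_logSeq_eq]
  have hlog2 : (0:ℝ) < Real.log 2 := Real.log_pos (by norm_num)
  split
  · rename_i h
    have h2 : (2:ℝ) ≤ |(i:ℝ)| := by rw [absR_eq]; exact_mod_cast h
    have hpow : (1:ℝ) ≤ |(i:ℝ)| ^ γ := Real.one_le_rpow (by linarith) hγ0
    have hlog : Real.log 2 ≤ Real.log |(i:ℝ)| := Real.log_le_log (by norm_num) h2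
    apply one_div_le_one_div_of_le hlog2
    nlinarith
  · positivity

-- `ℓ^p` membership, p finite case: summability of `‖b n‖ ^ r` over ℕ
private lemma summable_norm_rpow_nat (γ : ℝ) (hγ0 : 0 < γ) (r : ℝ) (hr : 1 < r)
    (hγr : 1 ≤ γ * r) : Summable (fun n : ℕ => ‖logSeq γ (n:ℤ)‖ ^ r) := by
  apply Summable.of_nonneg_of_le (fun n => Real.rpow_nonneg (norm_nonneg _) r) _
    (summable_bertrand hr)
  intro n
  by_cases h : 2 ≤ n
  · have habs : |((n:ℤ))| = (n:ℤ) := abs_of_nonneg (by positivity)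
    have h2 : (2:ℤ) ≤ |(n:ℤ)| := by rw [habs]; exact_mod_cast h
    rw [norm_logSeq_nonneg_expr γ _ h2, if_pos h]
    have hxe : |((n:ℤ):ℝ)| = (n:ℝ) := by rw [absR_eq, habs]; norm_num
    rw [hxe]
    have hn2 : (2:ℝ) ≤ (n:ℝ) := by exact_mod_cast h
    have hlog : 0 < Real.log (n:ℝ) := Real.log_pos (by linarith)
    have hpow : 0 < (n:ℝ) ^ γ := Real.rpow_pos_of_pos (by linarith) γ
    rw [Real.div_rpow (by positivity) (by positivity), Real.one_rpow,
      Real.mul_rpow hpow.le hlog.le]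
    apply one_div_le_one_div_of_le
    · have : (0:ℝ) < Real.log (n:ℝ) ^ r := Real.rpow_pos_of_pos hlog r
      positivity
    · apply mul_le_mul _ le_rfl (Real.rpow_nonneg hlog.le r) _
      · calc (n:ℝ) = (n:ℝ) ^ (1:ℝ) := (Real.rpow_one _).symm
          _ ≤ (n:ℝ) ^ (γ * r) := Real.rpow_le_rpow_of_exponent_le (by linarith) hγr
          _ = ((n:ℝ) ^ γ) ^ r := Real.rpow_mul (by linarith : (0:ℝ) ≤ (n:ℝ)) γ r
      · exact Real.rpow_nonneg (Real.rpow_pos_of_pos (by linarith) γ).le r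
  · have habs : ¬ (2:ℤ) ≤ |(n:ℤ)| := by
      rw [abs_of_nonneg (by positivity)]; exact_mod_cast h
    rw [norm_logSeq_eq, if_neg habs, if_neg h, Real.zero_rpow (by linarith)]

private lemma part1 (γ : ℝ) (hγ0 : 0 < γ) (hγ1 : γ < 1) :
    ∀ p : ℝ≥0∞, ENNReal.ofReal (1 / γ) ≤ p →
      elpNorm p (fun i => (‖logSeq γ i‖₊ : ℝ≥0∞)) ≠ ∞ := by
  intro p hp
  by_cases hpt : p = ∞
  · subst hpt
    rw [elpNorm, if_pos rfl]
    have hbound : ∀ i : ℤ, (‖logSeq γ i‖₊ : ℝ≥0∞) ≤ ENNReal.ofReal (1 / Real.log 2) := by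
      intro i
      rw [← enorm_eq_nnnorm, ← ofReal_norm_eq_enorm]
      exact ENNReal.ofReal_le_ofReal (norm_logSeq_le γ hγ0.le i)
    exact ne_top_of_le_ne_top ENNReal.ofReal_ne_top (iSup_le hbound)
  · rw [elpNorm, if_neg hpt]
    set r := p.toReal with hrdef
    have hγinv : 1 < 1/γ := (one_lt_div hγ0).2 hγ1
    have hr : 1/γ ≤ r := by
      rw [hrdef]
      have := ENNReal.toReal_mono hpt hp
      rwa [ENNReal.toReal_ofReal (by positivity)] at this
    have hr1 : 1 < r := lt_of_lt_of_le hγinv hr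
    have hγr : 1 ≤ γ * r := by
      have := mul_le_mul_of_nonneg_left hr hγ0.le
      rwa [mul_one_div, div_self hγ0.ne'] at this
    apply ENNReal.rpow_ne_top_of_nonneg (by positivity)
    have hco : ∀ i : ℤ, ((‖logSeq γ i‖₊ : ℝ≥0∞)) ^ r = ((‖logSeq γ i‖₊ ^ r : ℝ≥0) : ℝ≥0∞) :=
      fun i => (ENNReal.coe_rpow_of_nonneg _ (by linarith)).symm
    simp_rw [hco]
    rw [ENNReal.tsum_coe_ne_top_iff_summable, ← NNReal.summable_coe]
    have hfun : (fun i : ℤ => ((‖logSeq γ i‖₊ ^ r : ℝ≥0) : ℝ)) = fun i : ℤ => ‖logSeq γ i‖ ^ r := by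
      funext i; rw [NNReal.coe_rpow, coe_nnnorm]
    rw [hfun]
    apply Summable.of_nat_of_neg
    · exact summable_norm_rpow_nat γ hγ0 r hr1 hγr
    · simp only [norm_logSeq_neg]
      exact summable_norm_rpow_nat γ hγ0 r hr1 hγr

private lemma Tker_nonneg (α β : ℝ) (i j : ℤ) : 0 ≤ Tker α β i j := by
  unfold Tker
  split
  · exact le_refl 0
  · positivity

private lemma key_lower (γ α β : ℝ) (hγ0 : 0 < γ) (hγ1 : γ < 1) (hα : 0 < α) (hβ : 0 < β)
    (hαβ : α + β = 1 - γ) (j i : ℤ) (hi : 2 * |j| + 2 ≤ i) :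
    1 / ((i:ℝ) * Real.log (i:ℝ)) ≤ 2 * (Tker α β i j * ‖logSeq γ i‖) := by
  have hjabs : (0:ℤ) ≤ |j| := abs_nonneg j
  have hij : |j| < i := by linarith
  have hne1 : i ≠ j := by
    intro h; subst h; exact absurd (le_abs_self i) (not_le.2 hij)
  have hne2 : i ≠ -j := by
    intro h
    have : -j ≤ |j| := neg_le_abs j
    omega
  have hi2 : (2:ℤ) ≤ i := by linarith
  have hx2 : (2:ℝ) ≤ (i:ℝ) := by exact_mod_cast hi2
  have hx0 : (0:ℝ) < (i:ℝ) := by linarith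
  have hjx : |(j:ℝ)| ≤ (i:ℝ) := by
    rw [absR_eq]; exact_mod_cast hij.le
  have hxlog : 0 < Real.log (i:ℝ) := Real.log_pos (by linarith)
  -- kernel lower bound
  have hia : (2:ℤ) ≤ |i| := by rw [abs_of_nonneg (by linarith : (0:ℤ) ≤ i)]; exact hi2
  have hsub0 : (i:ℝ) - (j:ℝ) ≠ 0 := by
    intro h
    exact hne1 (by exact_mod_cast sub_eq_zero.1 h)
  have hadd0 : (i:ℝ) + (j:ℝ) ≠ 0 := by
    intro h
    apply hne2
    have : (i:ℝ) = -(j:ℝ) := by linarith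
    exact_mod_cast this
  have habs1 : (0:ℝ) < |(i:ℝ) - (j:ℝ)| := abs_pos.2 hsub0
  have habs2 : (0:ℝ) < |(i:ℝ) + (j:ℝ)| := abs_pos.2 hadd0
  have hub1 : |(i:ℝ) - (j:ℝ)| ≤ 2 * (i:ℝ) := by
    have := abs_sub (i:ℝ) (j:ℝ)
    have hxx : |(i:ℝ)| = (i:ℝ) := abs_of_pos hx0
    calc |(i:ℝ) - (j:ℝ)| ≤ |(i:ℝ)| + |(j:ℝ)| := abs_sub _ _
      _ ≤ 2 * (i:ℝ) := by rw [hxx]; linarith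
  have hub2 : |(i:ℝ) + (j:ℝ)| ≤ 2 * (i:ℝ) := by
    have hxx : |(i:ℝ)| = (i:ℝ) := abs_of_pos hx0
    calc |(i:ℝ) + (j:ℝ)| ≤ |(i:ℝ)| + |(j:ℝ)| := abs_add_le _ _
      _ ≤ 2 * (i:ℝ) := by rw [hxx]; linarith
  have hDub : |(i:ℝ) - (j:ℝ)| ^ α * |(i:ℝ) + (j:ℝ)| ^ β ≤ 2 * (i:ℝ) ^ (1 - γ) := by
    have h1 : |(i:ℝ) - (j:ℝ)| ^ α ≤ (2 * (i:ℝ)) ^ α :=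
      Real.rpow_le_rpow habs1.le hub1 hα.le
    have h2 : |(i:ℝ) + (j:ℝ)| ^ β ≤ (2 * (i:ℝ)) ^ β :=
      Real.rpow_le_rpow habs2.le hub2 hβ.le
    calc |(i:ℝ) - (j:ℝ)| ^ α * |(i:ℝ) + (j:ℝ)| ^ β
        ≤ (2 * (i:ℝ)) ^ α * (2 * (i:ℝ)) ^ β := by
          apply mul_le_mul h1 h2 (Real.rpow_nonneg habs2.le β) (Real.rpow_nonneg (by positivity) α)
      _ = (2 * (i:ℝ)) ^ (α + β) := (Real.rpow_add (by positivity) α β).symm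
      _ = 2 ^ (1 - γ) * (i:ℝ) ^ (1 - γ) := by
          rw [hαβ, Real.mul_rpow (by norm_num) hx0.le]
      _ ≤ 2 * (i:ℝ) ^ (1 - γ) := by
          have h3 : (2:ℝ) ^ (1 - γ) ≤ 2 ^ (1:ℝ) :=
            Real.rpow_le_rpow_of_exponent_le (by norm_num) (by linarith)
          rw [Real.rpow_one] at h3
          have := Real.rpow_nonneg hx0.le (1 - γ)
          nlinarith
  have hker : 1 / (2 * (i:ℝ) ^ (1 - γ)) ≤ Tker α β i j := by
    rw [Tker, if_neg (by push_neg; exact ⟨hne1, hne2⟩)]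
    apply one_div_le_one_div_of_le (by positivity) hDub
  -- norm value
  have hxx : |(i:ℝ)| = (i:ℝ) := abs_of_pos hx0
  have hnorm : ‖logSeq γ i‖ = 1 / ((i:ℝ) ^ γ * Real.log (i:ℝ)) := by
    rw [norm_logSeq_nonneg_expr γ i hia, hxx]
  rw [hnorm]
  have hprod : 1 / (2 * (i:ℝ) ^ (1 - γ)) * (1 / ((i:ℝ) ^ γ * Real.log (i:ℝ)))
      ≤ Tker α β i j * (1 / ((i:ℝ) ^ γ * Real.log (i:ℝ))) := by
    apply mul_le_mul_of_nonneg_right hker (by positivity)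
  have heq : 1 / (2 * (i:ℝ) ^ (1 - γ)) * (1 / ((i:ℝ) ^ γ * Real.log (i:ℝ)))
      = 1 / (2 * ((i:ℝ) * Real.log (i:ℝ))) := by
    rw [div_mul_div_comm, one_mul]
    congr 1
    have : (i:ℝ) ^ (1 - γ) * (i:ℝ) ^ γ = (i:ℝ) := by
      rw [← Real.rpow_add hx0]
      norm_num
    calc 2 * (i:ℝ) ^ (1-γ) * ((i:ℝ) ^ γ * Real.log (i:ℝ))
        = 2 * ((i:ℝ) ^ (1-γ) * (i:ℝ) ^ γ) * Real.log (i:ℝ) := by ring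
      _ = 2 * ((i:ℝ) * Real.log (i:ℝ)) := by rw [this]; ring
  rw [heq] at hprod
  calc 1 / ((i:ℝ) * Real.log (i:ℝ)) = 2 * (1 / (2 * ((i:ℝ) * Real.log (i:ℝ)))) := by
        field_simp
    _ ≤ 2 * (Tker α β i j * (1 / ((i:ℝ) ^ γ * Real.log (i:ℝ)))) := by linarith

private lemma part2 (γ α β : ℝ) (hγ0 : 0 < γ) (hγ1 : γ < 1) (hα : 0 < α) (hβ : 0 < β)
    (hαβ : α + β = 1 - γ) (j : ℤ) :
    ¬ Summable (fun i : ℤ => Tker α β i j * ‖logSeq γ i‖) := by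
  intro hs
  set N₀ : ℕ := 2 * j.natAbs + 2 with hN₀
  have h1 : Summable (fun n : ℕ => Tker α β (n:ℤ) j * ‖logSeq γ (n:ℤ)‖) :=
    hs.comp_injective (fun a b h => by exact_mod_cast h)
  have h2 := (summable_nat_add_iff N₀).2 h1
  have h3 : Summable (fun n : ℕ =>
      if 2 ≤ n + N₀ then 1 / (((n + N₀ : ℕ):ℝ) * Real.log ((n + N₀ : ℕ):ℝ)) else 0) := by
    apply Summable.of_nonneg_of_le _ _ (h2.mul_left 2)
    · intro n
      rw [if_pos (by omega)]
      have h2n' : 2 ≤ n + N₀ := by omega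
      have h2n : (2:ℝ) ≤ ((n + N₀ : ℕ):ℝ) := by exact_mod_cast h2n'
      have := Real.log_pos (by linarith : (1:ℝ) < ((n + N₀ : ℕ):ℝ))
      positivity
    · intro n
      rw [if_pos (by omega)]
      have hi : 2 * |j| + 2 ≤ ((n + N₀ : ℕ) : ℤ) := by
        rw [Int.abs_eq_natAbs]
        push_cast [hN₀]
        omega
      have hk := key_lower γ α β hγ0 hγ1 hα hβ hαβ j ((n + N₀ : ℕ) : ℤ) hi
      calc (1:ℝ) / (((n + N₀ : ℕ):ℝ) * Real.log ((n + N₀ : ℕ):ℝ))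
          = 1 / (((((n + N₀ : ℕ):ℤ)):ℝ) * Real.log ((((n + N₀ : ℕ):ℤ)):ℝ)) := by norm_cast
        _ ≤ 2 * (Tker α β ((n + N₀ : ℕ):ℤ) j * ‖logSeq γ ((n + N₀ : ℕ):ℤ)‖) := hk
  have h4 := (summable_nat_add_iff (f := fun n : ℕ =>
      if 2 ≤ n then 1 / ((n:ℝ) * Real.log (n:ℝ)) else 0) N₀).1 h3
  exact not_summable_bertrand1 h4

private lemma elpNorm_mono {p : ℝ≥0∞} {f g : ℤ → ℝ≥0∞} (h : ∀ i, f i ≤ g i) :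
    elpNorm p f ≤ elpNorm p g := by
  unfold elpNorm
  split
  · exact iSup_mono h
  · exact ENNReal.rpow_le_rpow (ENNReal.tsum_le_tsum fun i =>
      ENNReal.rpow_le_rpow (h i) ENNReal.toReal_nonneg) (by positivity)

private lemma le_elpNorm {q : ℝ≥0∞} (hq : 0 < q) (f : ℤ → ℝ≥0∞) (j : ℤ) :
    f j ≤ elpNorm q f := by
  unfold elpNorm
  split
  · exact le_iSup f j
  · rename_i hq'
    have ht : 0 < q.toReal := ENNReal.toReal_pos hq.ne' hq'
    calc f j = (f j ^ q.toReal) ^ (1 / q.toReal) := by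
          rw [← ENNReal.rpow_mul, mul_one_div, div_self ht.ne', ENNReal.rpow_one]
      _ ≤ _ := ENNReal.rpow_le_rpow (ENNReal.le_tsum j) (by positivity)

private lemma fdiv_nonneg : ∀ n : ℕ, 0 ≤ (if 2 ≤ n then 1 / ((n:ℝ) * Real.log (n:ℝ)) else 0) := by
  intro n
  split
  · rename_i h
    have h2 : (2:ℝ) ≤ (n:ℝ) := by exact_mod_cast h
    have := Real.log_pos (by linarith : (1:ℝ) < (n:ℝ))
    positivity
  · exact le_refl 0

private lemma part3 (γ α β : ℝ) (hγ0 : 0 < γ) (hγ1 : γ < 1) (hα : 0 < α) (hβ : 0 < β)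
    (hαβ : α + β = 1 - γ) :
    ∀ p : ℝ≥0∞, ENNReal.ofReal (1 / γ) ≤ p → ∀ q : ℝ≥0∞, 0 < q →
      ¬ ∃ C : ℝ≥0∞, 0 < C ∧ C ≠ ∞ ∧ ∀ c : ℤ → ℂ,
          elpNorm p (fun i => (‖c i‖₊ : ℝ≥0∞)) ≠ ∞ →
            elpNorm q (fun j => (‖Tfrac α β c j‖₊ : ℝ≥0∞)) ≤
              C * elpNorm p (fun i => (‖c i‖₊ : ℝ≥0∞)) := by
  rintro p hp q hq ⟨C, hC0, hCt, hbound⟩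
  set B := elpNorm p (fun i => (‖logSeq γ i‖₊ : ℝ≥0∞)) with hB
  have hBt : B ≠ ∞ := part1 γ hγ0 hγ1 p hp
  have hCB : C * B ≠ ∞ := ENNReal.mul_ne_top hCt hBt
  set fdiv : ℕ → ℝ := fun n => if 2 ≤ n then 1 / ((n:ℝ) * Real.log (n:ℝ)) else 0 with hfdiv
  have hdiv : Filter.Tendsto (fun n => ∑ k ∈ Finset.range n, fdiv k) Filter.atTop Filter.atTop :=
    (not_summable_iff_tendsto_nat_atTop_of_nonneg fdiv_nonneg).1 not_summable_bertrand1
  obtain ⟨N, hN⟩ := (hdiv.eventually_gt_atTop (2 * (C * B).toReal)).exists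
  set cN : ℤ → ℂ := fun i => if |i| ≤ (N:ℤ) then logSeq γ i else 0 with hcN
  have hmono : ∀ i, (‖cN i‖₊ : ℝ≥0∞) ≤ (‖logSeq γ i‖₊ : ℝ≥0∞) := by
    intro i
    simp only [hcN]
    split
    · exact le_rfl
    · simp
  have hfin : elpNorm p (fun i => (‖cN i‖₊ : ℝ≥0∞)) ≤ B := elpNorm_mono hmono
  have hb := hbound cN (ne_top_of_le_ne_top hBt hfin)
  have hle : (‖Tfrac α β cN 0‖₊ : ℝ≥0∞) ≤ C * B :=
    (le_elpNorm hq _ 0).trans (hb.trans (mul_le_mul_right hfin C))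
  have hle2 : ‖Tfrac α β cN 0‖ ≤ (C * B).toReal := by
    have := ENNReal.toReal_mono hCB hle
    simpa using this
  -- compute `Tfrac α β cN 0` as a finite sum
  set S : Finset ℤ := Finset.Icc (-(N:ℤ)) N with hS
  set R : ℝ := ∑ i ∈ S, Tker α β i 0 * ‖logSeq γ i‖ with hR
  have hTf : Tfrac α β cN 0 = ((R : ℝ) : ℂ) := by
    rw [Tfrac]
    rw [tsum_eq_sum (s := S) (by
      intro i hiS
      have : ¬ |i| ≤ (N:ℤ) := by
        rw [hS, Finset.mem_Icc] at hiS
        rw [abs_le]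
        exact fun h => hiS ⟨h.1, h.2⟩
      simp [hcN, this])]
    rw [hR]
    push_cast
    apply Finset.sum_congr rfl
    intro i hiS
    have hiabs : |i| ≤ (N:ℤ) := by
      rw [hS, Finset.mem_Icc] at hiS
      exact abs_le.2 ⟨hiS.1, hiS.2⟩
    rw [hcN]
    simp only [if_pos hiabs]
    conv_lhs => rw [logSeq_eq_ofReal γ i]
  have hRnonneg : ∀ i ∈ S, 0 ≤ Tker α β i 0 * ‖logSeq γ i‖ := fun i _ =>
    mul_nonneg (Tker_nonneg α β i 0) (norm_nonneg _)
  have hnormR : ‖Tfrac α β cN 0‖ = R := by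
    rw [hTf, Complex.norm_real, Real.norm_eq_abs,
      abs_of_nonneg (Finset.sum_nonneg hRnonneg)]
  -- lower bound `R` by the partial sum of `fdiv`
  have hkey : ∀ n : ℕ, fdiv n ≤ 2 * (Tker α β (n:ℤ) 0 * ‖logSeq γ (n:ℤ)‖) := by
    intro n
    by_cases h : 2 ≤ n
    · have hfn : fdiv n = 1 / ((n:ℝ) * Real.log (n:ℝ)) := if_pos h
      rw [hfn]
      have hi : 2 * |(0:ℤ)| + 2 ≤ (n:ℤ) := by
        simp only [abs_zero, mul_zero, zero_add]
        exact_mod_cast h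
      have hk := key_lower γ α β hγ0 hγ1 hα hβ hαβ 0 (n:ℤ) hi
      calc (1:ℝ) / ((n:ℝ) * Real.log (n:ℝ))
          = 1 / ((((n:ℤ)):ℝ) * Real.log (((n:ℤ)):ℝ)) := by norm_cast
        _ ≤ _ := hk
    · have hfn : fdiv n = 0 := if_neg h
      rw [hfn]
      exact mul_nonneg (by norm_num) (mul_nonneg (Tker_nonneg α β _ 0) (norm_nonneg _))
  set e : ℕ ↪ ℤ := ⟨fun n => (n:ℤ), fun a b h => by simpa using h⟩ with he
  have hsub : (Finset.range N).map e ⊆ S := by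
    intro i hi
    rw [Finset.mem_map] at hi
    obtain ⟨n, hn, rfl⟩ := hi
    rw [Finset.mem_range] at hn
    rw [hS, Finset.mem_Icc]
    constructor
    · have : (0:ℤ) ≤ e n := by rw [he]; exact Int.natCast_nonneg n
      omega
    · simp only [he, Function.Embedding.coeFn_mk]
      exact (show (n:ℤ) ≤ N by exact_mod_cast hn.le)
  have hlow : ∑ k ∈ Finset.range N, fdiv k ≤ 2 * R := by
    calc ∑ k ∈ Finset.range N, fdiv k
        ≤ ∑ k ∈ Finset.range N, 2 * (Tker α β (k:ℤ) 0 * ‖logSeq γ (k:ℤ)‖) :=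
          Finset.sum_le_sum fun k _ => hkey k
      _ = ∑ i ∈ (Finset.range N).map e, 2 * (Tker α β i 0 * ‖logSeq γ i‖) := by
          rw [Finset.sum_map]
          rfl
      _ ≤ ∑ i ∈ S, 2 * (Tker α β i 0 * ‖logSeq γ i‖) := by
          apply Finset.sum_le_sum_of_subset_of_nonneg hsub
          intro i _ _
          exact mul_nonneg (by norm_num) (mul_nonneg (Tker_nonneg α β i 0) (norm_nonneg _))
      _ = 2 * R := by rw [hR, Finset.mul_sum]
  have : 2 * (C * B).toReal < 2 * R := lt_of_lt_of_le hN hlow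
  have hcontra : (C * B).toReal < R := by linarith
  rw [hnormR] at hle2
  linarith

/-- **`T_{α,β}` is unbounded from `ℓ^p(ℤ)` for `1/γ ≤ p ≤ ∞`.**
Let `0 < γ < 1` and `α, β > 0` with `α + β = 1 - γ`. The sequence
`b(i) = 1/(|i|^γ log|i|)` (for `|i| ≥ 2`, zero otherwise) belongs to `ℓ^p(ℤ)` for every
`1/γ ≤ p ≤ ∞`, while for every `j ∈ ℤ` the series `∑_{i ≠ ±j} b(i)/(|i-j|^α |i+j|^β)`
is not summable (it diverges to `+∞`). Consequently `T_{α,β}` is not bounded from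
`ℓ^p(ℤ)` into `ℓ^q(ℤ)` for any `1/γ ≤ p ≤ ∞` and `0 < q ≤ ∞`. -/
theorem stmt9 (γ α β : ℝ) (hγ0 : 0 < γ) (hγ1 : γ < 1) (hα : 0 < α) (hβ : 0 < β)
    (hαβ : α + β = 1 - γ) :
    (∀ p : ℝ≥0∞, ENNReal.ofReal (1 / γ) ≤ p →
      elpNorm p (fun i => (‖logSeq γ i‖₊ : ℝ≥0∞)) ≠ ∞) ∧
    (∀ j : ℤ, ¬ Summable (fun i : ℤ => Tker α β i j * ‖logSeq γ i‖)) ∧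
    (∀ p : ℝ≥0∞, ENNReal.ofReal (1 / γ) ≤ p → ∀ q : ℝ≥0∞, 0 < q →
      ¬ ∃ C : ℝ≥0∞, 0 < C ∧ C ≠ ∞ ∧ ∀ c : ℤ → ℂ,
          elpNorm p (fun i => (‖c i‖₊ : ℝ≥0∞)) ≠ ∞ →
            elpNorm q (fun j => (‖Tfrac α β c j‖₊ : ℝ≥0∞)) ≤
              C * elpNorm p (fun i => (‖c i‖₊ : ℝ≥0∞))) := by
  exact ⟨part1 γ hγ0 hγ1, part2 γ α β hγ0 hγ1 hα hβ hαβ, part3 γ α β hγ0 hγ1 hα hβ hαβ⟩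
end

section
/- There exists ε ∈ (0, 1/3) such that for every γ with 0 ≤ γ < ε: ∑_{j=2}^{∞} [ (j² − 1)^{−(1−γ)/2} − j^{−(1−γ)} ] < 1/2. Consequently, for the sequence b defined by b(1) = b(−1) = 1, b(0) = −2, and b(i) = 0 otherwise, one has ∑_{j∈ℤ} (U_γ b)(j) = −2 + 4 ∑_{j=2}^{∞} [ (j² − 1)^{−(1−γ)/2} − j^{−(1−γ)} ] < 0 for every 0 ≤ γ < ε. -/
open scoped ENNReal NNReal BigOperators

/-- The operator `U_γ = T_{(1-γ)/2, (1-γ)/2}`: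
`(U_γ b)(j) = ∑_{i ≠ ±j} b(i) / (|i-j|^{(1-γ)/2} |i+j|^{(1-γ)/2})`. -/
noncomputable def Uop (γ : ℝ) (b : ℤ → ℂ) (j : ℤ) : ℂ :=
  ∑' i : ℤ, (Tker ((1 - γ) / 2) ((1 - γ) / 2) i j : ℂ) * b i

/-- The sequence `b` with `b(±1) = 1`, `b(0) = -2` and `b(i) = 0` otherwise. -/
noncomputable def bSpec : ℤ → ℂ := fun i =>
  if i = 1 ∨ i = -1 then 1 else if i = 0 then -2 else 0

/-- The tail series `∑_{j=2}^{∞} [(j²-1)^{-(1-γ)/2} - j^{-(1-γ)}]` (indexed by `j = n+2`). -/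
noncomputable def tailSum (γ : ℝ) : ℝ :=
  ∑' n : ℕ, ((((n : ℝ) + 2) ^ 2 - 1) ^ (-(1 - γ) / 2) - ((n : ℝ) + 2) ^ (-(1 - γ)))

noncomputable def gg (γ : ℝ) (n : ℕ) : ℝ :=
  (((n : ℝ) + 2) ^ 2 - 1) ^ (-(1 - γ) / 2) - ((n : ℝ) + 2) ^ (-(1 - γ))

noncomputable def hh (n : ℕ) : ℝ := (1/2) * (1/(((n:ℝ)+1)*((n:ℝ)+2)))

noncomputable def FF (γ : ℝ) (j : ℤ) : ℝ :=
  if j = 0 then 2 else if j = 1 ∨ j = -1 then -2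
  else 2 * (((j:ℝ))^2 - 1) ^ (-(1 - γ)/2) - 2 * |(j:ℝ)| ^ (-(1 - γ))

open Real Finset



lemma gg_eq (γ : ℝ) (n : ℕ) :
    gg γ n = (((n:ℝ)+2)^2 - 1) ^ (-((1-γ)/2)) *
      (1 - (((((n:ℝ)+2)^2 - 1))/(((n:ℝ)+2)^2)) ^ ((1-γ)/2)) := by
  set x : ℝ := (n:ℝ)+2 with hxdef
  have hx2 : (2:ℝ) ≤ x := by rw [hxdef]; have : (0:ℝ) ≤ n := Nat.cast_nonneg n; linarith
  have hxp : (0:ℝ) < x := by linarith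
  have ha : (0:ℝ) < x^2 - 1 := by nlinarith
  have hx2p : (0:ℝ) < x^2 := by positivity
  rw [gg]
  have h1 : ((x^2-1)/x^2) ^ ((1-γ)/2) = (x^2-1)^((1-γ)/2) / (x^2)^((1-γ)/2) :=
    Real.div_rpow ha.le hx2p.le _
  rw [h1, mul_sub, mul_one]
  have h2 : (x^2-1) ^ (-((1-γ)/2)) * ((x^2-1)^((1-γ)/2) / (x^2)^((1-γ)/2))
      = 1 / (x^2)^((1-γ)/2) := by
    rw [mul_div_assoc', ← Real.rpow_add ha]
    norm_num
  rw [h2]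
  have h3 : (x^2)^((1-γ)/2) = x ^ (1-γ) := by
    rw [← Real.rpow_natCast x 2, ← Real.rpow_mul hxp.le]
    congr 1
    ring
  rw [h3, one_div, ← Real.rpow_neg hxp.le]
  rw [hxdef]; ring_nf

lemma gg_nonneg {γ : ℝ} (hγ0 : 0 ≤ γ) (hγ1 : γ ≤ 1) (n : ℕ) : 0 ≤ gg γ n := by
  rw [gg_eq]
  set x : ℝ := (n:ℝ)+2 with hxdef
  have hx2 : (2:ℝ) ≤ x := by rw [hxdef]; have : (0:ℝ) ≤ n := Nat.cast_nonneg n; linarith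
  have ha : (0:ℝ) < x^2 - 1 := by nlinarith
  have hx2p : (0:ℝ) < x^2 := by positivity
  apply mul_nonneg (Real.rpow_nonneg ha.le _)
  have h1 : ((x^2-1)/x^2) ^ ((1-γ)/2) ≤ 1 :=
    Real.rpow_le_one (by positivity) (by rw [div_le_one hx2p]; linarith) (by linarith)
  linarith

lemma gg_le {γ : ℝ} (hγ0 : 0 ≤ γ) (hγ1 : γ ≤ 1/4) (n : ℕ) :
    gg γ n ≤ (((n:ℝ)+2)^2 - 1) ^ (-(3/8 : ℝ)) * (1/((n:ℝ)+2)^2) := by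
  rw [gg_eq]
  set x : ℝ := (n:ℝ)+2 with hxdef
  have hx2 : (2:ℝ) ≤ x := by rw [hxdef]; have : (0:ℝ) ≤ n := Nat.cast_nonneg n; linarith
  have ha : (0:ℝ) < x^2 - 1 := by nlinarith
  have hx2p : (0:ℝ) < x^2 := by positivity
  have ha1 : (1:ℝ) ≤ x^2 - 1 := by nlinarith
  apply mul_le_mul
  · exact Real.rpow_le_rpow_of_exponent_le ha1 (by linarith)
  · have h1 : (x^2-1)/x^2 ≤ ((x^2-1)/x^2) ^ ((1-γ)/2) := by
      have := Real.rpow_le_rpow_of_exponent_ge (x := (x^2-1)/x^2) (by positivity)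
        (by rw [div_le_one hx2p]; linarith) (y := 1) (z := (1-γ)/2) (by linarith)
      rwa [Real.rpow_one] at this
    have h2 : 1 - (x^2-1)/x^2 = 1/x^2 := by field_simp; ring
    linarith
  · have h1 : ((x^2-1)/x^2) ^ ((1-γ)/2) ≤ 1 :=
      Real.rpow_le_one (by positivity) (by rw [div_le_one hx2p]; linarith) (by linarith)
    linarith
  · exact Real.rpow_nonneg ha.le _

lemma eight_bound : ∀ a : ℝ, 8 ≤ a → a ^ (-(3/8 : ℝ)) ≤ 1/2 := by
  intro a ha
  have h8 : (2:ℝ) ≤ a ^ ((3:ℝ)/8) := by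
    have h1 : ((8:ℝ)) ^ ((3:ℝ)/8) ≤ a ^ ((3:ℝ)/8) :=
      Real.rpow_le_rpow (by norm_num) ha (by norm_num)
    have h2 : ((8:ℝ)) ^ ((3:ℝ)/8) = (2:ℝ) ^ ((9:ℝ)/8) := by
      rw [show (8:ℝ) = 2 ^ (3:ℝ) by
        rw [show (3:ℝ) = ((3:ℕ):ℝ) by norm_num, Real.rpow_natCast]; norm_num,
        ← Real.rpow_mul (by norm_num)]
      norm_num
    have h3 : (2:ℝ) ^ (1:ℝ) ≤ (2:ℝ) ^ ((9:ℝ)/8) :=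
      Real.rpow_le_rpow_of_exponent_le one_le_two (by norm_num)
    rw [Real.rpow_one] at h3
    linarith [h2 ▸ h1]
  rw [Real.rpow_neg (by linarith), inv_le_comm₀ (by positivity) (by norm_num)]
  linarith

lemma gg_le_hh {γ : ℝ} (hγ0 : 0 ≤ γ) (hγ1 : γ ≤ 1/4) (n : ℕ) : gg γ n ≤ hh n := by
  have key := gg_le hγ0 hγ1 n
  have hn0 : (0:ℝ) ≤ (n:ℝ) := Nat.cast_nonneg n
  rcases Nat.eq_zero_or_pos n with h | h
  · subst h
    refine key.trans ?_
    simp only [Nat.cast_zero, zero_add, hh]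
    have h1 : ((2:ℝ)^2 - 1) ^ (-(3/8:ℝ)) ≤ 1 :=
      Real.rpow_le_one_of_one_le_of_nonpos (by norm_num) (by norm_num)
    norm_num
    nlinarith [Real.rpow_nonneg (show (0:ℝ) ≤ 3 by norm_num) (-(3/8:ℝ))]
  · refine key.trans ?_
    have hn1 : (1:ℝ) ≤ (n:ℝ) := by exact_mod_cast h
    have h8 : (8:ℝ) ≤ ((n:ℝ)+2)^2 - 1 := by nlinarith
    have hb := eight_bound _ h8
    rw [hh]
    have hx2 : (0:ℝ) < ((n:ℝ)+2)^2 := by positivity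
    have h2 : 1/((n:ℝ)+2)^2 ≤ 1/(((n:ℝ)+1)*((n:ℝ)+2)) := by
      rw [div_le_div_iff₀ hx2 (by positivity)]
      nlinarith
    have h3 : (0:ℝ) ≤ 1/((n:ℝ)+2)^2 := by positivity
    nlinarith [Real.rpow_nonneg (show (0:ℝ) ≤ ((n:ℝ)+2)^2-1 by nlinarith) (-(3/8:ℝ))]

lemma gg_lt_hh0 {γ : ℝ} (hγ0 : 0 ≤ γ) (hγ1 : γ ≤ 1/4) : gg γ 0 < hh 0 := by
  have key := gg_le hγ0 hγ1 0
  simp only [Nat.cast_zero, zero_add, hh] at key ⊢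
  have h1 : ((2:ℝ)^2 - 1) ^ (-(3/8:ℝ)) < 1 :=
    Real.rpow_lt_one_of_one_lt_of_neg (by norm_num) (by norm_num)
  norm_num at key h1 ⊢
  nlinarith

lemma hh_nonneg (n : ℕ) : 0 ≤ hh n := by
  rw [hh]; positivity

lemma hasSum_hh : HasSum hh (1/2) := by
  have key : ∀ N : ℕ, ∑ n ∈ range N, hh n = 1/2 - (1/2) * (1/((N:ℝ)+1)) := by
    intro N
    induction N with
    | zero => simp
    | succ N ih =>
      rw [Finset.sum_range_succ, ih, hh]
      have h1 : ((N:ℝ)+1) ≠ 0 := by positivity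
      have h2 : ((N:ℝ)+2) ≠ 0 := by positivity
      push_cast
      field_simp
      ring
  rw [hasSum_iff_tendsto_nat_of_nonneg hh_nonneg]
  simp only [key]
  have : Filter.Tendsto (fun N : ℕ => 1/2 - (1/2) * (1/((N:ℝ)+1))) Filter.atTop
      (nhds (1/2 - (1/2) * 0)) :=
    Filter.Tendsto.sub tendsto_const_nhds
      (Filter.Tendsto.const_mul _ tendsto_one_div_add_atTop_nhds_zero_nat)
  simpa using this

lemma summable_gg {γ : ℝ} (hγ0 : 0 ≤ γ) (hγ1 : γ ≤ 1/4) : Summable (gg γ) :=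
  Summable.of_nonneg_of_le (gg_nonneg hγ0 (by linarith)) (gg_le_hh hγ0 hγ1)
    hasSum_hh.summable

lemma tsum_gg_lt {γ : ℝ} (hγ0 : 0 ≤ γ) (hγ1 : γ ≤ 1/4) : ∑' n, gg γ n < 1/2 := by
  have := Summable.tsum_lt_tsum_of_nonneg (gg_nonneg hγ0 (by linarith)) (gg_le_hh hγ0 hγ1)
    (gg_lt_hh0 hγ0 hγ1) hasSum_hh.summable
  rwa [hasSum_hh.tsum_eq] at this


lemma Uop_bSpec_eq (γ : ℝ) (j : ℤ) : Uop γ bSpec j = ((FF γ j : ℝ) : ℂ) := by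
  set s : ℝ := (1 - γ)/2 with hsdef
  have hsum : Uop γ bSpec j =
      ∑ i ∈ ({-1, 0, 1} : Finset ℤ), (Tker s s i j : ℂ) * bSpec i := by
    refine tsum_eq_sum ?_
    intro i hi
    simp only [Finset.mem_insert, Finset.mem_singleton] at hi
    push_neg at hi
    obtain ⟨h1, h2, h3⟩ := hi
    simp [bSpec, h1, h2, h3]
  rw [hsum, Finset.sum_insert (by decide), Finset.sum_insert (by decide),
    Finset.sum_singleton]
  have hb1 : bSpec (-1) = 1 := by simp [bSpec]
  have hb0 : bSpec 0 = -2 := by simp [bSpec]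
  have hb2 : bSpec 1 = 1 := by simp [bSpec]
  rw [hb1, hb0, hb2]
  by_cases hj0 : j = 0
  · subst hj0
    have t1 : Tker s s (-1) 0 = 1 := by
      simp [Tker, Real.one_rpow]
    have t2 : Tker s s 1 0 = 1 := by
      simp [Tker, Real.one_rpow]
    have t3 : Tker s s 0 0 = 0 := by simp [Tker]
    rw [t1, t2, t3]
    norm_num [FF]
  by_cases hj1 : j = 1
  · subst hj1
    have t1 : Tker s s (-1) 1 = 0 := by simp [Tker]
    have t2 : Tker s s 1 1 = 0 := by simp [Tker]
    have t3 : Tker s s 0 1 = 1 := by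
      simp [Tker, Real.one_rpow]
    rw [t1, t2, t3]
    norm_num [FF]
  by_cases hjm1 : j = -1
  · subst hjm1
    have t1 : Tker s s (-1) (-1) = 0 := by simp [Tker]
    have t2 : Tker s s 1 (-1) = 0 := by simp [Tker]
    have t3 : Tker s s 0 (-1) = 1 := by
      simp [Tker, Real.one_rpow]
    rw [t1, t2, t3]
    norm_num [FF]
  -- general case
  have hjr0 : ((j:ℝ)) ≠ 0 := Int.cast_ne_zero.2 hj0
  have habs : (0:ℝ) < |(j:ℝ)| := abs_pos.2 hjr0
  have hj2 : (2:ℝ) ≤ |(j:ℝ)| := by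
    have : (2:ℤ) ≤ |j| := by rcases abs_cases j with ⟨h,h'⟩|⟨h,h'⟩ <;> omega
    calc (2:ℝ) = ((2:ℤ):ℝ) := by norm_num
    _ ≤ ((|j|:ℤ):ℝ) := by exact_mod_cast this
    _ = |(j:ℝ)| := by push_cast; ring
  have hjsq : (3:ℝ) ≤ (j:ℝ)^2 - 1 := by
    have : (2:ℝ)^2 ≤ |(j:ℝ)|^2 := by nlinarith [abs_nonneg ((j:ℝ))]
    rw [sq_abs] at this
    linarith
  have t0 : Tker s s 0 j = |(j:ℝ)| ^ (-(1-γ)) := by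
    rw [Tker, if_neg (by omega)]
    push_cast
    rw [zero_sub, zero_add, abs_neg, ← Real.rpow_add habs,
      show s + s = 1 - γ by rw [hsdef]; ring, one_div, ← Real.rpow_neg habs.le]
  have tprod : |(1:ℝ) - (j:ℝ)| ^ s * |(1:ℝ) + (j:ℝ)| ^ s = ((j:ℝ)^2 - 1) ^ s := by
    rw [← Real.mul_rpow (abs_nonneg _) (abs_nonneg _), ← abs_mul]
    congr 1
    rw [show ((1:ℝ) - j) * (1 + j) = -((j:ℝ)^2 - 1) by ring, abs_neg,
      abs_of_nonneg (by linarith)]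
  have t1 : Tker s s 1 j = ((j:ℝ)^2 - 1) ^ (-(1-γ)/2) := by
    rw [Tker, if_neg (by omega)]
    push_cast
    rw [tprod, one_div, ← Real.rpow_neg (by linarith),
      show -s = -(1-γ)/2 by rw [hsdef]; ring]
  have tm1 : Tker s s (-1) j = ((j:ℝ)^2 - 1) ^ (-(1-γ)/2) := by
    rw [Tker, if_neg (by omega)]
    push_cast
    rw [show |(-1:ℝ) - (j:ℝ)| = |(1:ℝ) + (j:ℝ)| by rw [← abs_neg]; ring_nf,
      show |(-1:ℝ) + (j:ℝ)| = |(1:ℝ) - (j:ℝ)| by rw [← abs_neg]; ring_nf,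
      mul_comm, tprod, one_div, ← Real.rpow_neg (by linarith),
      show -s = -(1-γ)/2 by rw [hsdef]; ring]
  rw [t0, t1, tm1, FF, if_neg hj0, if_neg (by tauto)]
  push_cast
  ring


lemma FF_nat (γ : ℝ) (n : ℕ) : FF γ ((n:ℤ) + 2) = 2 * gg γ n := by
  rw [FF, if_neg (by omega), if_neg (by omega), gg]
  have h1 : (((n:ℤ) + 2 : ℤ) : ℝ) = (n:ℝ) + 2 := by push_cast; ring
  rw [h1, abs_of_nonneg (by positivity)]
  ring_nf

lemma FF_negnat (γ : ℝ) (n : ℕ) : FF γ (-((n:ℤ) + 2)) = 2 * gg γ n := by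
  rw [FF, if_neg (by omega), if_neg (by omega), gg]
  have h1 : ((-((n:ℤ) + 2) : ℤ) : ℝ) = -((n:ℝ) + 2) := by push_cast; ring
  rw [h1, abs_neg, abs_of_nonneg (by positivity)]
  ring_nf

lemma hasSum_FF (γ : ℝ) (hsg : Summable (gg γ)) :
    HasSum (FF γ) (-2 + 4 * ∑' n, gg γ n) := by
  set T : ℝ := ∑' n, gg γ n with hT
  have hg : HasSum (gg γ) T := hsg.hasSum
  have h2 : HasSum (fun n : ℕ => FF γ ((n:ℤ) + 2)) (2 * T) := by
    simpa only [FF_nat] using hg.mul_left 2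
  have h3 : HasSum (fun n : ℕ => FF γ (n:ℤ)) (2 * T) := by
    have h2' : HasSum (fun n : ℕ => FF γ ((n + 2 : ℕ) : ℤ)) (2 * T) := by
      refine h2.congr_fun ?_
      intro n; congr 1
    have := (hasSum_nat_add_iff (f := fun n : ℕ => FF γ (n:ℤ)) 2).mp h2'
    have hsum2 : ∑ i ∈ Finset.range 2, FF γ (i:ℤ) = 0 := by
      rw [Finset.sum_range_succ, Finset.sum_range_one]
      norm_num [FF]
    rwa [hsum2, add_zero] at this
  have h4 : HasSum (fun n : ℕ => FF γ (-((n:ℤ) + 1))) (2 * T + -2) := by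
    have hq2 : HasSum (fun n : ℕ => FF γ (-(((n + 1 : ℕ):ℤ) + 1))) (2 * T) := by
      refine (by simpa only [FF_negnat] using hg.mul_left 2 :
        HasSum (fun n : ℕ => FF γ (-((n:ℤ) + 2))) (2 * T)).congr_fun ?_
      intro n; congr 1
    have := (hasSum_nat_add_iff (f := fun n : ℕ => FF γ (-((n:ℤ) + 1))) 1).mp hq2
    have hsum1 : ∑ i ∈ Finset.range 1, FF γ (-((i:ℤ) + 1)) = -2 := by
      rw [Finset.sum_range_one]
      norm_num [FF]
    rwa [hsum1] at this
  have := h3.of_nat_of_neg_add_one h4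
  have heq : 2 * T + (2 * T + -2) = -2 + 4 * T := by ring
  rwa [heq] at this

/-- **Negativity of the total sum of `U_γ b` for the special sequence `b`.**
There is `ε ∈ (0, 1/3)` such that for every `0 ≤ γ < ε` one has
`∑_{j=2}^∞ [(j²-1)^{-(1-γ)/2} - j^{-(1-γ)}] < 1/2`, and consequently, for the sequence
`b` with `b(±1) = 1`, `b(0) = -2`, `b(i) = 0` otherwise,
`∑_{j ∈ ℤ} (U_γ b)(j) = -2 + 4 ∑_{j=2}^∞ [(j²-1)^{-(1-γ)/2} - j^{-(1-γ)}] < 0`. -/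
theorem stmt14 :
    ∃ ε : ℝ, 0 < ε ∧ ε < 1 / 3 ∧ ∀ γ : ℝ, 0 ≤ γ → γ < ε →
      tailSum γ < 1 / 2 ∧
      (∑' j : ℤ, Uop γ bSpec j) = ((-2 + 4 * tailSum γ : ℝ) : ℂ) ∧
      (-2 + 4 * tailSum γ : ℝ) < 0 := by
  refine ⟨1/4, by norm_num, by norm_num, ?_⟩
  intro γ hγ0 hγε
  have hγ1 : γ ≤ 1/4 := hγε.le
  have hT : tailSum γ = ∑' n, gg γ n := rfl
  have h1 : tailSum γ < 1/2 := by rw [hT]; exact tsum_gg_lt hγ0 hγ1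
  refine ⟨h1, ?_, by linarith⟩
  have hF := hasSum_FF γ (summable_gg hγ0 hγ1)
  rw [← hT] at hF
  have hC : HasSum (fun j : ℤ => ((FF γ j : ℝ) : ℂ)) ((-2 + 4 * tailSum γ : ℝ) : ℂ) :=
    Complex.hasSum_ofReal.2 hF
  calc ∑' j : ℤ, Uop γ bSpec j = ∑' j : ℤ, ((FF γ j : ℝ) : ℂ) :=
        tsum_congr (Uop_bSpec_eq γ)
    _ = _ := hC.tsum_eq
end

section
/- Let α, β > 0 with α + β = 1 and let 1 ≤ p < ∞. There exists a constant C > 0 such that for every b ∈ ℓ^p(ℤ) and every j₀ ∈ ℤ with j₀ ≠ 0: ∑_{i ∈ ℤ, |i| > 2|j₀|} |b(i)| / (|i − j₀|^α |i + j₀|^β) ≤ C ‖b‖_{ℓ^p(ℤ)} |j₀|^{−1/p}. -/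
open scoped ENNReal NNReal BigOperators


private lemma key_ineq19 {q : ℝ} (hq : 1 < q) {x : ℝ} (hx : 1 ≤ x) :
    (x + 1) ^ (-q) ≤ (x ^ (1 - q) - (x + 1) ^ (1 - q)) / (q - 1) := by
  have hx0 : (0:ℝ) < x := lt_of_lt_of_le one_pos hx
  obtain ⟨c, hc, hc'⟩ := exists_hasDerivAt_eq_slope (fun y => y ^ (1 - q))
    (fun y => (1 - q) * y ^ (1 - q - 1)) (by linarith : x < x + 1)
    (fun y hy => (Real.hasDerivAt_rpow_const
      (Or.inl (by rintro rfl; simp at hy; linarith [hy.1]))).continuousAt.continuousWithinAt)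
    (fun y hy => Real.hasDerivAt_rpow_const (Or.inl (by rintro rfl; simp at hy; linarith [hy.1])))
  have hc0 : 0 < c := lt_trans hx0 hc.1
  have hexp : (1 - q - 1 : ℝ) = -q := by ring
  rw [hexp] at hc'
  have h2 : (1 - q) * c ^ (-q) = (x + 1) ^ (1 - q) - x ^ (1 - q) := by
    rw [hc']; field_simp; ring
  have hkey : x ^ (1 - q) - (x + 1) ^ (1 - q) = (q - 1) * c ^ (-q) := by
    linear_combination h2
  rw [hkey, mul_div_cancel_left₀ _ (by linarith : q - 1 ≠ 0)]
  exact Real.rpow_le_rpow_of_nonpos hc0 (le_of_lt hc.2) (by linarith)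

private lemma sum_range_tail19 {q : ℝ} (hq : 1 < q) {M : ℕ} (hM : 1 ≤ M) (m : ℕ) :
    ∑ i ∈ Finset.range m, ((M + 1 + i : ℕ) : ℝ) ^ (-q) ≤ (M:ℝ) ^ (1 - q) / (q - 1) := by
  have hterm : ∀ i : ℕ, ((M + 1 + i : ℕ) : ℝ) ^ (-q) ≤
      ((M + i : ℕ) : ℝ) ^ (1 - q) / (q - 1) - ((M + (i+1) : ℕ) : ℝ) ^ (1 - q) / (q - 1) := by
    intro i
    have hx : (1:ℝ) ≤ ((M + i : ℕ) : ℝ) := by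
      have : (1:ℕ) ≤ M + i := le_trans hM (Nat.le_add_right _ _)
      exact_mod_cast this
    have := key_ineq19 hq hx
    have hc1 : ((M + 1 + i : ℕ) : ℝ) = ((M + i : ℕ) : ℝ) + 1 := by push_cast; ring
    have hc2 : ((M + (i+1) : ℕ) : ℝ) = ((M + i : ℕ) : ℝ) + 1 := by push_cast; ring
    rw [hc1, hc2, ← sub_div]
    exact this
  calc ∑ i ∈ Finset.range m, ((M + 1 + i : ℕ) : ℝ) ^ (-q)
      ≤ ∑ i ∈ Finset.range m, (((M + i : ℕ) : ℝ) ^ (1 - q) / (q - 1)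
          - ((M + (i+1) : ℕ) : ℝ) ^ (1 - q) / (q - 1)) :=
        Finset.sum_le_sum fun i _ => hterm i
    _ = ((M + 0 : ℕ) : ℝ) ^ (1 - q) / (q - 1) - ((M + m : ℕ) : ℝ) ^ (1 - q) / (q - 1) :=
        Finset.sum_range_sub' (fun i => ((M + i : ℕ) : ℝ) ^ (1 - q) / (q - 1)) m
    _ ≤ (M:ℝ) ^ (1 - q) / (q - 1) := by
        simp only [Nat.add_zero]
        have : 0 ≤ ((M + m : ℕ) : ℝ) ^ (1 - q) / (q - 1) :=
          div_nonneg (Real.rpow_nonneg (Nat.cast_nonneg _) _) (by linarith)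
        linarith



private lemma nat_tail19 {q : ℝ} (hq : 1 < q) {M : ℕ} (hM : 1 ≤ M) :
    Summable (fun n : ℕ => if M < n then (n:ℝ) ^ (-q) else 0) ∧
    ∑' n : ℕ, (if M < n then (n:ℝ) ^ (-q) else 0) ≤ (M:ℝ) ^ (1 - q) / (q - 1) := by
  have hsummand : ∀ n : ℕ, 0 ≤ (if M < n then (n:ℝ) ^ (-q) else 0) := by
    intro n; by_cases h : M < n <;> simp [h, Real.rpow_nonneg]
  have hsum : Summable (fun n : ℕ => if M < n then (n:ℝ) ^ (-q) else 0) := by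
    apply Summable.of_nonneg_of_le hsummand
      (fun n => ?_) (Real.summable_nat_rpow.2 (by linarith : -q < -1))
    split
    · exact le_refl _
    · exact Real.rpow_nonneg (Nat.cast_nonneg _) _
  refine ⟨hsum, Summable.tsum_le_of_sum_le hsum fun s => ?_⟩
  rw [← Finset.sum_filter]
  set B := s.sup id with hB
  have hsub : s.filter (fun n => M < n) ⊆ Finset.Ico (M+1) (B+1) := by
    intro n hn
    rw [Finset.mem_filter] at hn
    rw [Finset.mem_Ico]
    exact ⟨hn.2, Nat.lt_succ_of_le (Finset.le_sup (f := id) hn.1)⟩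
  calc ∑ n ∈ s.filter (fun n => M < n), (n:ℝ) ^ (-q)
      ≤ ∑ n ∈ Finset.Ico (M+1) (B+1), (n:ℝ) ^ (-q) :=
        Finset.sum_le_sum_of_subset_of_nonneg hsub
          (fun n _ _ => Real.rpow_nonneg (Nat.cast_nonneg _) _)
    _ = ∑ i ∈ Finset.range (B + 1 - (M+1)), ((M + 1 + i : ℕ) : ℝ) ^ (-q) := by
        rw [Finset.sum_Ico_eq_sum_range]
    _ ≤ (M:ℝ) ^ (1 - q) / (q - 1) := sum_range_tail19 hq hM _

private lemma int_tail19 {q : ℝ} (hq : 1 < q) {M : ℕ} (hM : 1 ≤ M) :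
    Summable (fun i : ℤ => if (M:ℤ) < |i| then |(i:ℝ)| ^ (-q) else 0) ∧
    ∑' i : ℤ, (if (M:ℤ) < |i| then |(i:ℝ)| ^ (-q) else 0) ≤
      2 * ((M:ℝ) ^ (1 - q) / (q - 1)) := by
  set G : ℕ → ℝ := fun n => if M < n then (n:ℝ) ^ (-q) else 0 with hG
  obtain ⟨hGsum, hGle⟩ := nat_tail19 hq hM
  set f : ℤ → ℝ := fun i => if (M:ℤ) < |i| then |(i:ℝ)| ^ (-q) else 0 with hf
  have h1 : ∀ n : ℕ, f n = G n := by
    intro n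
    simp only [hf, hG]
    rw [show |(n:ℤ)| = (n:ℤ) from abs_of_nonneg (Int.ofNat_nonneg n)]
    rw [show |((n:ℤ):ℝ)| = (n:ℝ) by push_cast; exact abs_of_nonneg (Nat.cast_nonneg n)]
    congr 1
    norm_cast
  have h2 : ∀ n : ℕ, f (-(n+1)) = G (n+1) := by
    intro n
    simp only [hf, hG]
    rw [show |(-((n:ℤ)+1))| = ((n+1:ℕ):ℤ) by push_cast; rw [abs_neg]; exact abs_of_nonneg (by positivity)]
    rw [show |((-((n:ℤ)+1) : ℤ):ℝ)| = ((n+1:ℕ):ℝ) by push_cast; rw [abs_neg]; exact abs_of_nonneg (by positivity)]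
    congr 1
    norm_cast
  have hG1 : Summable (fun n : ℕ => f n) := hGsum.congr fun n => (h1 n).symm
  have hG2 : Summable (fun n : ℕ => f (-(n+1))) :=
    (((summable_nat_add_iff 1).2 hGsum)).congr fun n => (h2 n).symm
  have hfsum : Summable f := Summable.of_nat_of_neg_add_one hG1 hG2
  refine ⟨hfsum, ?_⟩
  rw [tsum_of_nat_of_neg_add_one hG1 hG2]
  have e1 : ∑' n : ℕ, f n = ∑' n : ℕ, G n := tsum_congr h1
  have e2 : ∑' n : ℕ, f (-(n+1)) = ∑' n : ℕ, G (n+1) := tsum_congr h2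
  have e3 : ∑' n : ℕ, G (n+1) ≤ ∑' n : ℕ, G n := by
    rw [Summable.tsum_eq_zero_add hGsum]
    simp [hG]
  rw [e1, e2]
  linarith



private lemma denom_bound19 {α β : ℝ} (hα : 0 < α) (hβ : 0 < β) (hαβ : α + β = 1)
    {j₀ i : ℤ} (hi : 2 * |j₀| < |i|) :
    |(i:ℝ)| / 2 ≤ |(i : ℝ) - (j₀ : ℝ)| ^ α * |(i : ℝ) + (j₀ : ℝ)| ^ β ∧
      2 * |(j₀:ℝ)| < |(i:ℝ)| := by
  have ht : 2 * |(j₀:ℝ)| < |(i:ℝ)| := by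
    have h0 : ((2 * |j₀| : ℤ) : ℝ) < ((|i| : ℤ) : ℝ) := by exact_mod_cast hi
    push_cast at h0
    exact h0
  have ht0 : 0 < |(i:ℝ)| := lt_of_le_of_lt (by positivity) ht
  have hA : |(i:ℝ)| / 2 ≤ |(i : ℝ) - (j₀ : ℝ)| := by
    have h := abs_sub_abs_le_abs_sub (i:ℝ) (j₀:ℝ)
    linarith
  have hB : |(i:ℝ)| / 2 ≤ |(i : ℝ) + (j₀ : ℝ)| := by
    have h := abs_sub_abs_le_abs_sub (i:ℝ) (-(j₀:ℝ))
    rw [abs_neg, sub_neg_eq_add] at h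
    linarith
  refine ⟨?_, ht⟩
  calc |(i:ℝ)| / 2 = (|(i:ℝ)| / 2) ^ α * (|(i:ℝ)| / 2) ^ β := by
        rw [← Real.rpow_add (by linarith), hαβ, Real.rpow_one]
    _ ≤ |(i : ℝ) - (j₀ : ℝ)| ^ α * |(i : ℝ) + (j₀ : ℝ)| ^ β :=
        mul_le_mul (Real.rpow_le_rpow (by linarith) hA hα.le)
          (Real.rpow_le_rpow (by linarith) hB hβ.le)
          (Real.rpow_nonneg (by linarith) _) (Real.rpow_nonneg (abs_nonneg _) _)

/-- **Tail estimate on `I₃ = {i : |i| > 2|j₀|}`.**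
Let `α, β > 0` with `α + β = 1` and `1 ≤ p < ∞`. There is `C > 0` such that for every
`b ∈ ℓ^p(ℤ)` and every `j₀ ≠ 0`:
`∑_{|i| > 2|j₀|} |b(i)|/(|i-j₀|^α |i+j₀|^β) ≤ C ‖b‖_{ℓ^p(ℤ)} |j₀|^{-1/p}`. -/
theorem stmt19 (α β p : ℝ) (hα : 0 < α) (hβ : 0 < β) (hαβ : α + β = 1) (hp : 1 ≤ p) :
    ∃ C : ℝ, 0 < C ∧ ∀ b : ℤ → ℂ, Summable (fun i : ℤ => ‖b i‖ ^ p) →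
      ∀ j₀ : ℤ, j₀ ≠ 0 →
        (∑' i : ℤ, if 2 * |j₀| < |i| then
            ENNReal.ofReal (‖b i‖ / (|(i : ℝ) - (j₀ : ℝ)| ^ α * |(i : ℝ) + (j₀ : ℝ)| ^ β))
          else 0) ≤
          ENNReal.ofReal (C * (∑' i : ℤ, ‖b i‖ ^ p) ^ (1 / p) * |(j₀ : ℝ)| ^ (-(1 / p))) := by
  rcases eq_or_lt_of_le hp with h1 | h1
  · -- p = 1
    subst h1
    refine ⟨1, one_pos, ?_⟩
    intro b hb j₀ hj₀
    simp only [Real.rpow_one] at hb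
    have hnn1 : (1:ℝ) ≤ |(j₀ : ℝ)| := by
      rw [← Int.cast_abs]; exact_mod_cast Int.one_le_abs hj₀
    set a : ℤ → ℝ := fun i => if 2 * |j₀| < |i| then
        ‖b i‖ / (|(i : ℝ) - (j₀ : ℝ)| ^ α * |(i : ℝ) + (j₀ : ℝ)| ^ β) else 0 with ha
    have ha_nonneg : ∀ i, 0 ≤ a i := by
      intro i; rw [ha]
      dsimp only
      split
      · apply div_nonneg (norm_nonneg _)
        exact mul_nonneg (Real.rpow_nonneg (abs_nonneg _) _) (Real.rpow_nonneg (abs_nonneg _) _)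
      · exact le_refl _
    have ha_le : ∀ i, a i ≤ ‖b i‖ * |(j₀ : ℝ)|⁻¹ := by
      intro i; rw [ha]
      dsimp only
      split
      case isTrue h =>
        obtain ⟨hD, ht⟩ := denom_bound19 hα hβ hαβ h
        have : ‖b i‖ / (|(i : ℝ) - (j₀ : ℝ)| ^ α * |(i : ℝ) + (j₀ : ℝ)| ^ β)
            ≤ ‖b i‖ / |(j₀ : ℝ)| :=
          div_le_div_of_nonneg_left (norm_nonneg _) (by linarith)
            (le_trans (by linarith) hD)
        rw [div_eq_mul_inv] at this
        exact this
      case isFalse h => positivity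
    have hbm : Summable (fun i : ℤ => ‖b i‖ * |(j₀ : ℝ)|⁻¹) := hb.mul_right _
    have ha_sum : Summable a := Summable.of_nonneg_of_le ha_nonneg ha_le hbm
    have lhs_eq : (∑' i : ℤ, if 2 * |j₀| < |i| then
        ENNReal.ofReal (‖b i‖ / (|(i : ℝ) - (j₀ : ℝ)| ^ α * |(i : ℝ) + (j₀ : ℝ)| ^ β))
        else 0) = ENNReal.ofReal (∑' i, a i) := by
      rw [ENNReal.ofReal_tsum_of_nonneg ha_nonneg ha_sum]
      refine tsum_congr fun i => ?_
      rw [ha]; dsimp only; split <;> simp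
    rw [lhs_eq]
    apply ENNReal.ofReal_le_ofReal
    have h2 : ∑' i, a i ≤ (∑' i, ‖b i‖) * |(j₀ : ℝ)|⁻¹ := by
      calc ∑' i, a i ≤ ∑' i, ‖b i‖ * |(j₀ : ℝ)|⁻¹ := Summable.tsum_le_tsum ha_le ha_sum hbm
        _ = (∑' i, ‖b i‖) * |(j₀ : ℝ)|⁻¹ := tsum_mul_right
    calc ∑' i, a i ≤ (∑' i, ‖b i‖) * |(j₀ : ℝ)|⁻¹ := h2
      _ = 1 * (∑' i : ℤ, ‖b i‖ ^ (1:ℝ)) ^ (1 / (1:ℝ)) * |(j₀ : ℝ)| ^ (-(1 / (1:ℝ))) := by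
          norm_num [Real.rpow_one, Real.rpow_neg_one]
  · -- 1 < p
    have hpq : p.HolderConjugate p.conjExponent := Real.HolderConjugate.conjExponent h1
    set q := p.conjExponent with hqdef
    have hq1 : 1 < q := hpq.symm.lt
    have hq0 : q ≠ 0 := by linarith
    have hK : (0:ℝ) < 2 ^ q * (2 / (q - 1)) :=
      mul_pos (Real.rpow_pos_of_pos two_pos q) (div_pos two_pos (by linarith))
    refine ⟨(2 ^ q * (2 / (q - 1))) ^ (1 / q), Real.rpow_pos_of_pos hK _, ?_⟩
    intro b hb j₀ hj₀
    have hnn1 : (1:ℝ) ≤ |(j₀ : ℝ)| := by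
      rw [← Int.cast_abs]; exact_mod_cast Int.one_le_abs hj₀
    set M := 2 * j₀.natAbs with hMdef
    have hM1 : 1 ≤ M := by
      have : 1 ≤ j₀.natAbs := Int.natAbs_pos.mpr hj₀
      omega
    have hMZ : (2 * |j₀| : ℤ) = (M : ℤ) := by
      rw [hMdef, Int.abs_eq_natAbs]; push_cast; ring
    have hMR : (M : ℝ) = 2 * |(j₀ : ℝ)| := by
      rw [hMdef]; push_cast [Nat.cast_natAbs]; ring
    obtain ⟨hHsum, hHle⟩ := int_tail19 hq1 hM1
    set g : ℤ → ℝ := fun i => if 2 * |j₀| < |i| then 2 / |(i:ℝ)| else 0 with hgdef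
    have hg_nonneg : ∀ i, 0 ≤ g i := by
      intro i; rw [hgdef]; dsimp only; split
      · positivity
      · exact le_refl _
    have hgq : ∀ i : ℤ, g i ^ q = 2 ^ q * (if (M:ℤ) < |i| then |(i:ℝ)| ^ (-q) else 0) := by
      intro i
      rw [hgdef]; dsimp only
      rw [← hMZ]
      by_cases h : 2 * |j₀| < |i|
      · rw [if_pos h, if_pos h, Real.div_rpow (by norm_num) (abs_nonneg _),
          Real.rpow_neg (abs_nonneg _), div_eq_mul_inv]
      · rw [if_neg h, if_neg h, Real.zero_rpow hq0, mul_zero]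
    have hgq_sum : Summable (fun i => g i ^ q) :=
      (hHsum.mul_left ((2:ℝ) ^ q)).congr fun i => (hgq i).symm
    have hexp : (1 - q) * (1 / q) = -(1 / p) := by
      have h6 := hpq.inv_add_inv_eq_one
      have hqq : q * q⁻¹ = 1 := mul_inv_cancel₀ hq0
      rw [one_div, one_div]
      linear_combination h6 - hqq
    have hgq_tsum : ∑' i, g i ^ q ≤ (2 ^ q * (2 / (q - 1))) * |(j₀ : ℝ)| ^ (1 - q) := by
      have hMle : (M:ℝ) ^ (1 - q) ≤ |(j₀ : ℝ)| ^ (1 - q) :=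
        Real.rpow_le_rpow_of_nonpos (by linarith) (by rw [hMR]; linarith) (by linarith)
      calc ∑' i, g i ^ q
          = 2 ^ q * ∑' i : ℤ, (if (M:ℤ) < |i| then |(i:ℝ)| ^ (-q) else 0) := by
            rw [tsum_congr hgq, tsum_mul_left]
        _ ≤ 2 ^ q * (2 * ((M:ℝ) ^ (1 - q) / (q - 1))) :=
            mul_le_mul_of_nonneg_left hHle (Real.rpow_nonneg (by norm_num) _)
        _ = (2 ^ q * (2 / (q - 1))) * (M:ℝ) ^ (1 - q) := by ring
        _ ≤ (2 ^ q * (2 / (q - 1))) * |(j₀ : ℝ)| ^ (1 - q) :=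
            mul_le_mul_of_nonneg_left hMle hK.le
    have hT : (∑' i, g i ^ q) ^ (1 / q) ≤
        (2 ^ q * (2 / (q - 1))) ^ (1 / q) * |(j₀ : ℝ)| ^ (-(1 / p)) := by
      calc (∑' i, g i ^ q) ^ (1 / q)
          ≤ ((2 ^ q * (2 / (q - 1))) * |(j₀ : ℝ)| ^ (1 - q)) ^ (1 / q) :=
            Real.rpow_le_rpow (tsum_nonneg fun i => Real.rpow_nonneg (hg_nonneg i) _)
              hgq_tsum (by positivity)
        _ = (2 ^ q * (2 / (q - 1))) ^ (1 / q) * (|(j₀ : ℝ)| ^ (1 - q)) ^ (1 / q) :=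
            Real.mul_rpow hK.le (Real.rpow_nonneg (abs_nonneg _) _)
        _ = (2 ^ q * (2 / (q - 1))) ^ (1 / q) * |(j₀ : ℝ)| ^ (-(1 / p)) := by
            rw [← Real.rpow_mul (abs_nonneg _), hexp]
    obtain ⟨hfg_sum, hfg_le⟩ := Real.summable_and_inner_le_Lp_mul_Lq_tsum_of_nonneg hpq
      (fun i : ℤ => norm_nonneg (b i)) hg_nonneg hb hgq_sum
    set a : ℤ → ℝ := fun i => if 2 * |j₀| < |i| then
        ‖b i‖ / (|(i : ℝ) - (j₀ : ℝ)| ^ α * |(i : ℝ) + (j₀ : ℝ)| ^ β) else 0 with ha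
    have ha_nonneg : ∀ i, 0 ≤ a i := by
      intro i; rw [ha]
      dsimp only
      split
      · apply div_nonneg (norm_nonneg _)
        exact mul_nonneg (Real.rpow_nonneg (abs_nonneg _) _) (Real.rpow_nonneg (abs_nonneg _) _)
      · exact le_refl _
    have ha_le : ∀ i, a i ≤ ‖b i‖ * g i := by
      intro i; rw [ha, hgdef]
      dsimp only
      by_cases h : 2 * |j₀| < |i|
      · rw [if_pos h, if_pos h]
        obtain ⟨hD, ht⟩ := denom_bound19 hα hβ hαβ h
        have hi0 : (0:ℝ) < |(i:ℝ)| := by linarith [abs_nonneg ((j₀:ℝ))]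
        have h5 : ‖b i‖ / (|(i : ℝ) - (j₀ : ℝ)| ^ α * |(i : ℝ) + (j₀ : ℝ)| ^ β)
            ≤ ‖b i‖ / (|(i:ℝ)| / 2) :=
          div_le_div_of_nonneg_left (norm_nonneg _) (by linarith) hD
        calc ‖b i‖ / (|(i : ℝ) - (j₀ : ℝ)| ^ α * |(i : ℝ) + (j₀ : ℝ)| ^ β)
            ≤ ‖b i‖ / (|(i:ℝ)| / 2) := h5
          _ = ‖b i‖ * (2 / |(i:ℝ)|) := by
              rw [div_div_eq_mul_div, mul_div_assoc]
      · rw [if_neg h, if_neg h, mul_zero]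
    have ha_sum : Summable a := Summable.of_nonneg_of_le ha_nonneg ha_le hfg_sum
    have lhs_eq : (∑' i : ℤ, if 2 * |j₀| < |i| then
        ENNReal.ofReal (‖b i‖ / (|(i : ℝ) - (j₀ : ℝ)| ^ α * |(i : ℝ) + (j₀ : ℝ)| ^ β))
        else 0) = ENNReal.ofReal (∑' i, a i) := by
      rw [ENNReal.ofReal_tsum_of_nonneg ha_nonneg ha_sum]
      refine tsum_congr fun i => ?_
      rw [ha]; dsimp only; split <;> simp
    rw [lhs_eq]
    apply ENNReal.ofReal_le_ofReal
    have hS : 0 ≤ (∑' i : ℤ, ‖b i‖ ^ p) ^ (1 / p) :=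
      Real.rpow_nonneg (tsum_nonneg fun i => Real.rpow_nonneg (norm_nonneg _) _) _
    calc ∑' i, a i ≤ ∑' i, ‖b i‖ * g i := Summable.tsum_le_tsum ha_le ha_sum hfg_sum
      _ ≤ (∑' i : ℤ, ‖b i‖ ^ p) ^ (1 / p) * (∑' i, g i ^ q) ^ (1 / q) := hfg_le
      _ ≤ (∑' i : ℤ, ‖b i‖ ^ p) ^ (1 / p) *
          ((2 ^ q * (2 / (q - 1))) ^ (1 / q) * |(j₀ : ℝ)| ^ (-(1 / p))) :=
            mul_le_mul_of_nonneg_left hT hS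
      _ = (2 ^ q * (2 / (q - 1))) ^ (1 / q) * (∑' i : ℤ, ‖b i‖ ^ p) ^ (1 / p) *
          |(j₀ : ℝ)| ^ (-(1 / p)) := by ring
end
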